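/- arXiv:2005.13598 — 12 statements merged into one kernel-verified Lean document; each statement's English description precedes it below -/
import Mathlib

section
/- Let P and Q be nonzero points of the lattice Z^2 ⊂ C (identified with Gaussian integers), and suppose the angle between the rays OP and OQ (O the origin) is a rational multiple of π. Then this angle is an integer multiple of π/4. -/
open Complex Polynomial

/-- `m^2 = 3 n^2` with `n ≠ 0` is impossible in the integers. -/
lemma aux_no_sqrt3 (m n : ℤ) (h : m ^ 2 = 3 * n ^ 2) (hn : n ≠ 0) : False := by
  have h3 : Irrational (Real.sqrt 3) := by
    simpa using (Nat.prime_three).irrational_sqrt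
  have hq : (((|(m : ℚ) / (n : ℚ)| : ℚ) : ℝ)) = Real.sqrt 3 := by
    have hn' : (n : ℝ) ≠ 0 := Int.cast_ne_zero.mpr hn
    have hsq : ((m : ℝ) / (n : ℝ)) ^ 2 = 3 := by
      field_simp
      exact_mod_cast (h.trans (mul_comm _ _))
    have h1 : Real.sqrt 3 = Real.sqrt (((m : ℝ) / n) ^ 2) := by rw [hsq]
    rw [h1, Real.sqrt_sq_eq_abs]
    push_cast
    ring
  exact h3 ⟨_, hq⟩

lemma aux_quarter (t : ℝ)
    (h : Real.cos (4 * t) = 1 ∨ Real.cos (4 * t) = -1) :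
    ∃ j : ℤ, t = (j : ℝ) * (Real.pi / 4) := by
  have hc : Real.cos (4 * t) ^ 2 = 1 := by rcases h with h | h <;> rw [h] <;> norm_num
  have hs2 : Real.sin (4 * t) ^ 2 = 0 := by nlinarith [Real.sin_sq_add_cos_sq (4 * t)]
  have hs : Real.sin (4 * t) = 0 := pow_eq_zero_iff two_ne_zero |>.mp hs2
  obtain ⟨j, hj⟩ := Real.sin_eq_zero_iff.mp hs
  exact ⟨j, by linarith⟩

/-- If `P` and `Q` are nonzero Gaussian integers and the angle between the rays
`OP` and `OQ` (i.e. the argument of `Q / P`) is a rational multiple of `π`,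
then this angle is an integer multiple of `π / 4`. -/
theorem rational_angles_in_gaussian_lattice
    (P Q : ℂ) (hP : P ≠ 0) (hQ : Q ≠ 0)
    (hPint : ∃ a b : ℤ, P = (a : ℂ) + (b : ℂ) * Complex.I)
    (hQint : ∃ a b : ℤ, Q = (a : ℂ) + (b : ℂ) * Complex.I)
    (hrat : ∃ q : ℚ, Complex.arg (Q / P) = (q : ℝ) * Real.pi) :
    ∃ k : ℤ, Complex.arg (Q / P) = (k : ℝ) * (Real.pi / 4) := by
  obtain ⟨a, b, hPab⟩ := hPint
  obtain ⟨c, d, hQcd⟩ := hQint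
  obtain ⟨q, hq⟩ := hrat
  set z : ℂ := Q * (starRingEnd ℂ) P with hzdef
  have hz0 : z ≠ 0 := mul_ne_zero hQ (by simpa using hP)
  set m : ℤ := c * a + d * b with hm
  set n : ℤ := d * a - c * b with hn
  have hz : z = (m : ℂ) + (n : ℂ) * Complex.I := by
    rw [hzdef, hPab, hQcd, hm, hn]
    simp only [map_add, map_mul, Complex.conj_I, map_intCast]
    push_cast
    ring_nf
    rw [Complex.I_sq]
    ring
  have hzre : z.re = (m : ℝ) := by simp [hz]
  have hzim : z.im = (n : ℝ) := by simp [hz]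
  -- the angle equals arg z
  have harg : Complex.arg (Q / P) = Complex.arg z := by
    have hns : (0 : ℝ) < Complex.normSq P := Complex.normSq_pos.mpr hP
    have h1 : Q / P = ((Complex.normSq P)⁻¹ : ℝ) * z := by
      have h2 : (starRingEnd ℂ) P * P = ((Complex.normSq P : ℝ) : ℂ) := by
        rw [mul_comm, Complex.mul_conj]
      rw [div_eq_iff hP, hzdef, mul_assoc ((((Complex.normSq P)⁻¹ : ℝ)) : ℂ),
        mul_assoc Q, h2]
      have hne : ((Complex.normSq P : ℝ) : ℂ) ≠ 0 := by exact_mod_cast hns.ne'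
      push_cast
      field_simp
    rw [h1, Complex.arg_real_mul _ (inv_pos.mpr hns)]
  set θ : ℝ := Complex.arg z with hθ
  have hqθ : θ = (q : ℝ) * Real.pi := by rw [← harg]; exact hq
  -- m, n not both zero
  have hmn : ¬(m = 0 ∧ n = 0) := by
    rintro ⟨h1, h2⟩
    rw [h1, h2] at hz
    simp at hz
    exact hz0 hz
  set N : ℤ := m ^ 2 + n ^ 2 with hN
  have hNpos : (0 : ℤ) < N := by
    rcases lt_or_eq_of_le (by positivity : (0:ℤ) ≤ N) with h | h
    · exact h
    · exfalso; apply hmn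
      constructor <;> nlinarith [sq_nonneg m, sq_nonneg n]
  have hR2 : ‖z‖ ^ 2 = (N : ℝ) := by
    rw [Complex.sq_norm, Complex.normSq_apply, hzre, hzim]
    push_cast [hN]; ring
  have hRpos : (0 : ℝ) < ‖z‖ := by
    simpa using (norm_pos_iff.mpr hz0)
  have hcos : Real.cos θ = (m : ℝ) / ‖z‖ := by
    rw [hθ, Complex.cos_arg hz0, hzre]
  have hcos2 : Real.cos (2 * θ) = ((m ^ 2 - n ^ 2 : ℤ) : ℝ) / (N : ℝ) := by
    rw [Real.cos_two_mul, hcos, div_pow, hR2]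
    have hNne : ((N : ℝ)) ≠ 0 := by positivity
    field_simp
    push_cast [hN]
    ring
  set r : ℚ := 2 * ((m ^ 2 - n ^ 2 : ℤ) : ℚ) / ((N : ℤ) : ℚ) with hr
  have hNQ : ((N : ℚ)) ≠ 0 := by exact_mod_cast hNpos.ne'
  have hrR : (r : ℝ) = 2 * Real.cos (2 * θ) := by
    rw [hcos2, hr]
    push_cast
    ring
  -- ζ = exp(2θ i) is a root of unity
  set ζ : ℂ := Complex.exp ((2 * θ : ℝ) * Complex.I) with hζ
  have hζd : ζ ^ q.den = 1 := by
    rw [hζ, ← Complex.exp_nat_mul]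
    have harg2 : (q.den : ℂ) * (((2 * θ : ℝ) : ℂ) * Complex.I)
        = (q.num : ℂ) * (2 * (Real.pi : ℂ) * Complex.I) := by
      have hqd : ((q : ℝ)) * (q.den : ℝ) = (q.num : ℝ) := by
        exact_mod_cast congrArg (Rat.cast (K := ℝ)) (Rat.mul_den_eq_num q)
      rw [hqθ]
      push_cast
      have hqd' : ((q : ℂ)) * (q.den : ℂ) = (q.num : ℂ) := by
        exact_mod_cast congrArg (fun x : ℝ => (x : ℂ)) hqd
      rw [show (q.den : ℂ) * (2 * ((q : ℂ) * (Real.pi : ℂ)) * Complex.I)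
          = ((q : ℂ) * (q.den : ℂ)) * (2 * (Real.pi : ℂ) * Complex.I) by ring, hqd']
    rw [harg2]
    exact Complex.exp_int_mul_two_pi_mul_I q.num
  have hd0 : q.den ≠ 0 := q.den_nz
  have hintζ : IsIntegral ℤ ζ := by
    refine ⟨X ^ q.den - C 1, monic_X_pow_sub_C 1 hd0, ?_⟩
    simp [hζd]
  have hζinv : ζ⁻¹ = ζ ^ (q.den - 1) := by
    refine inv_eq_of_mul_eq_one_right ?_
    rw [← pow_succ', Nat.sub_add_cancel (Nat.one_le_iff_ne_zero.mpr hd0)]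
    exact hζd
  have hintinv : IsIntegral ℤ (ζ⁻¹) := by
    rw [hζinv]; exact hintζ.pow _
  have hsum : ζ + ζ⁻¹ = ((r : ℝ) : ℂ) := by
    have h2c : ζ + ζ⁻¹ = 2 * Complex.cos ((2 * θ : ℝ) : ℂ) := by
      rw [hζ, Complex.two_cos,
        show -(((2 * θ : ℝ) : ℂ)) * Complex.I = -((((2 * θ : ℝ) : ℂ)) * Complex.I) by ring,
        Complex.exp_neg]
    rw [h2c, ← Complex.ofReal_cos, hrR]
    push_cast
    ring
  have hintr : IsIntegral ℤ ((r : ℚ) : ℂ) := by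
    have h := hintζ.add hintinv
    rwa [hsum] at h
  have hintrQ : IsIntegral ℤ r := by
    have hmap : ((r : ℚ) : ℂ) = algebraMap ℚ ℂ r := by simp [eq_ratCast]
    rw [hmap] at hintr
    exact (isIntegral_algebraMap_iff ((algebraMap ℚ ℂ).injective)).mp hintr
  obtain ⟨k, hk⟩ := IsIntegrallyClosed.isIntegral_iff.mp hintrQ
  have hkr : (k : ℚ) = r := by exact_mod_cast hk
  have hkb : |(k : ℝ)| ≤ 2 := by
    have h1 : |(r : ℝ)| ≤ 2 := by
      rw [hrR, abs_mul]
      have h2 : |(2 : ℝ)| = 2 := by norm_num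
      rw [h2]
      have := Real.abs_cos_le_one (2 * θ)
      nlinarith
    rw [show ((k : ℝ)) = (r : ℝ) by exact_mod_cast hkr]
    exact h1
  rw [abs_le] at hkb
  have hk1 : -2 ≤ k := by exact_mod_cast hkb.1
  have hk2 : k ≤ 2 := by exact_mod_cast hkb.2
  -- clear denominators: 2 (m² − n²) = k N
  have hkZ : 2 * (m ^ 2 - n ^ 2) = k * N := by
    have h := hkr
    rw [hr] at h
    field_simp at h
    exact_mod_cast h.symm
  have hc2 : Real.cos (2 * θ) = (k : ℝ) / 2 := by
    have : ((k : ℝ)) = (r : ℝ) := by exact_mod_cast hkr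
    rw [this, hrR]; ring
  have hno3 : ∀ u v : ℤ, u ^ 2 = 3 * v ^ 2 → ¬(u = 0 ∧ v = 0) → False := by
    intro u v h hne
    rcases eq_or_ne v 0 with rfl | hv
    · exact hne ⟨by nlinarith, rfl⟩
    · exact aux_no_sqrt3 u v h hv
  have hcos4 : Real.cos (4 * θ) = 1 ∨ Real.cos (4 * θ) = -1 := by
    have h4 : Real.cos (4 * θ) = 2 * Real.cos (2 * θ) ^ 2 - 1 := by
      rw [show (4 : ℝ) * θ = 2 * (2 * θ) by ring, Real.cos_two_mul]
    interval_cases k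
    · left; rw [h4, hc2]; push_cast; norm_num
    · exfalso
      refine hno3 n m (by linarith) ?_
      rintro ⟨h1, h2⟩; exact hmn ⟨h2, h1⟩
    · right; rw [h4, hc2]; push_cast; norm_num
    · exact absurd (by linarith : m ^ 2 = 3 * n ^ 2) (fun h => hno3 m n h hmn)
    · left; rw [h4, hc2]; push_cast; norm_num
  obtain ⟨j, hj⟩ := aux_quarter θ hcos4
  exact ⟨j, by rw [harg]; exact hj⟩
end

section
/- If ζ = exp(2πi/5), then the element 1 + ζ² of Z[ζ] satisfies 0 < |1 + ζ²| < 1, and hence the powers (1+ζ²)^m are nonzero elements of Z[ζ] of arbitrarily small absolute value; consequently Z[exp(2πi/5)] is not contained in any lattice of C, so no regular pentagon has all vertices in a plane lattice. -/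
/-- A lattice in `ℂ`: a subgroup of the form `ℤω₁ + ℤω₂` with `ω₁, ω₂`
linearly independent over `ℝ`. -/
def IsComplexLattice (Λ : AddSubgroup ℂ) : Prop :=
  ∃ ω₁ ω₂ : ℂ, LinearIndependent ℝ ![ω₁, ω₂] ∧
    Λ = AddSubgroup.closure {ω₁, ω₂}

/-- A lattice in `ℂ` has a positive lower bound on absolute values of nonzero elements. -/
lemma lattice_disc (Λ : AddSubgroup ℂ) (h : IsComplexLattice Λ) :
    ∃ ε : ℝ, 0 < ε ∧ ∀ z ∈ Λ, ‖z‖ < ε → z = 0 := by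
  obtain ⟨ω₁, ω₂, hli, rfl⟩ := h
  have hcard : Fintype.card (Fin 2) = Module.finrank ℝ ℂ := by
    simp [Complex.finrank_real_complex]
  let b : Module.Basis (Fin 2) ℝ ℂ := basisOfLinearIndependentOfCardEqFinrank hli hcard
  have hb : Set.range ⇑b = {ω₁, ω₂} := by
    rw [show ⇑b = ![ω₁, ω₂] from coe_basisOfLinearIndependentOfCardEqFinrank hli hcard]
    simp [Matrix.range_cons, Matrix.range_empty, Set.pair_comm]
  have hmem : ∀ z : ℂ, z ∈ AddSubgroup.closure ({ω₁, ω₂} : Set ℂ) ↔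
      z ∈ Submodule.span ℤ (Set.range ⇑b) := by
    intro z
    rw [← Submodule.span_int_eq_addSubgroupClosure, Submodule.mem_toAddSubgroup, hb]
  have hdisc : DiscreteTopology (Submodule.span ℤ (Set.range ⇑b)) := inferInstance
  have h0 : IsOpen ({0} : Set (Submodule.span ℤ (Set.range ⇑b))) := isOpen_discrete _
  rw [Metric.isOpen_iff] at h0
  obtain ⟨ε, hε, hball⟩ := h0 0 rfl
  refine ⟨ε, hε, fun z hz habs => ?_⟩
  have hzL : z ∈ Submodule.span ℤ (Set.range ⇑b) := (hmem z).1 hz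
  have hmemball : (⟨z, hzL⟩ : Submodule.span ℤ (Set.range ⇑b)) ∈ Metric.ball 0 ε := by
    rw [Metric.mem_ball, Subtype.dist_eq]
    simpa [Complex.dist_eq] using habs
  have := hball hmemball
  simpa [Subtype.ext_iff] using this

lemma abs_fact (ζ : ℂ) (hζ : ζ = Complex.exp (2 * Real.pi * Complex.I / 5)) :
    0 < ‖1 + ζ ^ 2‖ ∧ ‖1 + ζ ^ 2‖ < 1 := by
  have h2 : ζ ^ 2 = Complex.exp (((4 * Real.pi / 5 : ℝ) : ℂ) * Complex.I) := by
    rw [hζ, ← Complex.exp_nat_mul]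
    push_cast
    ring_nf
  have hform : (1 + ζ ^ 2) =
      ((1 + Real.cos (4 * Real.pi / 5) : ℝ) : ℂ) + ((Real.sin (4 * Real.pi / 5) : ℝ) : ℂ) * Complex.I := by
    rw [h2, Complex.exp_mul_I, ← Complex.ofReal_cos, ← Complex.ofReal_sin]
    push_cast
    ring
  have hsq : (‖1 + ζ ^ 2‖) ^ 2 =
      2 + 2 * Real.cos (4 * Real.pi / 5) := by
    rw [Complex.sq_norm, hform, Complex.normSq_add_mul_I]
    have := Real.sin_sq_add_cos_sq (4 * Real.pi / 5)
    nlinarith [this]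
  have hπ := Real.pi_pos
  have hcos : Real.cos (4 * Real.pi / 5) = - Real.cos (Real.pi / 5) := by
    rw [show (4 : ℝ) * Real.pi / 5 = Real.pi - Real.pi / 5 by ring, Real.cos_pi_sub]
  have h5 : Real.cos (Real.pi / 5) = (1 + Real.sqrt 5) / 4 := Real.cos_pi_div_five
  have hs : Real.sqrt 5 ^ 2 = 5 := Real.sq_sqrt (by norm_num)
  have hsn : 0 ≤ Real.sqrt 5 := Real.sqrt_nonneg 5
  have habs := norm_nonneg (1 + ζ ^ 2)
  constructor
  · nlinarith
  · nlinarith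

lemma zeta_pow_five (ζ : ℂ) (hζ : ζ = Complex.exp (2 * Real.pi * Complex.I / 5)) :
    ζ ^ 5 = 1 := by
  rw [hζ, ← Complex.exp_nat_mul]
  rw [show (5 : ℕ) * (2 * (Real.pi : ℂ) * Complex.I / 5) = 2 * (Real.pi : ℂ) * Complex.I by
    push_cast; ring]
  exact Complex.exp_two_pi_mul_I

/-- The additive group generated by the five edge vectors `r ζ^k (ζ-1)` is stable
under multiplication by elements of `ℤ[ζ]`. -/
lemma W_mul_stable (ζ r : ℂ) (h5 : ζ ^ 5 = 1) :
    ∀ z ∈ Subring.closure ({ζ} : Set ℂ),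
      ∀ w ∈ AddSubgroup.closure
        ({r * (ζ - 1), r * ζ * (ζ - 1), r * ζ ^ 2 * (ζ - 1), r * ζ ^ 3 * (ζ - 1),
          r * ζ ^ 4 * (ζ - 1)} : Set ℂ),
        w * z ∈ AddSubgroup.closure
        ({r * (ζ - 1), r * ζ * (ζ - 1), r * ζ ^ 2 * (ζ - 1), r * ζ ^ 3 * (ζ - 1),
          r * ζ ^ 4 * (ζ - 1)} : Set ℂ) := by
  set S : Set ℂ := {r * (ζ - 1), r * ζ * (ζ - 1), r * ζ ^ 2 * (ζ - 1), r * ζ ^ 3 * (ζ - 1),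
      r * ζ ^ 4 * (ζ - 1)} with hS
  intro z hz
  induction hz using Subring.closure_induction with
  | mem x hx =>
    rw [Set.mem_singleton_iff] at hx
    intro w hw
    rw [hx]
    induction hw using AddSubgroup.closure_induction with
    | mem w hwS =>
      apply AddSubgroup.subset_closure
      simp only [hS, Set.mem_insert_iff, Set.mem_singleton_iff] at hwS ⊢
      rcases hwS with h | h | h | h | h <;> subst h
      · right; left; ring
      · right; right; left; ring
      · right; right; right; left; ring
      · right; right; right; right; ring
      · left
        have : r * ζ ^ 4 * (ζ - 1) * ζ = ζ ^ 5 * (r * (ζ - 1)) := by ring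
        rw [this, h5, one_mul]
    | zero => simpa using AddSubgroup.zero_mem _
    | add x y hx hy hx' hy' => rw [add_mul]; exact AddSubgroup.add_mem _ hx' hy'
    | neg x hx hx' => rw [neg_mul]; exact AddSubgroup.neg_mem _ hx'
  | zero => intro w hw; rw [mul_zero]; exact AddSubgroup.zero_mem _
  | one => intro w hw; rw [mul_one]; exact hw
  | add x y hx hy hx' hy' => intro w hw; rw [mul_add]; exact AddSubgroup.add_mem _ (hx' w hw) (hy' w hw)
  | neg x hx hx' => intro w hw; rw [mul_neg]; exact AddSubgroup.neg_mem _ (hx' w hw)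
  | mul x y hx hy hx' hy' =>
    intro w hw
    rw [← mul_assoc]
    exact hy' (w * x) (hx' w hw)

/-- For `ζ = exp(2πi/5)` one has `0 < |1 + ζ²| < 1`, hence the powers `(1 + ζ²)^m`
are nonzero elements of `ℤ[ζ]` of arbitrarily small absolute value; consequently
`ℤ[ζ]` is contained in no lattice of `ℂ`, so no regular pentagon has all its
vertices in a plane lattice. -/
theorem pentagon_not_in_lattice :
    ∀ ζ : ℂ, ζ = Complex.exp (2 * Real.pi * Complex.I / 5) →
    (0 < ‖1 + ζ ^ 2‖ ∧ ‖1 + ζ ^ 2‖ < 1) ∧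
    (∀ m : ℕ, (1 + ζ ^ 2) ^ m ∈ Subring.closure {ζ} ∧ (1 + ζ ^ 2) ^ m ≠ 0) ∧
    (∀ ε : ℝ, 0 < ε → ∃ z ∈ Subring.closure {ζ}, z ≠ 0 ∧ ‖z‖ < ε) ∧
    (∀ Λ : AddSubgroup ℂ, IsComplexLattice Λ →
      ¬ ((Subring.closure {ζ} : Set ℂ) ⊆ (Λ : Set ℂ))) ∧
    (∀ Λ : AddSubgroup ℂ, IsComplexLattice Λ → ∀ c r : ℂ, r ≠ 0 →
      ¬ (∀ k : ℕ, k < 5 → c + r * ζ ^ k ∈ Λ)) := by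
  intro ζ hζ
  obtain ⟨habs0, habs1⟩ := abs_fact ζ hζ
  have h5 : ζ ^ 5 = 1 := zeta_pow_five ζ hζ
  have hne : (1 + ζ ^ 2) ≠ 0 := by
    intro h
    rw [h] at habs0
    simp at habs0
  have hζmem : ζ ∈ Subring.closure ({ζ} : Set ℂ) := Subring.subset_closure rfl
  have hbase : (1 + ζ ^ 2) ∈ Subring.closure ({ζ} : Set ℂ) :=
    add_mem (one_mem _) (pow_mem hζmem 2)
  have hpowmem : ∀ m : ℕ, (1 + ζ ^ 2) ^ m ∈ Subring.closure ({ζ} : Set ℂ) :=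
    fun m => pow_mem hbase m
  have hpowne : ∀ m : ℕ, (1 + ζ ^ 2) ^ m ≠ 0 := fun m => pow_ne_zero m hne
  have hsmall : ∀ ε : ℝ, 0 < ε → ∃ m : ℕ, ‖1 + ζ ^ 2‖ ^ m < ε := by
    intro ε hε
    exact exists_pow_lt_of_lt_one hε habs1
  refine ⟨⟨habs0, habs1⟩, fun m => ⟨hpowmem m, hpowne m⟩, ?_, ?_, ?_⟩
  · intro ε hε
    obtain ⟨m, hm⟩ := hsmall ε hε
    exact ⟨(1 + ζ ^ 2) ^ m, hpowmem m, hpowne m, by rwa [norm_pow]⟩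
  · intro Λ hΛ hsub
    obtain ⟨ε, hε, hdisc⟩ := lattice_disc Λ hΛ
    obtain ⟨m, hm⟩ := hsmall ε hε
    have : (1 + ζ ^ 2) ^ m = 0 := by
      apply hdisc _ (hsub (hpowmem m))
      rwa [norm_pow]
    exact hpowne m this
  · intro Λ hΛ c r hr hvert
    obtain ⟨ε, hε, hdisc⟩ := lattice_disc Λ hΛ
    set S : Set ℂ := {r * (ζ - 1), r * ζ * (ζ - 1), r * ζ ^ 2 * (ζ - 1), r * ζ ^ 3 * (ζ - 1),
        r * ζ ^ 4 * (ζ - 1)} with hS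
    -- W ≤ Λ
    have hWle : AddSubgroup.closure S ≤ Λ := by
      rw [AddSubgroup.closure_le]
      intro w hw
      simp only [hS, Set.mem_insert_iff, Set.mem_singleton_iff] at hw
      have hv : ∀ k : ℕ, k < 5 → c + r * ζ ^ k ∈ Λ := hvert
      rcases hw with h | h | h | h | h <;> subst h
      · have := sub_mem (hv 1 (by norm_num)) (hv 0 (by norm_num))
        have he : (c + r * ζ ^ 1) - (c + r * ζ ^ 0) = r * (ζ - 1) := by ring
        rwa [he] at this
      · have := sub_mem (hv 2 (by norm_num)) (hv 1 (by norm_num))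
        have he : (c + r * ζ ^ 2) - (c + r * ζ ^ 1) = r * ζ * (ζ - 1) := by ring
        rwa [he] at this
      · have := sub_mem (hv 3 (by norm_num)) (hv 2 (by norm_num))
        have he : (c + r * ζ ^ 3) - (c + r * ζ ^ 2) = r * ζ ^ 2 * (ζ - 1) := by ring
        rwa [he] at this
      · have := sub_mem (hv 4 (by norm_num)) (hv 3 (by norm_num))
        have he : (c + r * ζ ^ 4) - (c + r * ζ ^ 3) = r * ζ ^ 3 * (ζ - 1) := by ring
        rwa [he] at this
      · have := sub_mem (hv 0 (by norm_num)) (hv 4 (by norm_num))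
        have he : (c + r * ζ ^ 0) - (c + r * ζ ^ 4) = r * ζ ^ 4 * (ζ - 1) := by
          linear_combination (-r) * h5
        rwa [he] at this
    -- w₀ = r * (ζ - 1) is a nonzero element of W
    have hw0mem : r * (ζ - 1) ∈ AddSubgroup.closure S :=
      AddSubgroup.subset_closure (by simp [hS])
    have hζne1 : ζ ≠ 1 := by
      intro h
      rw [h] at habs1
      norm_num at habs1
    have hw0ne : r * (ζ - 1) ≠ 0 :=
      mul_ne_zero hr (sub_ne_zero.mpr hζne1)
    have hw0pos : 0 < ‖r * (ζ - 1)‖ := norm_pos_iff.mpr hw0ne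
    -- choose m with |w₀| * a^m < ε
    obtain ⟨m, hm⟩ := hsmall (ε / ‖r * (ζ - 1)‖) (by positivity)
    set z : ℂ := r * (ζ - 1) * (1 + ζ ^ 2) ^ m with hz
    have hzW : z ∈ AddSubgroup.closure S :=
      W_mul_stable ζ r h5 _ (hpowmem m) _ hw0mem
    have hzne : z ≠ 0 := mul_ne_zero hw0ne (hpowne m)
    have hzabs : ‖z‖ < ε := by
      rw [hz, norm_mul, norm_pow]
      calc ‖r * (ζ - 1)‖ * ‖1 + ζ ^ 2‖ ^ m
          < ‖r * (ζ - 1)‖ * (ε / ‖r * (ζ - 1)‖) := by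
            apply mul_lt_mul_of_pos_left hm hw0pos
        _ = ε := by
            rw [mul_comm]
            exact div_mul_cancel₀ ε (ne_of_gt hw0pos)
    exact hzne (hdisc z (hWle hzW) hzabs)
end

section
/- The only rational angles occurring in the Eisenstein lattice Z + Zω (ω = exp(πi/3)) are integer multiples of π/6. More precisely, if P, Q are nonzero elements of the lattice and the argument of Q/P is a rational multiple of π, then it is an integer multiple of π/6. -/
open Complex

lemma isIntegral_of_pow_eq_one' {w : ℂ} {n : ℕ} (hn : 0 < n) (h : w ^ n = 1) :
    IsIntegral ℤ w := by
  refine ⟨Polynomial.X ^ n - 1, Polynomial.monic_X_pow_sub_C 1 hn.ne', ?_⟩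
  simp [h]

lemma aux_sixth_root {w : ℂ} {X Y : ℚ}
    (hw : w = (X : ℂ) + (Y : ℂ) * (Real.sqrt 3 : ℝ) * I)
    (hn : ∃ n : ℕ, 0 < n ∧ w ^ n = 1) : w ^ 6 = 1 := by
  obtain ⟨n, hn0, hwn⟩ := hn
  set rc : ℂ := ((Real.sqrt 3 : ℝ) : ℂ) with hrc_def
  have hrc : rc ^ 2 = 3 := by
    rw [hrc_def, ← Complex.ofReal_pow, Real.sq_sqrt (by norm_num : (3:ℝ) ≥ 0)]
    norm_num
  have ht : (rc * I) ^ 2 = -3 := by rw [mul_pow, hrc, I_sq]; ring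
  have hconj : (starRingEnd ℂ) w = (X : ℂ) - (Y : ℂ) * rc * I := by
    rw [hw, hrc_def]
    simp [map_add, map_mul, Complex.conj_I, Complex.conj_ofReal, map_ratCast]
    ring
  have habs : ‖w‖ = 1 := by
    have h1 : ‖w‖ ^ n = 1 := by rw [← norm_pow, hwn, norm_one]
    have h0 : 0 ≤ ‖w‖ := norm_nonneg w
    rcases lt_trichotomy (‖w‖) 1 with hx | hx | hx
    · exact absurd h1 (by nlinarith [pow_lt_one₀ h0 hx hn0.ne'])
    · exact hx
    · exact absurd h1 (by nlinarith [one_lt_pow₀ hx hn0.ne'])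
  have hmulconj : w * (starRingEnd ℂ) w = 1 := by
    rw [Complex.mul_conj]
    norm_cast
    rw [← Complex.sq_norm, habs]; norm_num
  -- X^2 + 3Y^2 = 1 in ℚ
  have hXY : X ^ 2 + 3 * Y ^ 2 = 1 := by
    have : ((X ^ 2 + 3 * Y ^ 2 : ℚ) : ℂ) = ((1 : ℚ) : ℂ) := by
      push_cast
      rw [hconj] at hmulconj
      rw [hw] at hmulconj
      linear_combination hmulconj + (Y:ℂ)^2 * ht
    exact_mod_cast this
  -- integrality of 2X
  have hint : IsIntegral ℤ ((2 * X : ℚ) : ℂ) := by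
    have h1 : IsIntegral ℤ w := isIntegral_of_pow_eq_one' hn0 hwn
    have h2 : IsIntegral ℤ ((starRingEnd ℂ) w) := by
      refine isIntegral_of_pow_eq_one' hn0 ?_
      rw [← map_pow, hwn, map_one]
    have h3 := h1.add h2
    have he : w + (starRingEnd ℂ) w = ((2 * X : ℚ) : ℂ) := by
      rw [hconj]; rw [hw]; push_cast; ring
    rwa [he] at h3
  have hint2 : IsIntegral ℤ (2 * X : ℚ) := by
    rwa [show ((2 * X : ℚ) : ℂ) = algebraMap ℚ ℂ (2 * X) from (eq_ratCast _ _).symm,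
      isIntegral_algebraMap_iff (algebraMap ℚ ℂ).injective] at hint
  obtain ⟨m, hm⟩ := IsIntegrallyClosed.isIntegral_iff.mp hint2
  have hm' : (m : ℚ) = 2 * X := by exact_mod_cast hm
  have hmx : (m:ℚ)^2 = 4 * X^2 := by rw [hm']; ring
  have hsq : (m:ℚ)^2 ≤ 4 := by nlinarith [sq_nonneg (Y:ℚ)]
  have hmb1 : (-2 : ℤ) ≤ m := by
    have : (-2 : ℚ) ≤ (m:ℚ) := by nlinarith [sq_nonneg ((m:ℚ)+2)]
    exact_mod_cast this
  have hmb2 : m ≤ 2 := by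
    have : (m:ℚ) ≤ 2 := by nlinarith [sq_nonneg ((m:ℚ)-2)]
    exact_mod_cast this
  interval_cases m
  · -- m = -2 : X = -1, Y = 0
    have hX : X = -1 := by push_cast at hm'; linarith
    have hY : Y = 0 := by nlinarith [hXY]
    rw [hX, hY] at hw
    rw [hw]; norm_num
  · -- m = -1 : X = -1/2, Y = ±1/2
    have hX : X = -1/2 := by push_cast at hm'; linarith
    have hY2 : (Y - 1/2) * (Y + 1/2) = 0 := by rw [hX] at hXY; linear_combination hXY / 3
    rw [hX] at hw
    rcases mul_eq_zero.mp hY2 with h | h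
    · have hY : Y = 1/2 := by linarith
      rw [hY] at hw
      rw [hw]; push_cast
      linear_combination ((rc*I)^4 - 6*(rc*I)^3 + 12*(rc*I)^2 - 2*(rc*I) - 21)/64 * ht
    · have hY : Y = -1/2 := by linarith
      rw [hY] at hw
      rw [hw]; push_cast
      linear_combination ((rc*I)^4 + 6*(rc*I)^3 + 12*(rc*I)^2 + 2*(rc*I) - 21)/64 * ht
  · -- m = 0 : X = 0, impossible
    exfalso
    have hX : X = 0 := by push_cast at hm'; linarith
    have h3 : ((3*Y:ℚ):ℝ)^2 = 3 := by
      have hq : (3*Y)^2 = (3 : ℚ) := by rw [hX] at hXY; nlinarith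
      exact_mod_cast hq
    have hirr : Irrational (Real.sqrt 3) := by
      simpa using Nat.prime_three.irrational_sqrt
    have hs : Real.sqrt 3 = |((3*Y:ℚ):ℝ)| := by
      rw [← Real.sqrt_sq_eq_abs, h3]
    exact hirr ⟨|3*Y|, by rw [Rat.cast_abs]; exact hs.symm⟩
  · -- m = 1 : X = 1/2, Y = ±1/2
    have hX : X = 1/2 := by push_cast at hm'; linarith
    have hY2 : (Y - 1/2) * (Y + 1/2) = 0 := by rw [hX] at hXY; linear_combination hXY / 3
    rw [hX] at hw
    rcases mul_eq_zero.mp hY2 with h | h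
    · have hY : Y = 1/2 := by linarith
      rw [hY] at hw
      rw [hw]; push_cast
      linear_combination ((rc*I)^4 + 6*(rc*I)^3 + 12*(rc*I)^2 + 2*(rc*I) - 21)/64 * ht
    · have hY : Y = -1/2 := by linarith
      rw [hY] at hw
      rw [hw]; push_cast
      linear_combination ((rc*I)^4 - 6*(rc*I)^3 + 12*(rc*I)^2 - 2*(rc*I) - 21)/64 * ht
  · -- m = 2 : X = 1, Y = 0
    have hX : X = 1 := by push_cast at hm'; linarith
    have hY : Y = 0 := by nlinarith [hXY]
    rw [hX, hY] at hw
    rw [hw]; norm_num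


open Complex in
/-- In the Eisenstein lattice `ℤ + ℤω`, `ω = exp(πi/3)`, every rational angle is an
integer multiple of `π / 6`: if `P`, `Q` are nonzero lattice elements and the argument
of `Q / P` is a rational multiple of `π`, then it is an integer multiple of `π / 6`. -/
theorem rational_angles_in_eisenstein_lattice
    (P Q : ℂ) (hP : P ≠ 0) (hQ : Q ≠ 0)
    (hPlat : ∃ a b : ℤ, P = (a : ℂ) + (b : ℂ) * Complex.exp (Real.pi * Complex.I / 3))
    (hQlat : ∃ a b : ℤ, Q = (a : ℂ) + (b : ℂ) * Complex.exp (Real.pi * Complex.I / 3))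
    (hrat : ∃ q : ℚ, Complex.arg (Q / P) = (q : ℝ) * Real.pi) :
    ∃ k : ℤ, Complex.arg (Q / P) = (k : ℝ) * (Real.pi / 6) := by
  obtain ⟨q, harg⟩ := hrat
  obtain ⟨a, b, hPe⟩ := hPlat
  obtain ⟨c, d, hQe⟩ := hQlat
  set rc : ℂ := ((Real.sqrt 3 : ℝ) : ℂ) with hrc_def
  have hrc : rc ^ 2 = 3 := by
    rw [hrc_def, ← Complex.ofReal_pow, Real.sq_sqrt (by norm_num : (3:ℝ) ≥ 0)]
    norm_num
  have ht : (rc * I) ^ 2 = -3 := by rw [mul_pow, hrc, I_sq]; ring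
  have hω : Complex.exp (Real.pi * I / 3) = 1/2 + rc/2 * I := by
    have h1 : ((Real.pi : ℂ) * I / 3 : ℂ) = ((Real.pi/3 : ℝ) : ℂ) * I := by push_cast; ring
    rw [h1, Complex.exp_mul_I, ← Complex.ofReal_cos, ← Complex.ofReal_sin,
      Real.cos_pi_div_three, Real.sin_pi_div_three]
    rw [hrc_def]; push_cast; ring
  set u : ℂ := Q * (starRingEnd ℂ) P with hu_def
  have hcP : (starRingEnd ℂ) P ≠ 0 := by simpa using hP
  have hu0 : u ≠ 0 := mul_ne_zero hQ hcP
  have hcu0 : (starRingEnd ℂ) u ≠ 0 := by simpa using hu0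
  set s : ℚ := ((c:ℚ) + d/2)*((a:ℚ) + b/2) + 3*d*b/4 with hs_def
  set t : ℚ := ((d:ℚ)*(2*a+b) - b*(2*c+d))/4 with ht_def
  have hu : u = (s:ℂ) + (t:ℂ) * (rc * I) := by
    rw [hu_def, hPe, hQe, hω]
    rw [map_add, map_mul, map_add, map_mul]
    simp only [Complex.conj_I, map_intCast, map_one, map_div₀, map_ofNat,
      Complex.conj_ofReal, hrc_def]
    rw [hs_def, ht_def]
    push_cast
    linear_combination (-(b:ℂ)*(d:ℂ)/4) * ht
  have hcu : (starRingEnd ℂ) u = (s:ℂ) - (t:ℂ) * (rc * I) := by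
    rw [hu]
    simp only [map_add, map_mul, map_sub, Complex.conj_I, map_ratCast,
      hrc_def, Complex.conj_ofReal]
    ring
  have huc : u * (starRingEnd ℂ) u = ((s^2 + 3*t^2 : ℚ) : ℂ) := by
    rw [hcu, hu]; push_cast
    linear_combination (-(t:ℂ)^2) * ht
  have hDc : ((s^2 + 3*t^2 : ℚ) : ℂ) ≠ 0 := by rw [← huc]; exact mul_ne_zero hu0 hcu0
  have hD : (s^2 + 3*t^2 : ℚ) ≠ 0 := by
    intro h; exact hDc (by rw [h]; norm_num)
  set X : ℚ := (s^2 - 3*t^2)/(s^2 + 3*t^2) with hX_def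
  set Y : ℚ := (2*s*t)/(s^2 + 3*t^2) with hY_def
  set w : ℂ := u / (starRingEnd ℂ) u with hw_def
  have hXq : X * (s^2 + 3*t^2) = s^2 - 3*t^2 := div_mul_cancel₀ _ hD
  have hYq : Y * (s^2 + 3*t^2) = 2*s*t := div_mul_cancel₀ _ hD
  have hXc : (X:ℂ) * ((s:ℂ)^2 + 3*(t:ℂ)^2) = (s:ℂ)^2 - 3*(t:ℂ)^2 := by exact_mod_cast hXq
  have hYc : (Y:ℂ) * ((s:ℂ)^2 + 3*(t:ℂ)^2) = 2*(s:ℂ)*(t:ℂ) := by exact_mod_cast hYq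
  have h1 : w * ((s^2 + 3*t^2 : ℚ) : ℂ) = ((s:ℂ) + (t:ℂ) * (rc * I))^2 := by
    rw [hw_def, ← huc, ← hu]
    field_simp
  have h2 : ((X:ℂ) + (Y:ℂ) * rc * I) * ((s^2 + 3*t^2 : ℚ) : ℂ)
      = ((s:ℂ) + (t:ℂ) * (rc * I))^2 := by
    push_cast
    linear_combination hXc + (rc*I) * hYc + (-(t:ℂ)^2) * ht
  have hw : w = (X:ℂ) + (Y:ℂ) * rc * I := mul_right_cancel₀ hDc (h1.trans h2.symm)
  -- w = exp(2θI)
  have hz0 : Q / P ≠ 0 := div_ne_zero hQ hP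
  have hcQ : (starRingEnd ℂ) Q ≠ 0 := by simpa using hQ
  set R : ℝ := ‖Q / P‖ with hR_def
  have habs0 : ((R : ℝ) : ℂ) ≠ 0 := by
    simp only [hR_def, Complex.ofReal_ne_zero, norm_ne_zero_iff]
    exact hz0
  have ha1 : ((R : ℝ) : ℂ) * Complex.exp ((Complex.arg (Q/P) :ℂ) * I) = Q / P :=
    Complex.norm_mul_exp_arg_mul_I _
  have ha2 : (starRingEnd ℂ) (Q/P)
      = ((R : ℝ) : ℂ) * Complex.exp (-(Complex.arg (Q/P) :ℂ) * I) := by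
    conv_lhs => rw [← ha1]
    rw [map_mul, ← Complex.exp_conj]
    congr 1
    · exact Complex.conj_ofReal _
    · congr 1
      simp [Complex.conj_I]
  have hwz : w = (Q/P) / (starRingEnd ℂ) (Q/P) := by
    rw [hw_def, hu_def, map_mul, Complex.conj_conj, map_div₀]
    field_simp
  have hwe : w = Complex.exp (2 * (Complex.arg (Q/P) :ℂ) * I) := by
    obtain ⟨θ, hθ⟩ : ∃ θ : ℝ, Complex.arg (Q/P) = θ := ⟨_, rfl⟩
    rw [hθ] at ha1 ha2 ⊢
    rw [hwz, ha2, ← ha1, mul_div_mul_left _ _ habs0, ← Complex.exp_sub]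
    congr 1
    ring
  -- root of unity
  have hqdc : (q:ℂ) * (q.den:ℂ) = (q.num:ℂ) := by exact_mod_cast Rat.mul_den_eq_num q
  have hn : w ^ q.den = 1 := by
    rw [hwe, ← Complex.exp_nat_mul]
    rw [show ((q.den:ℂ)) * (2 * (Complex.arg (Q/P) :ℂ) * I) = (q.num : ℂ) * (2 * (Real.pi:ℂ) * I) by
      rw [harg]; push_cast; linear_combination 2 * I * (Real.pi:ℂ) * hqdc]
    exact Complex.exp_int_mul_two_pi_mul_I q.num
  have h6 : w ^ 6 = 1 := aux_sixth_root hw ⟨q.den, q.pos, hn⟩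
  rw [hwe, ← Complex.exp_nat_mul, Complex.exp_eq_one_iff] at h6
  obtain ⟨k, hk⟩ := h6
  refine ⟨k, ?_⟩
  have h12 : ((12 * Complex.arg (Q/P) : ℝ):ℂ) * I = (((k:ℝ)*(2*Real.pi) : ℝ):ℂ) * I := by
    push_cast; push_cast at hk; linear_combination hk
  have hr : (12 * Complex.arg (Q/P) : ℝ) = (k:ℝ)*(2*Real.pi) := by
    have := mul_right_cancel₀ Complex.I_ne_zero h12
    exact_mod_cast this
  linarith
end

section
/- Let V ⊂ C be a 2-dimensional Q-vector subspace containing two R-linearly independent vectors. The following are equivalent: (i) V is homothetic to Q·1 + Q·τ with |τ| = 1, τ ∉ R; (ii) V is homothetic to Q·1 + Q·τ with τ a nonzero purely imaginary number; (iii) V is homothetic to a space V′ satisfying V′ = conj(V′). -/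
open Submodule Module


lemma span_pair_add_sub (a b : ℂ) :
    Submodule.span ℚ {a, b} = Submodule.span ℚ {a + b, a - b} := by
  have hS : (a + b) ∈ Submodule.span ℚ ({a, b} : Set ℂ) :=
    add_mem (subset_span (by simp)) (subset_span (by simp))
  have hD : (a - b) ∈ Submodule.span ℚ ({a, b} : Set ℂ) :=
    sub_mem (subset_span (by simp)) (subset_span (by simp))
  have hA : a ∈ Submodule.span ℚ ({a + b, a - b} : Set ℂ) := by
    have hm : (2⁻¹ : ℚ) • ((a + b) + (a - b)) ∈ Submodule.span ℚ ({a + b, a - b} : Set ℂ) :=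
      smul_mem _ _ (add_mem (subset_span (by simp)) (subset_span (by simp)))
    have he : (2⁻¹ : ℚ) • ((a + b) + (a - b)) = a := by
      rw [Rat.smul_def]; push_cast; ring
    rwa [he] at hm
  have hB : b ∈ Submodule.span ℚ ({a + b, a - b} : Set ℂ) := by
    have hm : (2⁻¹ : ℚ) • ((a + b) - (a - b)) ∈ Submodule.span ℚ ({a + b, a - b} : Set ℂ) :=
      smul_mem _ _ (sub_mem (subset_span (by simp)) (subset_span (by simp)))
    have he : (2⁻¹ : ℚ) • ((a + b) - (a - b)) = b := by
      rw [Rat.smul_def]; push_cast; ring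
    rwa [he] at hm
  apply le_antisymm <;>
    rw [Submodule.span_le, Set.insert_subset_iff, Set.singleton_subset_iff] <;>
    exact ⟨by assumption, by assumption⟩

lemma image_mul_coe (c : ℂ) (p : Submodule ℚ ℂ) :
    (fun z : ℂ => c * z) '' (p : Set ℂ) = (Submodule.map (LinearMap.mulLeft ℚ c) p : Set ℂ) := by
  simp [Submodule.map_coe, LinearMap.mulLeft_apply]
  rfl

lemma map_mul_span (c x y : ℂ) :
    Submodule.map (LinearMap.mulLeft ℚ c) (Submodule.span ℚ {x, y}) =
      Submodule.span ℚ {c * x, c * y} := by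
  rw [Submodule.map_span, Set.image_pair]
  simp [LinearMap.mulLeft_apply]

lemma image_mul_span_set (c x y : ℂ) :
    (fun z : ℂ => c * z) '' (Submodule.span ℚ {x, y} : Set ℂ)
      = (Submodule.span ℚ {c * x, c * y} : Set ℂ) := by
  rw [image_mul_coe, map_mul_span]

lemma image_mul_mul (c d : ℂ) (S : Set ℂ) :
    (fun z : ℂ => (c * d) * z) '' S = (fun z : ℂ => c * z) '' ((fun z : ℂ => d * z) '' S) := by
  rw [Set.image_image]; simp only [mul_assoc]

lemma imp21 (V : Submodule ℚ ℂ)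
    (h : ∃ l τ : ℂ, l ≠ 0 ∧ τ ≠ 0 ∧ τ.re = 0 ∧
          (fun z : ℂ => l * z) '' (V : Set ℂ) = (Submodule.span ℚ {1, τ} : Set ℂ)) :
    ∃ l τ : ℂ, l ≠ 0 ∧ ‖τ‖ = 1 ∧ (∀ r : ℝ, τ ≠ (r : ℂ)) ∧
          (fun z : ℂ => l * z) '' (V : Set ℂ) = (Submodule.span ℚ {1, τ} : Set ℂ) := by
  obtain ⟨l, τ, hl, hτ0, hre, himg⟩ := h
  have hτim : τ.im ≠ 0 := by
    intro h0; exact hτ0 (Complex.ext hre h0)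
  set u : ℂ := 1 + τ with hu
  have hu0 : u ≠ 0 := by
    intro h0
    have : u.im = 0 := by rw [h0]; simp
    simp [hu, Complex.add_im] at this
    exact hτim this
  have hconj : (1 : ℂ) - τ = starRingEnd ℂ u := by
    apply Complex.ext <;> simp [hu, hre]
  refine ⟨u⁻¹ * l, (1 - τ) / u, mul_ne_zero (inv_ne_zero hu0) hl, ?_, ?_, ?_⟩
  · rw [norm_div, hconj, Complex.norm_conj, div_self]
    simpa using hu0
  · have hns : Complex.normSq u ≠ 0 := (Complex.normSq_pos.mpr hu0).ne'
    have him : ((1 - τ) / u).im ≠ 0 := by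
      rw [Complex.div_im]
      simp only [Complex.sub_im, Complex.sub_re, Complex.one_im, Complex.one_re, hu,
        Complex.add_im, Complex.add_re, hre, zero_sub, zero_add, add_zero]
      intro hzero
      rw [div_sub_div_same, div_eq_zero_iff] at hzero
      rcases hzero with h1 | h2
      · ring_nf at h1
        exact hτim (by linarith)
      · exact hns h2
    intro r hr
    rw [hr] at him
    simp at him
  · rw [image_mul_mul, himg, image_mul_span_set, span_pair_add_sub]

    have h1 : u⁻¹ * 1 + u⁻¹ * τ = 1 := by field_simp [hu]; exact hu.symm
    have h2 : u⁻¹ * 1 - u⁻¹ * τ = (1 - τ) / u := by field_simp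
    rw [h1, h2]

lemma conj_span_pair (τ : ℂ) (hre : τ.re = 0) :
    (fun z : ℂ => starRingEnd ℂ z) '' ((Submodule.span ℚ {1, τ} : Submodule ℚ ℂ) : Set ℂ)
      = ((Submodule.span ℚ {1, τ} : Submodule ℚ ℂ) : Set ℂ) := by
  let g : ℂ →ₗ[ℚ] ℂ := (Complex.conjAe.toLinearMap.restrictScalars ℚ)
  have hg : ∀ z : ℂ, g z = starRingEnd ℂ z := fun z => rfl
  have himg : (fun z : ℂ => starRingEnd ℂ z) '' ((Submodule.span ℚ {1, τ} : Submodule ℚ ℂ) : Set ℂ)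
      = (Submodule.map g (Submodule.span ℚ {1, τ}) : Set ℂ) := by
    rw [Submodule.map_coe]; rfl
  rw [himg, Submodule.map_span, Set.image_pair]
  have hconjτ : g τ = -τ := by
    rw [hg]; apply Complex.ext <;> simp [hre]
  have hone : g 1 = 1 := by rw [hg]; simp
  have hspan : Submodule.span ℚ ({1, -τ} : Set ℂ) = Submodule.span ℚ ({1, τ} : Set ℂ) := by
    apply le_antisymm <;>
      rw [Submodule.span_le, Set.insert_subset_iff, Set.singleton_subset_iff]
    · exact ⟨subset_span (by simp), neg_mem (subset_span (by simp))⟩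
    · refine ⟨subset_span (by simp), ?_⟩
      have h := neg_mem (subset_span (R := ℚ) (by simp : -τ ∈ ({1, -τ} : Set ℂ)))
      simpa using h
  rw [hconjτ, hone, hspan]

lemma pair_re_ne (x y : ℂ) (h : LinearIndependent ℝ ![x, y]) : x.re ≠ 0 ∨ y.re ≠ 0 := by
  by_contra hcon
  push_neg at hcon
  obtain ⟨h1, h2⟩ := hcon
  have h3 := LinearIndependent.pair_iff.mp h y.im (-x.im) (by
    apply Complex.ext <;> simp [Complex.smul_re, Complex.smul_im, h1, h2] <;> ring)
  have hx0 : x = 0 := Complex.ext h1 (neg_eq_zero.mp h3.2)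
  have := h.ne_zero 0
  simp [hx0] at this

lemma pair_im_ne (x y : ℂ) (h : LinearIndependent ℝ ![x, y]) : x.im ≠ 0 ∨ y.im ≠ 0 := by
  by_contra hcon
  push_neg at hcon
  obtain ⟨h1, h2⟩ := hcon
  have h3 := LinearIndependent.pair_iff.mp h y.re (-x.re) (by
    apply Complex.ext <;> simp [Complex.smul_re, Complex.smul_im, h1, h2] <;> ring)
  have hx0 : x = 0 := Complex.ext (neg_eq_zero.mp h3.2) h1
  have := h.ne_zero 0
  simp [hx0] at this

lemma imp32 (V : Submodule ℚ ℂ) (hdim : Module.finrank ℚ V = 2)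
    (hind : ∃ v w : ℂ, v ∈ V ∧ w ∈ V ∧ LinearIndependent ℝ ![v, w])
    (h : ∃ (l : ℂ) (V' : Submodule ℚ ℂ), l ≠ 0 ∧
          (fun z : ℂ => l * z) '' (V : Set ℂ) = (V' : Set ℂ) ∧
          (fun z : ℂ => starRingEnd ℂ z) '' (V' : Set ℂ) = (V' : Set ℂ)) :
    ∃ l τ : ℂ, l ≠ 0 ∧ τ ≠ 0 ∧ τ.re = 0 ∧
          (fun z : ℂ => l * z) '' (V : Set ℂ) = (Submodule.span ℚ {1, τ} : Set ℂ) := by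
  obtain ⟨l, V', hl, himg, hconj⟩ := h
  obtain ⟨v, w, hv, hw, hli⟩ := hind
  have hfinV : FiniteDimensional ℚ V := FiniteDimensional.of_finrank_pos (by omega)
  have hinj : Function.Injective (LinearMap.mulLeft ℚ l) := by
    intro a b hab
    simpa using mul_left_cancel₀ hl (by simpa [LinearMap.mulLeft_apply] using hab)
  have hVmap : Submodule.map (LinearMap.mulLeft ℚ l) V = V' :=
    SetLike.coe_injective (by rw [← image_mul_coe]; exact himg)
  have e := Submodule.equivMapOfInjective (LinearMap.mulLeft ℚ l) hinj V
  have hfinV' : FiniteDimensional ℚ V' := by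
    rw [← hVmap]; exact Module.Finite.equiv e
  have hfr : Module.finrank ℚ V' = 2 := by
    rw [← hVmap, ← e.finrank_eq]; exact hdim
  have hconjmem : ∀ z ∈ V', starRingEnd ℂ z ∈ V' := by
    intro z hz
    have : starRingEnd ℂ z ∈ (fun z : ℂ => starRingEnd ℂ z) '' (V' : Set ℂ) := ⟨z, hz, rfl⟩
    rwa [hconj] at this
  have hlv : l * v ∈ V' := by
    rw [← hVmap]; exact ⟨v, hv, rfl⟩
  have hlw : l * w ∈ V' := by
    rw [← hVmap]; exact ⟨w, hw, rfl⟩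
  -- linear independence of l*v, l*w over ℝ
  have hli' : LinearIndependent ℝ ![l * v, l * w] := by
    have h0 := hli.map' (LinearMap.mulLeft ℝ l)
      (LinearMap.ker_eq_bot.mpr (fun a b hab => by
        simpa using mul_left_cancel₀ hl (by simpa [LinearMap.mulLeft_apply] using hab)))
    have he : (LinearMap.mulLeft ℝ l) ∘ ![v, w] = ![l * v, l * w] := by
      funext i; fin_cases i <;> simp [LinearMap.mulLeft_apply]
    rwa [he] at h0
  have hpair := LinearIndependent.pair_iff.mp hli'
  have hlv0 : l * v ≠ 0 := by
    have := hli'.ne_zero 0; simpa using this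
  have hre : (l * v).re ≠ 0 ∨ (l * w).re ≠ 0 := pair_re_ne _ _ hli'
  have him : (l * v).im ≠ 0 ∨ (l * w).im ≠ 0 := pair_im_ne _ _ hli'
  -- produce real and purely imaginary nonzero elements of V'
  obtain ⟨z, hz, hzre⟩ : ∃ z, z ∈ V' ∧ z.re ≠ 0 := by
    rcases hre with h | h
    exacts [⟨l * v, hlv, h⟩, ⟨l * w, hlw, h⟩]
  obtain ⟨y, hy, hyim⟩ : ∃ y, y ∈ V' ∧ y.im ≠ 0 := by
    rcases him with h | h
    exacts [⟨l * v, hlv, h⟩, ⟨l * w, hlw, h⟩]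
  set r : ℝ := 2 * z.re with hrdef
  set s : ℝ := 2 * y.im with hsdef
  have hr : r ≠ 0 := by simp [hrdef, hzre]
  have hs : s ≠ 0 := by simp [hsdef, hyim]
  have ha : ((r : ℝ) : ℂ) ∈ V' := by
    rw [← Complex.add_conj]
    exact add_mem hz (hconjmem z hz)
  have hb : ((s : ℝ) : ℂ) * Complex.I ∈ V' := by
    rw [← Complex.sub_conj]
    exact sub_mem hy (hconjmem y hy)
  -- linear independence of a, b over ℚ
  have hab : LinearIndependent ℚ ![((r : ℝ) : ℂ), ((s : ℝ) : ℂ) * Complex.I] := by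
    have habR : LinearIndependent ℝ ![((r : ℝ) : ℂ), ((s : ℝ) : ℂ) * Complex.I] := by
      rw [LinearIndependent.pair_iff]
      intro p q hpq
      have hre' := congrArg Complex.re hpq
      have him' := congrArg Complex.im hpq
      simp [Complex.add_re, Complex.add_im, Complex.smul_re, Complex.smul_im] at hre' him'
      constructor
      · rcases hre' with h | h
        exacts [h, absurd h hr]
      · rcases him' with h | h
        exacts [h, absurd h hs]
    exact habR.restrict_scalars (by
      intro p q hpq
      simpa using hpq)
  -- V' = span {a, b}
  have hspan : Submodule.span ℚ {((r : ℝ) : ℂ), ((s : ℝ) : ℂ) * Complex.I} = V' := by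
    apply Submodule.eq_of_le_of_finrank_le
    · rw [Submodule.span_le, Set.insert_subset_iff, Set.singleton_subset_iff]
      exact ⟨ha, hb⟩
    · rw [hfr]
      have hcard := finrank_span_eq_card hab
      have hrange : Set.range ![((r : ℝ) : ℂ), ((s : ℝ) : ℂ) * Complex.I]
          = {((r : ℝ) : ℂ), ((s : ℝ) : ℂ) * Complex.I} := by
        simp only [Matrix.range_cons, Matrix.range_empty, Set.union_empty,
          Set.union_singleton]
        exact Set.pair_comm _ _
      rw [hrange] at hcard
      rw [hcard]
      simp
  refine ⟨((r : ℝ) : ℂ)⁻¹ * l, ((s / r : ℝ) : ℂ) * Complex.I, ?_, ?_, ?_, ?_⟩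
  · exact mul_ne_zero (inv_ne_zero (by exact_mod_cast hr)) hl
  · exact mul_ne_zero (by exact_mod_cast div_ne_zero hs hr) Complex.I_ne_zero
  · simp
  · rw [image_mul_mul, himg, ← hspan, image_mul_span_set]
    have e1 : ((r : ℝ) : ℂ)⁻¹ * ((r : ℝ) : ℂ) = 1 := inv_mul_cancel₀ (by exact_mod_cast hr)
    have e2 : ((r : ℝ) : ℂ)⁻¹ * (((s : ℝ) : ℂ) * Complex.I) = ((s / r : ℝ) : ℂ) * Complex.I := by
      push_cast
      field_simp
    rw [e1, e2]

lemma imp12 (V : Submodule ℚ ℂ)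
    (h : ∃ l τ : ℂ, l ≠ 0 ∧ ‖τ‖ = 1 ∧ (∀ r : ℝ, τ ≠ (r : ℂ)) ∧
          (fun z : ℂ => l * z) '' (V : Set ℂ) = (Submodule.span ℚ {1, τ} : Set ℂ)) :
    ∃ l τ : ℂ, l ≠ 0 ∧ τ ≠ 0 ∧ τ.re = 0 ∧
          (fun z : ℂ => l * z) '' (V : Set ℂ) = (Submodule.span ℚ {1, τ} : Set ℂ) := by
  obtain ⟨l, τ, hl, habs, hnr, himg⟩ := h
  have hτ0 : τ ≠ 0 := by
    intro h0; rw [h0] at habs; simp at habs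
  have hτim : τ.im ≠ 0 := by
    intro h0
    exact hnr τ.re (Complex.ext (by simp) (by simp [h0]))
  set μ : ℂ := Complex.exp (Complex.log τ / 2) with hμdef
  have hμ2 : μ * μ = τ := by
    rw [hμdef, ← Complex.exp_add]
    have : Complex.log τ / 2 + Complex.log τ / 2 = Complex.log τ := by ring
    rw [this, Complex.exp_log hτ0]
  have habsμ : ‖μ‖ = 1 := by
    have h1 : ‖μ‖ * ‖μ‖ = 1 := by
      rw [← norm_mul, hμ2, habs]
    nlinarith [norm_nonneg μ]
  have hμ0 : μ ≠ 0 := by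
    intro h0; rw [h0] at habsμ; simp at habsμ
  have hμre : μ.re ≠ 0 := by
    intro h0; apply hτim; rw [← hμ2]; simp [Complex.mul_im, h0]
  have hμim : μ.im ≠ 0 := by
    intro h0; apply hτim; rw [← hμ2]; simp [Complex.mul_im, h0]
  have h2re : ((2 * μ.re : ℝ) : ℂ) ≠ 0 := by
    exact_mod_cast mul_ne_zero two_ne_zero hμre
  set c : ℂ := (starRingEnd ℂ μ) * ((2 * μ.re : ℝ) : ℂ)⁻¹ with hcdef
  have hc0 : c ≠ 0 := mul_ne_zero (by simpa using hμ0) (inv_ne_zero h2re)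
  have hn : (starRingEnd ℂ μ) * μ = 1 := by
    rw [mul_comm, Complex.mul_conj]
    rw [Complex.normSq_eq_norm_sq, habsμ]
    norm_num
  have hsum : c * 1 + c * τ = 1 := by
    have h1 : c * 1 + c * τ
        = (starRingEnd ℂ μ) * ((2 * μ.re : ℝ) : ℂ)⁻¹
          + ((starRingEnd ℂ μ) * μ) * (μ * ((2 * μ.re : ℝ) : ℂ)⁻¹) := by
      rw [hcdef, ← hμ2]; ring
    rw [h1, hn, one_mul, ← add_mul]
    have h2 : (starRingEnd ℂ μ) + μ = ((2 * μ.re : ℝ) : ℂ) := by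
      rw [add_comm, Complex.add_conj]
    rw [h2, mul_inv_cancel₀ h2re]
  have hdiff : c * 1 - c * τ = ((-(μ.im / μ.re) : ℝ) : ℂ) * Complex.I := by
    have h1 : c * 1 - c * τ
        = (starRingEnd ℂ μ) * ((2 * μ.re : ℝ) : ℂ)⁻¹
          - ((starRingEnd ℂ μ) * μ) * (μ * ((2 * μ.re : ℝ) : ℂ)⁻¹) := by
      rw [hcdef, ← hμ2]; ring
    rw [h1, hn, one_mul, ← sub_mul]
    have h2 : (starRingEnd ℂ μ) - μ = -(((2 * μ.im : ℝ) : ℂ) * Complex.I) := by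
      rw [← Complex.sub_conj]; ring
    rw [h2]
    have hrc : ((μ.re : ℝ) : ℂ) ≠ 0 := by exact_mod_cast hμre
    push_cast
    field_simp
  refine ⟨c * l, ((-(μ.im / μ.re) : ℝ) : ℂ) * Complex.I,
    mul_ne_zero hc0 hl, ?_, by simp, ?_⟩
  · exact mul_ne_zero
      (by exact_mod_cast neg_ne_zero.mpr (div_ne_zero hμim hμre)) Complex.I_ne_zero
  · rw [image_mul_mul, himg, image_mul_span_set, span_pair_add_sub, hsum, hdiff]


/-- For a space `V` (a 2-dimensional `ℚ`-subspace of `ℂ` containing two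
`ℝ`-linearly independent vectors) the following are equivalent:
(i) `V` is homothetic to `ℚ·1 + ℚ·τ` with `|τ| = 1`, `τ ∉ ℝ`;
(ii) `V` is homothetic to `ℚ·1 + ℚ·τ` with `τ` purely imaginary and nonzero;
(iii) `V` is homothetic to a space `V'` with `V' = conj(V')`. -/
theorem selfconjugate_space_characterization
    (V : Submodule ℚ ℂ) (hdim : Module.finrank ℚ V = 2)
    (hind : ∃ v w : ℂ, v ∈ V ∧ w ∈ V ∧ LinearIndependent ℝ ![v, w]) :
    List.TFAE
      [ ∃ l τ : ℂ, l ≠ 0 ∧ ‖τ‖ = 1 ∧ (∀ r : ℝ, τ ≠ (r : ℂ)) ∧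
          (fun z : ℂ => l * z) '' (V : Set ℂ) = (Submodule.span ℚ {1, τ} : Set ℂ),
        ∃ l τ : ℂ, l ≠ 0 ∧ τ ≠ 0 ∧ τ.re = 0 ∧
          (fun z : ℂ => l * z) '' (V : Set ℂ) = (Submodule.span ℚ {1, τ} : Set ℂ),
        ∃ (l : ℂ) (V' : Submodule ℚ ℂ), l ≠ 0 ∧
          (fun z : ℂ => l * z) '' (V : Set ℂ) = (V' : Set ℂ) ∧
          (fun z : ℂ => starRingEnd ℂ z) '' (V' : Set ℂ) = (V' : Set ℂ) ] := by
  tfae_have 1 → 2 := imp12 V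
  tfae_have 2 → 1 := imp21 V
  tfae_have 2 → 3 := by
    rintro ⟨l, τ, hl, hτ0, hre, himg⟩
    exact ⟨l, Submodule.span ℚ {1, τ}, hl, himg, conj_span_pair τ hre⟩
  tfae_have 3 → 2 := imp32 V hdim hind
  tfae_finish
end

section
/- Let V ⊂ C be a 2-dimensional Q-vector subspace with two R-linearly independent vectors. The following are equivalent: (i) V is homothetic to conj(V); (ii) V is homothetic to Q·1 + Q·τ for some τ ∈ C \ R with |τ|² ∈ Q. -/
open Complex

noncomputable def cjQ : ℂ →ₗ[ℚ] ℂ where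
  toFun := starRingEnd ℂ
  map_add' := by intros; simp
  map_smul' := by intro q z; simp [Rat.smul_def, map_mul]

lemma image_mul_span (l x y : ℂ) :
    (fun z : ℂ => l * z) '' (Submodule.span ℚ {x, y} : Set ℂ) =
      (Submodule.span ℚ {l * x, l * y} : Set ℂ) := by
  have h : (fun z : ℂ => l * z) '' (Submodule.span ℚ {x, y} : Set ℂ)
      = (Submodule.map (LinearMap.mulLeft ℚ l) (Submodule.span ℚ {x, y}) : Set ℂ) := by
    simp [Submodule.map_coe]; rfl
  rw [h, Submodule.map_span]
  rw [Set.image_pair]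
  rfl

lemma image_conj_span (x y : ℂ) :
    (fun z : ℂ => starRingEnd ℂ z) '' (Submodule.span ℚ {x, y} : Set ℂ) =
      (Submodule.span ℚ {starRingEnd ℂ x, starRingEnd ℂ y} : Set ℂ) := by
  have h : (fun z : ℂ => starRingEnd ℂ z) '' (Submodule.span ℚ {x, y} : Set ℂ)
      = (Submodule.map cjQ (Submodule.span ℚ {x, y}) : Set ℂ) := by
    simp [Submodule.map_coe]; rfl
  rw [h, Submodule.map_span]
  rw [Set.image_pair]
  rfl

lemma span_pair_eq_span_pair {a b c d : ℂ}
    (h1 : ∃ p q : ℚ, p • a + q • b = c) (h2 : ∃ p q : ℚ, p • a + q • b = d)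
    (h3 : ∃ p q : ℚ, p • c + q • d = a) (h4 : ∃ p q : ℚ, p • c + q • d = b) :
    Submodule.span ℚ ({a, b} : Set ℂ) = Submodule.span ℚ ({c, d} : Set ℂ) := by
  apply le_antisymm <;> rw [Submodule.span_le] <;> rintro z (rfl | rfl) <;>
    first
    | exact Submodule.mem_span_pair.mpr h3
    | exact Submodule.mem_span_pair.mpr h4
    | exact Submodule.mem_span_pair.mpr h1
    | exact Submodule.mem_span_pair.mpr h2

lemma image_image_mul (m n : ℂ) (S : Set ℂ) :
    (fun z : ℂ => m * z) '' ((fun z : ℂ => n * z) '' S) = (fun z : ℂ => (m * n) * z) '' S := by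
  rw [Set.image_image]; simp [mul_assoc]

lemma conj_image_mul (m : ℂ) (S : Set ℂ) :
    (fun z : ℂ => starRingEnd ℂ z) '' ((fun z : ℂ => m * z) '' S)
      = (fun z : ℂ => (starRingEnd ℂ m) * z) '' ((fun z : ℂ => starRingEnd ℂ z) '' S) := by
  rw [Set.image_image, Set.image_image]; simp [map_mul]

/-- For a space `V` (a 2-dimensional `ℚ`-subspace of `ℂ` containing two
`ℝ`-linearly independent vectors): `V` is homothetic to its complex conjugate
if and only if `V` is homothetic to `ℚ·1 + ℚ·τ` for some `τ ∉ ℝ` with `|τ|² ∈ ℚ`. -/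
theorem homothetic_to_conjugate_iff
    (V : Submodule ℚ ℂ) (hdim : Module.finrank ℚ V = 2)
    (hind : ∃ v w : ℂ, v ∈ V ∧ w ∈ V ∧ LinearIndependent ℝ ![v, w]) :
    (∃ l : ℂ, l ≠ 0 ∧
        (fun z : ℂ => l * z) '' (V : Set ℂ) =
          (fun z : ℂ => starRingEnd ℂ z) '' (V : Set ℂ)) ↔
    (∃ l τ : ℂ, l ≠ 0 ∧ (∀ r : ℝ, τ ≠ (r : ℂ)) ∧ (∃ q : ℚ, ‖τ‖ ^ 2 = (q : ℝ)) ∧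
        (fun z : ℂ => l * z) '' (V : Set ℂ) = (Submodule.span ℚ {1, τ} : Set ℂ)) := by
  constructor
  · -- forward direction
    rintro ⟨l, hl, hV⟩
    obtain ⟨v, w, hv, hw, hind⟩ := hind
    have hQind : LinearIndependent ℚ ![v, w] := by
      apply hind.restrict_scalars
      intro a b h
      simpa using h
    have hfd : FiniteDimensional ℚ V := FiniteDimensional.of_finrank_pos (by omega)
    have hle : Submodule.span ℚ {v, w} ≤ V := by
      rw [Submodule.span_le]; rintro z (rfl | rfl) <;> assumption
    have hrange : Set.range ![v, w] = {v, w} := by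
      ext z; simp [Fin.exists_fin_two]; tauto
    have hfr := finrank_span_eq_card hQind
    rw [hrange] at hfr
    have hspan : Submodule.span ℚ {v, w} = V := by
      apply Submodule.eq_of_le_of_finrank_le hle
      rw [hdim, hfr]; simp
    have h2' := linearIndependent_fin2.mp hind
    have hw0 : w ≠ 0 := by simpa using h2'.1
    have hv0 : v ≠ 0 := by
      intro h
      exact (h2'.2 0) (by simp [h])
    obtain ⟨τ₀, hτ₀def⟩ : ∃ t : ℂ, t = w / v := ⟨_, rfl⟩
    have hτ₀R : ∀ r : ℝ, τ₀ ≠ (r : ℂ) := by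
      intro r hr
      rw [hτ₀def] at hr
      have hr0 : r ≠ 0 := by
        intro h
        rw [h] at hr
        norm_num at hr
        exact hw0 (hr.resolve_right hv0)
      apply h2'.2 r⁻¹
      have hrc : (r : ℂ) ≠ 0 := Complex.ofReal_ne_zero.mpr hr0
      have hwv : w = r * v := by field_simp at hr; linear_combination hr
      show (r⁻¹ : ℝ) • w = v
      rw [hwv, Complex.real_smul]
      push_cast
      field_simp
    have hcv : starRingEnd ℂ v ≠ 0 := by
      simpa using hv0
    have h1 : (fun z : ℂ => v⁻¹ * z) '' (V : Set ℂ)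
        = (Submodule.span ℚ {1, τ₀} : Set ℂ) := by
      rw [← hspan, image_mul_span, inv_mul_cancel₀ hv0, inv_mul_eq_div, ← hτ₀def]
    obtain ⟨c, hcdef⟩ : ∃ t : ℂ, t = l * v * (starRingEnd ℂ v)⁻¹ := ⟨_, rfl⟩
    have hc0 : c ≠ 0 := by
      rw [hcdef]
      exact mul_ne_zero (mul_ne_zero hl hv0) (inv_ne_zero hcv)
    have h2 : (fun z : ℂ => c * z) '' (Submodule.span ℚ {1, τ₀} : Set ℂ)
        = (Submodule.span ℚ {1, starRingEnd ℂ τ₀} : Set ℂ) := by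
      rw [← h1, image_image_mul]
      have e1 : c * v⁻¹ = (starRingEnd ℂ v)⁻¹ * l := by
        rw [hcdef]; field_simp
      rw [e1, ← image_image_mul, hV]
      have e2 : (starRingEnd ℂ v)⁻¹ = starRingEnd ℂ (v⁻¹) := (map_inv₀ (starRingEnd ℂ) v).symm
      rw [e2, ← conj_image_mul, h1, image_conj_span, map_one]
    have h2s : Submodule.span ℚ ({c * 1, c * τ₀} : Set ℂ)
        = Submodule.span ℚ ({1, starRingEnd ℂ τ₀} : Set ℂ) :=
      SetLike.coe_injective (by rw [← image_mul_span, h2])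
    have hcmem : c ∈ Submodule.span ℚ ({1, starRingEnd ℂ τ₀} : Set ℂ) := by
      rw [← h2s]
      exact Submodule.subset_span (by left; rw [mul_one])
    obtain ⟨u, s, hus⟩ := Submodule.mem_span_pair.mp hcmem
    have h3 : (fun z : ℂ => starRingEnd ℂ c * z) ''
        (Submodule.span ℚ {1, starRingEnd ℂ τ₀} : Set ℂ)
        = (Submodule.span ℚ {1, τ₀} : Set ℂ) := by
      have hc2 := congrArg (fun T => (fun z : ℂ => starRingEnd ℂ z) '' T) h2
      rw [conj_image_mul, image_conj_span, image_conj_span, map_one, Complex.conj_conj] at hc2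
      exact hc2
    have h3s : Submodule.span ℚ ({starRingEnd ℂ c * 1, starRingEnd ℂ c * starRingEnd ℂ τ₀} : Set ℂ)
        = Submodule.span ℚ ({1, τ₀} : Set ℂ) :=
      SetLike.coe_injective (by rw [← image_mul_span, h3])
    have hccmem : starRingEnd ℂ c * c ∈ Submodule.span ℚ ({1, τ₀} : Set ℂ) := by
      rw [← h3s]
      have : starRingEnd ℂ c * c
          = u • (starRingEnd ℂ c * 1) + s • (starRingEnd ℂ c * starRingEnd ℂ τ₀) := by
        rw [← hus]
        simp [Rat.smul_def]
        ring
      rw [this]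
      exact Submodule.add_mem _
        (Submodule.smul_mem _ _ (Submodule.subset_span (by left; rfl)))
        (Submodule.smul_mem _ _ (Submodule.subset_span (by right; rfl)))
    obtain ⟨m, n, hmn⟩ := Submodule.mem_span_pair.mp hccmem
    have hcc : starRingEnd ℂ c * c = (Complex.normSq c : ℂ) := by
      rw [mul_comm, Complex.mul_conj]
    have hn0 : n = 0 := by
      by_contra hn
      apply hτ₀R ((Complex.normSq c - (m : ℝ)) / (n : ℝ))
      have hnc : ((n : ℚ) : ℂ) ≠ 0 := by exact_mod_cast hn
      rw [hcc] at hmn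
      simp only [Rat.smul_def, mul_one] at hmn
      have ht : τ₀ = ((Complex.normSq c : ℂ) - ((m : ℚ) : ℂ)) / ((n : ℚ) : ℂ) := by
        field_simp
        linear_combination hmn
      rw [ht]
      push_cast
      ring
    have hm : Complex.normSq c = (m : ℝ) := by
      rw [hn0] at hmn
      simp only [Rat.smul_def, mul_one, Rat.cast_zero, zero_mul, add_zero] at hmn
      rw [hcc] at hmn
      exact_mod_cast hmn.symm
    rcases eq_or_ne s 0 with hs | hs
    · -- c is rational: span{1,τ₀} = span{1, conj τ₀}
      have hcu : c = ((u : ℚ) : ℂ) := by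
        rw [← hus, hs]; simp
      have hu0 : (u : ℚ) ≠ 0 := by
        intro h; rw [h] at hcu; simp at hcu; exact hc0 hcu
      have huc : ((u : ℚ) : ℂ) ≠ 0 := by exact_mod_cast hu0
      have hsp0 : Submodule.span ℚ ({1, τ₀} : Set ℂ)
          = Submodule.span ℚ ({1, starRingEnd ℂ τ₀} : Set ℂ) := by
        rw [← h2s, hcu]
        apply span_pair_eq_span_pair
        · exact ⟨u, 0, by simp [Rat.smul_def]⟩
        · exact ⟨0, u, by simp [Rat.smul_def]⟩
        · exact ⟨u⁻¹, 0, by simp only [Rat.smul_def]; push_cast; field_simp; simp⟩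
        · exact ⟨0, u⁻¹, by simp only [Rat.smul_def]; push_cast; field_simp; try ring⟩
      have hconjmem : starRingEnd ℂ τ₀ ∈ Submodule.span ℚ ({1, τ₀} : Set ℂ) := by
        rw [hsp0]; exact Submodule.subset_span (by right; rfl)
      obtain ⟨x, y, hxy⟩ := Submodule.mem_span_pair.mp hconjmem
      have hxy' : (x : ℂ) + (y : ℂ) * τ₀ = starRingEnd ℂ τ₀ := by
        simpa [Rat.smul_def] using hxy
      have hxy2 : (x : ℂ) + (y : ℂ) * starRingEnd ℂ τ₀ = τ₀ := by
        have := congrArg (starRingEnd ℂ) hxy'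
        simpa [map_add, map_mul, Complex.conj_conj] using this
      have hy : y = -1 := by
        by_contra hy
        rcases eq_or_ne y 1 with hy1 | hy1
        · rw [hy1] at hxy' hxy2
          have hx0 : (x : ℂ) = 0 := by
            have h4 := hxy2
            rw [← hxy'] at h4
            have h5 : (2 : ℂ) * x = 0 := by push_cast at h4 ⊢; linear_combination h4
            simpa using h5
          have hcj : starRingEnd ℂ τ₀ = τ₀ := by
            rw [← hxy', hx0]; simp
          apply hτ₀R τ₀.re
          exact (Complex.conj_eq_iff_re.mp hcj).symm
        · have hy2 : (1 : ℚ) - y^2 ≠ 0 := by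
            intro h
            have h6 : (y - 1) * (y + 1) = 0 := by linear_combination -h
            rcases mul_eq_zero.mp h6 with h' | h'
            · exact hy1 (by linarith)
            · exact hy (by linarith)
          apply hτ₀R (((x * (1 + y)) / (1 - y^2) : ℚ) : ℝ)
          have hyc : ((1 - y^2 : ℚ) : ℂ) ≠ 0 := by exact_mod_cast hy2
          have key : ((1:ℂ) - (y:ℂ)^2) * τ₀ = (x : ℂ) * (1 + (y:ℂ)) := by
            have h4 := hxy2
            rw [← hxy'] at h4
            linear_combination -h4
          have ht : τ₀ = ((x : ℂ) * (1 + (y:ℂ))) / ((1:ℂ) - (y:ℂ)^2) := by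
            rw [eq_div_iff (by push_cast at hyc; exact hyc)]
            linear_combination key
          rw [ht]
          push_cast
          ring
      rw [hy] at hxy'
      have hconj : starRingEnd ℂ τ₀ = (x : ℂ) - τ₀ := by
        rw [← hxy']; push_cast; ring
      obtain ⟨τ', hτ'def⟩ : ∃ t : ℂ, t = τ₀ - ((x / 2 : ℚ) : ℂ) := ⟨_, rfl⟩
      have hτ'conj : starRingEnd ℂ τ' = -τ' := by
        rw [hτ'def, map_sub, hconj, map_ratCast]
        push_cast
        ring
      have hτ'R : ∀ r : ℝ, τ' ≠ (r : ℂ) := by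
        intro r hr
        apply hτ₀R (r + (x : ℝ) / 2)
        rw [hτ'def] at hr
        have : τ₀ = (r : ℂ) + ((x/2 : ℚ) : ℂ) := by linear_combination hr
        rw [this]
        push_cast
        ring
      have hτ'0 : τ' ≠ 0 := fun h => hτ'R 0 (by simp [h])
      have h1τ' : (1 : ℂ) + τ' ≠ 0 := by
        intro h
        apply hτ'R (-1)
        push_cast
        linear_combination h
      obtain ⟨σ, hσdef⟩ : ∃ t : ℂ, t = (1 - τ') * (1 + τ')⁻¹ := ⟨_, rfl⟩
      have hinv : (1 + τ')⁻¹ * (1 + τ') = 1 := inv_mul_cancel₀ h1τ'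
      have hσmul : σ * (1 + τ') = 1 - τ' := by
        rw [hσdef]
        field_simp
      have hσR : ∀ r : ℝ, σ ≠ (r : ℂ) := by
        intro r hσr
        rw [hσr] at hσmul
        rcases eq_or_ne r (-1) with rfl | hr
        · push_cast at hσmul
          have h5 : (2 : ℂ) = 0 := by linear_combination -hσmul
          norm_num at h5
        · apply hτ'R ((1 - r) / (1 + r))
          have h1r : (1 : ℝ) + r ≠ 0 := by
            intro h; apply hr; linarith
          have h1rc : (1 : ℂ) + (r : ℂ) ≠ 0 := by
            intro h; apply h1r; exact_mod_cast h
          rw [eq_comm]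
          push_cast
          rw [div_eq_iff h1rc]
          linear_combination -hσmul
      have hnormτ' : Complex.normSq (1 - τ') = Complex.normSq (1 + τ') := by
        have hh : ((Complex.normSq (1 - τ') : ℝ) : ℂ) = ((Complex.normSq (1 + τ') : ℝ) : ℂ) := by
          rw [← Complex.mul_conj, ← Complex.mul_conj, map_sub, map_add, map_one, hτ'conj]
          ring
        exact_mod_cast hh
      have habsσ : ‖σ‖ ^ 2 = ((1 : ℚ) : ℝ) := by
        rw [Complex.sq_norm, hσdef, Complex.normSq_mul, Complex.normSq_inv, hnormτ']
        have hns : Complex.normSq (1 + τ') ≠ 0 := by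
          intro h; exact h1τ' (Complex.normSq_eq_zero.mp h)
        rw [mul_inv_cancel₀ hns]
        norm_num
      have hsp1 : Submodule.span ℚ ({1, τ₀} : Set ℂ) = Submodule.span ℚ ({1, τ'} : Set ℂ) := by
        apply span_pair_eq_span_pair
        · exact ⟨1, 0, by simp⟩
        · refine ⟨-(x/2), 1, ?_⟩
          simp only [Rat.smul_def, mul_one]
          rw [hτ'def]
          push_cast
          ring
        · exact ⟨1, 0, by simp⟩
        · refine ⟨x/2, 1, ?_⟩
          simp only [Rat.smul_def, mul_one]
          rw [hτ'def]
          push_cast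
          ring
      have hsp2 : Submodule.span ℚ ({(1 + τ')⁻¹ * 1, (1 + τ')⁻¹ * τ'} : Set ℂ)
          = Submodule.span ℚ ({1, σ} : Set ℂ) := by
        apply span_pair_eq_span_pair
        · refine ⟨1, 1, ?_⟩
          simp only [Rat.smul_def, Rat.cast_one, one_mul, mul_one]
          linear_combination hinv
        · refine ⟨1, -1, ?_⟩
          simp only [Rat.smul_def, mul_one]
          push_cast
          rw [hσdef]
          ring
        · refine ⟨1/2, 1/2, ?_⟩
          simp only [Rat.smul_def, mul_one]
          push_cast
          rw [hσdef]
          linear_combination (-(1:ℂ)/2) * hinv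
        · refine ⟨1/2, -(1/2), ?_⟩
          simp only [Rat.smul_def, mul_one]
          push_cast
          rw [hσdef]
          linear_combination (-(1:ℂ)/2) * hinv
      refine ⟨(1 + τ')⁻¹ * v⁻¹, σ, mul_ne_zero (inv_ne_zero h1τ') (inv_ne_zero hv0),
        hσR, ⟨1, habsσ⟩, ?_⟩
      rw [← image_image_mul, h1, hsp1, image_mul_span, hsp2]
    · -- s ≠ 0 : τ := conj c works
      obtain ⟨τ, hτdef⟩ : ∃ t : ℂ, t = (u : ℂ) + (s : ℂ) * τ₀ := ⟨_, rfl⟩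
      have hsc : ((s : ℚ) : ℂ) ≠ 0 := by exact_mod_cast hs
      have hτc : τ = starRingEnd ℂ c := by
        rw [hτdef, ← hus, map_add]
        simp [Rat.smul_def, map_mul, Complex.conj_conj]
      have hτR : ∀ r : ℝ, τ ≠ (r : ℂ) := by
        intro r hr
        apply hτ₀R ((r - (u : ℝ)) / (s : ℝ))
        rw [hτdef] at hr
        have ht : τ₀ = ((r : ℂ) - ((u:ℚ) : ℂ)) / ((s:ℚ) : ℂ) := by
          rw [eq_div_iff hsc]
          linear_combination hr
        rw [ht]
        push_cast
        ring
      have habs : ‖τ‖ ^ 2 = ((m : ℚ) : ℝ) := by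
        rw [Complex.sq_norm, hτc, Complex.normSq_conj, hm]
      have hsp1 : Submodule.span ℚ ({1, τ₀} : Set ℂ) = Submodule.span ℚ ({1, τ} : Set ℂ) := by
        apply span_pair_eq_span_pair
        · exact ⟨1, 0, by simp⟩
        · refine ⟨u, s, ?_⟩
          simp only [Rat.smul_def, mul_one]
          rw [hτdef]
        · exact ⟨1, 0, by simp⟩
        · refine ⟨-(u/s), s⁻¹, ?_⟩
          simp only [Rat.smul_def, mul_one]
          rw [hτdef]
          push_cast
          field_simp
          ring
      exact ⟨v⁻¹, τ, inv_ne_zero hv0, hτR, ⟨m, habs⟩, by rw [h1, hsp1]⟩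
  · -- backward direction
    rintro ⟨l, τ, hl, hτR, ⟨q, hq⟩, hV⟩
    have hτ0 : τ ≠ 0 := fun h => hτR 0 (by simp [h])
    have hcl : starRingEnd ℂ l ≠ 0 := by simpa using hl
    have hclτ : starRingEnd ℂ l * τ ≠ 0 := mul_ne_zero hcl hτ0
    have hql : τ * starRingEnd ℂ τ = ((q : ℚ) : ℂ) := by
      rw [Complex.mul_conj, ← Complex.sq_norm, hq]
      norm_cast
    have hq0 : (q : ℚ) ≠ 0 := by
      intro h
      rw [h] at hql
      norm_num at hql
      exact hτ0 hql
    have hqc : ((q : ℚ) : ℂ) ≠ 0 := by exact_mod_cast hq0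
    refine ⟨(starRingEnd ℂ l * τ)⁻¹ * l, mul_ne_zero (inv_ne_zero hclτ) hl, ?_⟩
    have hSS : (fun z : ℂ => l⁻¹ * z) '' ((fun z : ℂ => l * z) '' (V : Set ℂ)) = (V : Set ℂ) := by
      rw [image_image_mul, inv_mul_cancel₀ hl]
      simp
    have hLHS : (fun z : ℂ => (starRingEnd ℂ l * τ)⁻¹ * l * z) '' (V : Set ℂ)
        = (Submodule.span ℚ {(starRingEnd ℂ l * τ)⁻¹ * 1, (starRingEnd ℂ l * τ)⁻¹ * τ} : Set ℂ) := by
      rw [← image_image_mul, hV, image_mul_span]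
    have hRHS : (fun z : ℂ => starRingEnd ℂ z) '' (V : Set ℂ)
        = (Submodule.span ℚ {(starRingEnd ℂ l)⁻¹ * 1, (starRingEnd ℂ l)⁻¹ * starRingEnd ℂ τ} : Set ℂ) := by
      rw [← hSS, hV, conj_image_mul, image_conj_span, map_one, map_inv₀, ← image_mul_span]
    rw [hLHS, hRHS]
    refine congrArg (fun (p : Submodule ℚ ℂ) => (p : Set ℂ)) ?_
    apply span_pair_eq_span_pair
    · refine ⟨0, 1, ?_⟩
      simp only [Rat.smul_def, mul_one, Rat.cast_zero, zero_mul, zero_add, Rat.cast_one, one_mul]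
      rw [mul_inv, mul_assoc, inv_mul_cancel₀ hτ0, mul_one]
    · refine ⟨q, 0, ?_⟩
      simp only [Rat.smul_def, mul_one, Rat.cast_zero, zero_mul, add_zero]
      rw [mul_inv, ← hql]
      field_simp [hτ0]
      try ring
    · refine ⟨0, q⁻¹, ?_⟩
      simp only [Rat.smul_def, mul_one, Rat.cast_zero, zero_mul, zero_add]
      push_cast
      rw [mul_inv]
      field_simp [hτ0, hqc]
      linear_combination hql
    · refine ⟨1, 0, ?_⟩
      simp only [Rat.smul_def, mul_one, Rat.cast_zero, zero_mul, add_zero, Rat.cast_one, one_mul]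
      rw [mul_inv, mul_assoc, inv_mul_cancel₀ hτ0, mul_one]
end

section
/- Let τ ∈ C be transcendental with |τ|² = 2. Then the space V = Q·1 + Q·τ is homothetic to its complex conjugate, but V is NOT homothetic to any space Q·1 + Q·ω with |ω| = 1. Equivalently: there are no rationals a, b, c, d and transcendental ω with |ω| = 1 such that τ = (a + bω)/(c + dω) with (c,d) ≠ (0,0). -/
open Complex Polynomial

private lemma algQ_add {x y : ℂ} (hx : IsAlgebraic ℚ x) (hy : IsAlgebraic ℚ y) :
    IsAlgebraic ℚ (x + y) :=
  (isAlgebraic_iff_isIntegral.mpr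
    ((isAlgebraic_iff_isIntegral.mp hx).add (isAlgebraic_iff_isIntegral.mp hy)))

private lemma algQ_mul {x y : ℂ} (hx : IsAlgebraic ℚ x) (hy : IsAlgebraic ℚ y) :
    IsAlgebraic ℚ (x * y) :=
  (isAlgebraic_iff_isIntegral.mpr
    ((isAlgebraic_iff_isIntegral.mp hx).mul (isAlgebraic_iff_isIntegral.mp hy)))

private lemma algQ_ratCast (q : ℚ) : IsAlgebraic ℚ ((q : ℂ)) := by
  have := isAlgebraic_algebraMap (A := ℂ) q
  rwa [eq_ratCast (algebraMap ℚ ℂ)] at this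

private lemma rat_sq_eq (q r : ℚ) (h : q ^ 2 = 2 * r ^ 2) : q = 0 ∧ r = 0 := by
  by_cases hr : r = 0
  · refine ⟨?_, hr⟩
    have : q ^ 2 = 0 := by rw [h, hr]; ring
    exact pow_eq_zero_iff (n := 2) (by norm_num) |>.mp this
  · exfalso
    have h2 : ((|q / r| : ℚ) : ℝ) ^ 2 = 2 := by
      push_cast
      rw [_root_.sq_abs, div_pow, div_eq_iff (pow_ne_zero 2 (by exact_mod_cast hr))]
      have h' : ((q : ℝ)) ^ 2 = 2 * (r : ℝ) ^ 2 := by exact_mod_cast h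
      linarith [h']
    have h3 : Real.sqrt 2 = ((|q / r| : ℚ) : ℝ) := by
      rw [← h2, Real.sqrt_sq (by positivity)]
    exact irrational_sqrt_two (h3 ▸ Set.mem_range_self _)

/-- If `τ` is transcendental with `|τ|² = 2`, then `V = ℚ·1 + ℚ·τ` is homothetic to
its complex conjugate, but `V` is not homothetic to any space `ℚ·1 + ℚ·ω` with
`|ω| = 1`. -/
theorem transcendental_norm_two_space
    (τ : ℂ) (htr : Transcendental ℚ τ) (habs : ‖τ‖ ^ 2 = 2) :
    (∃ l : ℂ, l ≠ 0 ∧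
        (fun z : ℂ => l * z) '' (Submodule.span ℚ {1, τ} : Set ℂ) =
          (fun z : ℂ => starRingEnd ℂ z) '' (Submodule.span ℚ {1, τ} : Set ℂ)) ∧
    ¬ ∃ (l ω : ℂ), l ≠ 0 ∧ ‖ω‖ = 1 ∧
        (fun z : ℂ => l * z) '' (Submodule.span ℚ {1, τ} : Set ℂ) =
          (Submodule.span ℚ {1, ω} : Set ℂ) := by
  have hτ2 : Complex.normSq τ = 2 := by
    rw [← Complex.sq_norm, habs]
  have hτ0 : τ ≠ 0 := by
    intro h; rw [h] at hτ2; simp at hτ2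
  -- image of span under a ℚ-linear map
  have key : ∀ (f : ℂ →ₗ[ℚ] ℂ) (u v : ℂ),
      f '' (Submodule.span ℚ {u, v} : Set ℂ) =
        (Submodule.span ℚ ({f u, f v} : Set ℂ) : Set ℂ) := by
    intro f u v
    rw [← Submodule.map_coe, Submodule.map_span]
    simp [Set.image_insert_eq]
  -- conjugation as ℚ-linear map
  let g : ℂ →ₗ[ℚ] ℂ :=
    { toFun := fun z => starRingEnd ℂ z
      map_add' := fun x y => by simp
      map_smul' := fun q z => by
        simp [Rat.smul_def, map_mul, map_ratCast] }
  constructor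
  · refine ⟨starRingEnd ℂ τ, by simpa using hτ0, ?_⟩
    have h1 := key (LinearMap.mulLeft ℚ (starRingEnd ℂ τ)) 1 τ
    have h2 := key g 1 τ
    simp only [LinearMap.mulLeft_apply] at h1
    have hg : (fun z : ℂ => starRingEnd ℂ z) = ⇑g := rfl
    rw [show (fun z : ℂ => starRingEnd ℂ τ * z) = ⇑(LinearMap.mulLeft ℚ (starRingEnd ℂ τ)) by
      funext z; simp, h1, hg, h2]
    have hst : starRingEnd ℂ τ * τ = 2 := by
      rw [mul_comm, Complex.mul_conj, hτ2]; norm_num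
    have hspan : Submodule.span ℚ ({starRingEnd ℂ τ * 1, starRingEnd ℂ τ * τ} : Set ℂ)
        = Submodule.span ℚ ({g 1, g τ} : Set ℂ) := by
      have hg1 : g 1 = 1 := by simp [g]
      rw [mul_one, hst, hg1]
      apply le_antisymm
      · rw [Submodule.span_le]
        rintro z (rfl | rfl)
        · exact Submodule.subset_span (Set.mem_insert_of_mem _ rfl)
        · exact Submodule.mem_span_pair.mpr ⟨2, 0, by simp [Rat.smul_def]⟩
      · rw [Submodule.span_le]
        rintro z (rfl | rfl)
        · exact Submodule.mem_span_pair.mpr ⟨0, (1 : ℚ) / 2, by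
            simp [Rat.smul_def]⟩
        · exact Submodule.subset_span (Set.mem_insert _ _)
    rw [hspan]
  · rintro ⟨l, ω, hl0, hω, heq⟩
    have hωn : Complex.normSq ω = 1 := by rw [← Complex.sq_norm, hω]; norm_num
    have hωri : ω.re ^ 2 + ω.im ^ 2 = 1 := by
      rw [Complex.normSq_apply] at hωn; nlinarith [hωn]
    -- memberships
    have h1 : l ∈ (Submodule.span ℚ ({1, ω} : Set ℂ) : Set ℂ) := by
      rw [← heq]
      exact ⟨1, Submodule.subset_span (Set.mem_insert _ _), mul_one l⟩
    have h2 : l * τ ∈ (Submodule.span ℚ ({1, ω} : Set ℂ) : Set ℂ) := by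
      rw [← heq]
      exact ⟨τ, Submodule.subset_span (Set.mem_insert_of_mem _ rfl), rfl⟩
    rw [SetLike.mem_coe, Submodule.mem_span_pair] at h1 h2
    obtain ⟨c, d, hcd⟩ := h1
    obtain ⟨a, b, hab⟩ := h2
    simp only [Rat.smul_def, mul_one] at hcd hab
    -- norm equation
    have hE : (a : ℝ) ^ 2 + (b : ℝ) ^ 2 + 2 * a * b * ω.re
        = 2 * ((c : ℝ) ^ 2 + (d : ℝ) ^ 2 + 2 * c * d * ω.re) := by
      have e1 := congrArg Complex.normSq hab
      rw [map_mul, hτ2, ← hcd] at e1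
      simp only [Complex.normSq_apply, Complex.add_re, Complex.add_im,
        Complex.mul_re, Complex.mul_im, Complex.ratCast_re, Complex.ratCast_im] at e1
      nlinarith [e1, hωri]
    by_cases halg : IsAlgebraic ℚ ω
    · -- ω algebraic ⇒ τ algebraic, contradiction
      apply htr
      have hlal : IsAlgebraic ℚ l := by
        rw [← hcd]
        exact algQ_add (algQ_ratCast c) (algQ_mul (algQ_ratCast d) halg)
      have hlt : IsAlgebraic ℚ (l * τ) := by
        rw [← hab]
        exact algQ_add (algQ_ratCast a) (algQ_mul (algQ_ratCast b) halg)
      have : τ = l⁻¹ * (l * τ) := by field_simp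
      rw [this]
      exact algQ_mul hlal.inv hlt
    · -- ω transcendental
      have hq : (a : ℚ) * b = 2 * (c * d) := by
        by_contra hne
        apply halg
        obtain ⟨q, hqdef⟩ : ∃ q : ℚ,
            q = (2 * c ^ 2 + 2 * d ^ 2 - a ^ 2 - b ^ 2) / (2 * a * b - 4 * c * d) := ⟨_, rfl⟩
        have hden : (2 * a * b - 4 * c * d : ℚ) ≠ 0 := by
          intro h; apply hne; linarith [h]
        have hre : ω.re = (q : ℝ) := by
          rw [hqdef]
          push_cast
          rw [eq_div_iff (by
            rw [show (2:ℝ) * a * b - 4 * c * d = ((2 * a * b - 4 * c * d : ℚ) : ℝ) by push_cast; ring]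
            exact Rat.cast_ne_zero.mpr hden)]
          nlinarith [hE]
        have hconj : starRingEnd ℂ ω = 2 * (q : ℂ) - ω := by
          have h' := Complex.add_conj ω
          rw [hre] at h'
          push_cast at h'
          linear_combination h'
        have hroot : ω ^ 2 - 2 * (q : ℂ) * ω + 1 = 0 := by
          have hm := Complex.mul_conj ω
          rw [hconj, hωn] at hm
          push_cast at hm
          linear_combination -hm
        refine ⟨X ^ 2 - C (2 * q) * X + 1, ?_, ?_⟩
        · intro h
          have hco := congrArg (fun p => Polynomial.coeff p 2) h
          simp [coeff_one] at hco
        · simp only [map_add, map_sub, map_pow, map_mul, map_one, aeval_X, aeval_C]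
          simp only [eq_ratCast (algebraMap ℚ ℂ)]
          push_cast
          linear_combination hroot
      have hq2 : (a : ℚ) ^ 2 + b ^ 2 = 2 * (c ^ 2 + d ^ 2) := by
        have hqr : (a : ℝ) * b = 2 * ((c : ℝ) * d) := by exact_mod_cast hq
        have h5 : (a : ℝ) ^ 2 + (b : ℝ) ^ 2 = 2 * ((c:ℝ) ^ 2 + (d:ℝ) ^ 2) := by
          linear_combination hE - (2 * ω.re) * hqr
        exact_mod_cast h5
      have h5 : (a + b) ^ 2 = 2 * (c + d) ^ 2 := by linear_combination hq2 + 2 * hq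
      have h6 : (a - b) ^ 2 = 2 * (c - d) ^ 2 := by linear_combination hq2 - 2 * hq
      obtain ⟨-, h7⟩ := rat_sq_eq _ _ h5
      obtain ⟨-, h8⟩ := rat_sq_eq _ _ h6
      have hc : c = 0 := by linarith
      have hd : d = 0 := by linarith
      apply hl0
      rw [← hcd, hc, hd]
      simp
end

section
/- A space V = Q·1 + Q·τ (τ ∈ C \ R) admits a homothety onto itself with non-rational ratio, i.e. λV = V for some λ ∈ C \ Q, if and only if τ is an imaginary quadratic irrational, i.e. [Q(τ):Q] = 2. -/
private lemma mem_span_pair' (x y z : ℂ) :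
    z ∈ Submodule.span ℚ ({x, y} : Set ℂ) ↔ ∃ m n : ℚ, (m : ℂ) * x + (n : ℂ) * y = z := by
  rw [Submodule.mem_span_pair]
  simp [Rat.smul_def]

/-- A space `V = ℚ·1 + ℚ·τ` (`τ ∉ ℝ`) admits a self-homothety with non-rational
ratio (`λ V = V` for some `λ ∈ ℂ \ ℚ`) if and only if `τ` is an (imaginary)
quadratic irrational, i.e. `τ` satisfies a nontrivial quadratic equation over `ℚ`. -/
theorem CM_iff_quadratic
    (τ : ℂ) (hτ : ∀ r : ℝ, τ ≠ (r : ℂ)) :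
    (∃ l : ℂ, (∀ q : ℚ, l ≠ (q : ℂ)) ∧
        (fun z : ℂ => l * z) '' (Submodule.span ℚ {1, τ} : Set ℂ) =
          (Submodule.span ℚ {1, τ} : Set ℂ)) ↔
    (∃ a b c : ℚ, a ≠ 0 ∧ (a : ℂ) * τ ^ 2 + (b : ℂ) * τ + (c : ℂ) = 0) := by
  have hτ0 : τ ≠ 0 := fun h => hτ 0 (by simp [h])
  constructor
  · rintro ⟨l, hl, himg⟩
    have h1 : (1 : ℂ) ∈ (Submodule.span ℚ ({1, τ} : Set ℂ) : Set ℂ) :=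
      Submodule.subset_span (by simp)
    have hτm : τ ∈ (Submodule.span ℚ ({1, τ} : Set ℂ) : Set ℂ) :=
      Submodule.subset_span (by simp)
    have hlmem : l * 1 ∈ (Submodule.span ℚ ({1, τ} : Set ℂ) : Set ℂ) := by
      rw [← himg]; exact ⟨1, h1, rfl⟩
    have hlτ : l * τ ∈ (Submodule.span ℚ ({1, τ} : Set ℂ) : Set ℂ) := by
      rw [← himg]; exact ⟨τ, hτm, rfl⟩
    rw [SetLike.mem_coe, mem_span_pair'] at hlmem hlτ
    obtain ⟨p, q, hpq⟩ := hlmem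
    obtain ⟨r, s, hrs⟩ := hlτ
    have hq : q ≠ 0 := by
      rintro rfl
      exact hl p (by simpa using hpq.symm)
    refine ⟨q, p - s, -r, hq, ?_⟩
    have : ((p : ℂ) * 1 + q * τ) * τ = r * 1 + s * τ := by rw [hpq, hrs]; ring
    push_cast
    linear_combination τ * hpq - hrs
  · rintro ⟨a, b, c, ha, habc⟩
    have hτq : ∀ q : ℚ, τ ≠ (q : ℂ) := fun q h => hτ q (by simpa using h)
    have hc : c ≠ 0 := by
      rintro rfl
      have haC : (a : ℂ) ≠ 0 := by exact_mod_cast ha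
      have : (a : ℂ) * τ + b = 0 := by
        have := mul_left_cancel₀ hτ0 (by linear_combination habc : τ * ((a:ℂ) * τ + b) = τ * 0)
        simpa using this
      exact hτq (-b / a) (by push_cast; field_simp at this ⊢; linear_combination this)
    have haC : (a : ℂ) ≠ 0 := by exact_mod_cast ha
    have hcC : (c : ℂ) ≠ 0 := by exact_mod_cast hc
    refine ⟨τ, hτq, ?_⟩
    apply Set.Subset.antisymm
    · rintro _ ⟨v, hv, rfl⟩
      rw [SetLike.mem_coe, mem_span_pair'] at hv ⊢
      obtain ⟨m, n, rfl⟩ := hv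
      refine ⟨-n * c / a, m - n * b / a, ?_⟩
      push_cast
      linear_combination (norm := (field_simp; ring)) (-(n:ℂ)/(a:ℂ)) * habc
    · intro v hv
      rw [SetLike.mem_coe, mem_span_pair'] at hv
      obtain ⟨m, n, rfl⟩ := hv
      refine ⟨((n : ℂ) - m * b / c) * 1 + (-(m : ℂ) * a / c) * τ, ?_, ?_⟩
      · rw [SetLike.mem_coe, mem_span_pair']
        exact ⟨n - m * b / c, -m * a / c, by push_cast; ring⟩
      · show τ * _ = _
        linear_combination (norm := (field_simp; ring)) (-(m:ℂ)/(c:ℂ)) * habc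
end

section
/- Let d be a squarefree positive integer with d ≠ 1, 3, and let V = Q(√−d) ⊂ C. If v₀, v₁ ∈ V \ {0} and the argument of v₁/v₀ is a rational multiple of π but not an integer multiple of π, then v₁/v₀ is a rational multiple of √−d. In other words, up to equivalence every rational angle in Q(√−d) is of the form (v, √−d·v). -/
open Complex Polynomial

private lemma sf_eq (d m : ℕ) (hd : Squarefree d) (hm : Squarefree m) (r : ℚ)
    (h : r ^ 2 * (d : ℚ) = (m : ℚ)) : d = m := by
  have hd0 : d ≠ 0 := hd.ne_zero
  have hm0 : m ≠ 0 := hm.ne_zero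
  have hr : r ≠ 0 := by
    rintro rfl
    norm_num at h
    exact hm0 (by exact_mod_cast h.symm)
  have hden : (r.den : ℚ) ≠ 0 := by exact_mod_cast r.den_nz
  have h2 : ((r.num : ℚ)) ^ 2 * d = m * (r.den : ℚ) ^ 2 := by
    rw [← Rat.num_div_den r] at h
    field_simp at h
    linarith
  have h3 : (r.num : ℤ) ^ 2 * (d : ℤ) = (m : ℤ) * (r.den : ℤ) ^ 2 := by exact_mod_cast h2
  have keyN : r.num.natAbs ^ 2 * d = m * r.den ^ 2 := by
    have := congrArg Int.natAbs h3
    simpa [Int.natAbs_mul, Int.natAbs_pow] using this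
  have hnne : r.num.natAbs ≠ 0 := by
    simpa [Int.natAbs_eq_zero] using Rat.num_ne_zero.mpr hr
  have hdenne : r.den ≠ 0 := r.den_nz
  refine Nat.eq_of_factorization_eq hd0 hm0 (fun p => ?_)
  have hfd := (Nat.squarefree_iff_factorization_le_one hd0).mp hd p
  have hfm := (Nat.squarefree_iff_factorization_le_one hm0).mp hm p
  have hcongr := congrArg (fun x : ℕ => x.factorization p) keyN
  simp only [Nat.factorization_mul (pow_ne_zero 2 hnne) hd0,
    Nat.factorization_mul hm0 (pow_ne_zero 2 hdenne), Nat.factorization_pow,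
    Finsupp.add_apply, Finsupp.smul_apply, smul_eq_mul] at hcongr
  omega

/-- Let `d` be a squarefree positive integer, `d ≠ 1, 3`, and let
`V = ℚ(√−d) = ℚ·1 + ℚ·(√d·i) ⊂ ℂ`.  If `v₀, v₁ ∈ V` are nonzero and the argument
of `v₁/v₀` is a rational multiple of `π` but not an integer multiple of `π`,
then `v₁/v₀` is a rational multiple of `√−d`. -/
theorem rational_angles_in_imaginary_quadratic_field
    (d : ℕ) (hd : Squarefree d) (hdpos : 0 < d) (hd1 : d ≠ 1) (hd3 : d ≠ 3)
    (v₀ v₁ : ℂ)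
    (hv₀ : v₀ ∈ Submodule.span ℚ ({1, (Real.sqrt d : ℂ) * Complex.I} : Set ℂ))
    (hv₁ : v₁ ∈ Submodule.span ℚ ({1, (Real.sqrt d : ℂ) * Complex.I} : Set ℂ))
    (h₀ : v₀ ≠ 0) (h₁ : v₁ ≠ 0)
    (hrat : ∃ q : ℚ, Complex.arg (v₁ / v₀) = (q : ℝ) * Real.pi)
    (hnint : ∀ k : ℤ, Complex.arg (v₁ / v₀) ≠ (k : ℝ) * Real.pi) :
    ∃ q : ℚ, v₁ / v₀ = (q : ℂ) * ((Real.sqrt d : ℂ) * Complex.I) := by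
  have hdQ : (0:ℚ) < (d:ℚ) := by exact_mod_cast hdpos
  set s : ℝ := Real.sqrt d with hs
  have hsposR : 0 < s := Real.sqrt_pos.mpr (by exact_mod_cast hdpos)
  have hs2 : (s:ℂ) * (s:ℂ) = (d:ℂ) := by
    have : s * s = (d:ℝ) := Real.mul_self_sqrt (by positivity)
    exact_mod_cast this
  have hu : ((s:ℂ) * I) * ((s:ℂ) * I) = -(d:ℂ) := by
    calc ((s:ℂ) * I) * ((s:ℂ) * I) = ((s:ℂ)*(s:ℂ)) * (I*I) := by ring
    _ = -(d:ℂ) := by rw [hs2, Complex.I_mul_I]; ring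
  clear_value s
  obtain ⟨a₀, b₀, h0⟩ := Submodule.mem_span_pair.mp hv₀
  obtain ⟨a₁, b₁, h1⟩ := Submodule.mem_span_pair.mp hv₁
  have hv0e : v₀ = (a₀:ℂ) + (b₀:ℂ) * ((s:ℂ) * I) := by
    rw [← h0]; simp [Rat.smul_def]
  have hv1e : v₁ = (a₁:ℂ) + (b₁:ℂ) * ((s:ℂ) * I) := by
    rw [← h1]; simp [Rat.smul_def]
  have hnorm : ∀ a b : ℚ, ¬(a = 0 ∧ b = 0) → a^2 + b^2 * d ≠ 0 := by
    intro a b hab h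
    have ha2 : a^2 = 0 := le_antisymm (by nlinarith [sq_nonneg b]) (sq_nonneg a)
    have hb2 : b^2 = 0 := by
      have : b^2 * d = 0 := by nlinarith
      have hd0 : (d:ℚ) ≠ 0 := ne_of_gt hdQ
      exact (mul_eq_zero.mp this).resolve_right hd0
    exact hab ⟨pow_eq_zero_iff two_ne_zero |>.mp ha2, pow_eq_zero_iff two_ne_zero |>.mp hb2⟩
  have hab₀ : ¬(a₀ = 0 ∧ b₀ = 0) := by
    rintro ⟨rfl, rfl⟩; apply h₀; rw [hv0e]; simp
  have hD₀ : a₀^2 + b₀^2 * d ≠ (0:ℚ) := hnorm _ _ hab₀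
  set A : ℚ := (a₁*a₀ + b₁*b₀*d)/(a₀^2 + b₀^2 * d) with hAdef
  set B : ℚ := (b₁*a₀ - a₁*b₀)/(a₀^2 + b₀^2 * d) with hBdef
  clear_value A B
  have hz : v₁ / v₀ = (A:ℂ) + (B:ℂ) * ((s:ℂ) * I) := by
    rw [div_eq_iff h₀, hv0e, hv1e, hAdef, hBdef]
    have hD₀C : ((a₀:ℂ))^2 + (b₀:ℂ)^2 * (d:ℂ) ≠ 0 := by exact_mod_cast hD₀
    push_cast
    field_simp
    linear_combination (-((b₁:ℂ)*(a₀:ℂ) + -((a₁:ℂ)*(b₀:ℂ))) * (b₀:ℂ)) * hu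
  set z : ℂ := v₁ / v₀ with hzdef
  have hz0 : z ≠ 0 := hzdef ▸ div_ne_zero h₁ h₀
  clear_value z
  have habz : ¬(A = 0 ∧ B = 0) := by
    rintro ⟨hA, hB⟩; apply hz0; rw [hz, hA, hB]; simp
  have hN : A^2 + B^2 * d ≠ (0:ℚ) := hnorm _ _ habz
  set P : ℚ := (A^2 - B^2*d)/(A^2 + B^2 * d) with hPdef
  set Q : ℚ := 2*A*B/(A^2 + B^2 * d) with hQdef
  clear_value P Q
  have hPQ : P^2 + Q^2 * d = 1 := by
    rw [hPdef, hQdef]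
    field_simp
    ring
  have hconjz : (starRingEnd ℂ) z = (A:ℂ) - (B:ℂ) * ((s:ℂ) * I) := by
    rw [hz]
    simp [map_add, map_mul, Complex.conj_I, Complex.conj_ofReal]
    ring
  have hconjz0 : (starRingEnd ℂ) z ≠ 0 := by
    intro h
    apply hz0
    have := congrArg (starRingEnd ℂ) h
    simpa using this
  set w : ℂ := z / (starRingEnd ℂ) z with hwdef
  clear_value w
  have hw : w = (P:ℂ) + (Q:ℂ) * ((s:ℂ) * I) := by
    rw [hwdef, div_eq_iff hconjz0, hconjz, hPdef, hQdef]
    have hNC : ((A:ℂ))^2 + (B:ℂ)^2 * (d:ℂ) ≠ 0 := by exact_mod_cast hN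
    rw [hz]
    push_cast
    field_simp
    linear_combination (2*(A:ℂ)*(B:ℂ)^2) * hu
  -- w is a root of unity
  obtain ⟨q, hq⟩ := hrat
  have hwexp : w = Complex.exp (2 * (Complex.arg z) * I) := by
    have h1' : (↑‖z‖ : ℂ) * Complex.exp (Complex.arg z * I) = z :=
      Complex.norm_mul_exp_arg_mul_I z
    have h2' : (starRingEnd ℂ) ((↑‖z‖ : ℂ) * Complex.exp (Complex.arg z * I))
        = (↑‖z‖ : ℂ) * Complex.exp (-(Complex.arg z) * I) := by
      rw [map_mul, ← Complex.exp_conj]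
      congr 1
      · exact Complex.conj_ofReal _
      · congr 1
        rw [map_mul, Complex.conj_I, Complex.conj_ofReal]
        ring
    have habs0 : ((‖z‖ : ℝ) : ℂ) ≠ 0 := by
      simp only [ne_eq, Complex.ofReal_eq_zero]
      exact norm_ne_zero_iff.mpr hz0
    have hstep : w = ((↑‖z‖ : ℂ) * Complex.exp (Complex.arg z * I)) /
        ((starRingEnd ℂ) ((↑‖z‖ : ℂ) * Complex.exp (Complex.arg z * I))) := by
      rw [hwdef, h1']
    rw [hstep, h2', mul_div_mul_left _ _ habs0, ← Complex.exp_sub]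
    congr 1
    ring
  have hargz : Complex.arg z = (q:ℝ) * Real.pi := hq
  set n : ℕ := q.den with hn
  have hnpos : 0 < n := q.pos
  have hwn : w ^ n = 1 := by
    rw [hwexp, ← Complex.exp_nat_mul]
    have : (n : ℂ) * (2 * (Complex.arg z) * I) = (q.num : ℂ) * (2 * Real.pi * I) := by
      rw [hargz]
      push_cast
      have hqdC : (q:ℂ) * ((q.den:ℕ):ℂ) = ((q.num:ℤ):ℂ) := by exact_mod_cast Rat.mul_den_eq_num q
      linear_combination (2 * (Real.pi:ℂ) * I) * hqdC
    rw [this]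
    exact_mod_cast Complex.exp_int_mul_two_pi_mul_I q.num
  -- w and its inverse are integral over ℤ
  have hw0 : w ≠ 0 := by
    intro h
    rw [h, zero_pow hnpos.ne'] at hwn
    exact zero_ne_one hwn
  have hwint : IsIntegral ℤ w := by
    refine ⟨X ^ n - C 1, Polynomial.monic_X_pow_sub_C 1 hnpos.ne', ?_⟩
    simp only [Polynomial.eval₂_sub, Polynomial.eval₂_X_pow, Polynomial.eval₂_C, map_one,
      Polynomial.eval₂_one, hwn, sub_self]
  have hwinv : w⁻¹ = w ^ (n - 1) := by
    apply inv_eq_of_mul_eq_one_right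
    have h' : w * w ^ (n-1) = w ^ (n - 1 + 1) := (pow_succ' w (n-1)).symm
    rw [h', Nat.sub_add_cancel hnpos]
    exact hwn
  have htint : IsIntegral ℤ (w + w⁻¹) := hwint.add (by rw [hwinv]; exact hwint.pow _)
  have hwinv2 : w⁻¹ = (P:ℂ) - (Q:ℂ) * ((s:ℂ) * I) := by
    apply inv_eq_of_mul_eq_one_right
    rw [hw]
    have : ((P:ℚ):ℂ)^2 + ((Q:ℚ):ℂ)^2 * (d:ℂ) = 1 := by exact_mod_cast hPQ
    linear_combination this + (-(Q:ℂ)^2) * hu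
  have hsum : w + w⁻¹ = (((2*P : ℚ)):ℂ) := by
    rw [hwinv2, hw]
    push_cast
    ring
  have hPint : IsIntegral ℤ (2*P : ℚ) := by
    rw [hsum] at htint
    have : (algebraMap ℚ ℂ) (2*P) = (((2*P : ℚ)):ℂ) := by
      simp
    rw [← this] at htint
    exact (isIntegral_algebraMap_iff (algebraMap ℚ ℂ).injective).mp htint
  obtain ⟨k, hk⟩ := IsIntegrallyClosed.isIntegral_iff.mp hPint
  have hk' : (k:ℚ) = 2*P := by exact_mod_cast hk
  have hP2 : P^2 ≤ 1 := by nlinarith [sq_nonneg Q, hdQ.le]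
  have hkbound : k^2 ≤ 4 := by
    have : ((k:ℚ))^2 ≤ 4 := by rw [hk']; nlinarith
    exact_mod_cast this
  obtain ⟨hk2a, hk2b⟩ : -2 ≤ k ∧ k ≤ 2 :=
    abs_le_of_sq_le_sq' (by linarith : k^2 ≤ 2^2) (by norm_num)
  -- auxiliary: A ≠ 0 and B ≠ 0 facts derivable when needed
  interval_cases k
  · -- k = -2 : P = -1, so A = 0, z = B √d i
    have hPval : P = -1 := by push_cast at hk'; linarith
    have hA : A = 0 := by
      rw [hPdef] at hPval
      rw [div_eq_iff hN] at hPval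
      have hA2 : A^2 = 0 := by linarith
      exact pow_eq_zero_iff two_ne_zero |>.mp hA2
    exact ⟨B, by rw [hz, hA]; push_cast; ring⟩
  · -- k = -1 : P = -1/2, Q² d = 3/4, contradiction
    exfalso
    have hPval : P = -1/2 := by
      push_cast at hk'
      linarith
    have hQd : (2*Q)^2 * (d:ℚ) = 3 := by rw [hPval] at hPQ; linear_combination 4 * hPQ
    exact hd3 (sf_eq d 3 hd Nat.prime_three.squarefree (2*Q) (by exact_mod_cast hQd))
  · -- k = 0 : P = 0, Q² d = 1, contradiction
    exfalso
    have hPval : P = 0 := by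
      push_cast at hk'
      linarith
    have hQd : Q^2 * (d:ℚ) = 1 := by rw [hPval] at hPQ; linear_combination hPQ
    exact hd1 (sf_eq d 1 hd (by norm_num) Q (by exact_mod_cast hQd))
  · -- k = 1 : P = 1/2, contradiction
    exfalso
    have hPval : P = 1/2 := by
      push_cast at hk'
      linarith
    have hQd : (2*Q)^2 * (d:ℚ) = 3 := by rw [hPval] at hPQ; linear_combination 4 * hPQ
    exact hd3 (sf_eq d 3 hd Nat.prime_three.squarefree (2*Q) (by exact_mod_cast hQd))
  · -- k = 2 : P = 1, so B = 0, z is real: contradiction with hnint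
    exfalso
    have hPval : P = 1 := by push_cast at hk'; linarith
    have hB : B = 0 := by
      rw [hPdef] at hPval
      rw [div_eq_iff hN] at hPval
      have hB2 : B^2 * d = 0 := by linarith
      have hB2' : B^2 = 0 := (mul_eq_zero.mp hB2).resolve_right (ne_of_gt hdQ)
      exact pow_eq_zero_iff two_ne_zero |>.mp hB2'
    have hzA : z = ((A : ℝ) : ℂ) := by rw [hz, hB]; push_cast; ring
    have hA0 : (A:ℝ) ≠ 0 := by
      intro h
      apply hz0
      rw [hzA, h]
      simp
    rcases lt_or_gt_of_ne hA0 with hAneg | hAA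
    · exact hnint 1 (by rw [hzA, Complex.arg_ofReal_of_neg hAneg]; push_cast; ring)
    · exact hnint 0 (by rw [hzA, Complex.arg_ofReal_of_nonneg hAA.le]; push_cast; ring)
end

section
/- Every rational angle in Q(i) is, up to equivalence, of the form (v, λv) with v ∈ Q(i) \ {0} and λ ∈ {i, i+1, i−1}. That is, if v₀, v₁ ∈ Q(i) \ {0} and arg(v₁/v₀) ∈ πQ \ πZ, then v₁/v₀ lies on one of the lines R·i, R·(1+i), R·(1−i). -/
open Complex

private lemma gauss_root_key (c d : ℚ) (n : ℕ) (hn : 0 < n)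
    (hw : ((c:ℂ) + (d:ℂ) * I)^n = 1) :
    (c = 1 ∧ d = 0) ∨ (c = -1 ∧ d = 0) ∨ (c = 0 ∧ d = 1) ∨ (c = 0 ∧ d = -1) := by
  set w : ℂ := (c:ℂ) + (d:ℂ) * I with hwdef
  have hns : Complex.normSq w = ((c^2 + d^2 : ℚ) : ℝ) := by
    simp [Complex.normSq_apply, hwdef]
    push_cast
    ring_nf
  have hnorm1 : ((c^2 + d^2 : ℚ) : ℝ) ^ n = 1 := by
    rw [← hns, ← map_pow, hw]; simp
  have hcd : c^2 + d^2 = 1 := by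
    have h0 : (0:ℚ) ≤ c^2 + d^2 := by positivity
    have hq : (c^2 + d^2 : ℚ) ^ n = 1 := by exact_mod_cast hnorm1
    rcases lt_trichotomy (c^2 + d^2) 1 with h | h | h
    · exfalso; have := pow_lt_one₀ h0 h hn.ne'; rw [hq] at this; exact lt_irrefl 1 this
    · exact h
    · exfalso; have := one_lt_pow₀ h hn.ne'; rw [hq] at this; exact lt_irrefl 1 this
  have hw' : ((c:ℂ) - (d:ℂ) * I)^n = 1 := by
    have := congrArg (starRingEnd ℂ) hw
    simpa [map_pow, hwdef, sub_eq_add_neg] using this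
  have hwint : IsIntegral ℤ w := IsIntegral.of_pow hn (by rw [hw]; exact isIntegral_one)
  have hw'int : IsIntegral ℤ ((c:ℂ) - (d:ℂ) * I) :=
    IsIntegral.of_pow hn (by rw [hw']; exact isIntegral_one)
  have hIint : IsIntegral ℤ (I : ℂ) :=
    IsIntegral.of_pow (by norm_num : 0 < 4) (by rw [Complex.I_pow_four]; exact isIntegral_one)
  have h2c : IsIntegral ℤ (((2*c : ℚ)) : ℂ) := by
    have : (((2*c : ℚ)) : ℂ) = w + ((c:ℂ) - (d:ℂ) * I) := by push_cast [hwdef]; ring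
    rw [this]; exact hwint.add hw'int
  have h2d : IsIntegral ℤ (((2*d : ℚ)) : ℂ) := by
    have : (((2*d : ℚ)) : ℂ) = (w - ((c:ℂ) - (d:ℂ) * I)) * (-I) := by
      push_cast [hwdef]
      have : (I:ℂ)^2 = -1 := Complex.I_sq
      linear_combination (2*(d:ℂ)) * this
    rw [this]; exact (hwint.sub hw'int).mul hIint.neg
  have hQ : ∀ x : ℚ, IsIntegral ℤ ((x:ℂ)) → ∃ m : ℤ, (m:ℚ) = x := by
    intro x h
    apply IsIntegrallyClosed.isIntegral_iff.mp
    rw [← isIntegral_algebraMap_iff (algebraMap ℚ ℂ).injective]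
    rwa [eq_ratCast (algebraMap ℚ ℂ)]
  obtain ⟨m, hm⟩ := hQ _ h2c
  obtain ⟨m', hm'⟩ := hQ _ h2d
  have hmm : m^2 + m'^2 = 4 := by
    have : (m:ℚ)^2 + (m':ℚ)^2 = 4 := by rw [hm, hm']; nlinarith
    exact_mod_cast this
  have hb1 : -2 ≤ m ∧ m ≤ 2 := by constructor <;> nlinarith
  have hb2 : -2 ≤ m' ∧ m' ≤ 2 := by constructor <;> nlinarith
  obtain ⟨h1, h2⟩ := hb1; obtain ⟨h3, h4⟩ := hb2
  have hc : c = m / 2 := by field_simp; linarith [hm]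
  have hd : d = m' / 2 := by field_simp; linarith [hm']
  interval_cases m <;> interval_cases m' <;>
    first | (exfalso; omega) | (norm_num at hc hd; simp [hc, hd])



/-- Every rational angle in `ℚ(i)` is, up to equivalence, of the form `(v, λv)` with
`λ ∈ {i, i+1, i−1}`: if `v₀, v₁ ∈ ℚ(i)` are nonzero and `arg(v₁/v₀)` is a rational
multiple of `π` but not an integer multiple of `π`, then `v₁/v₀` lies on one of the
lines `ℝ·i`, `ℝ·(1+i)`, `ℝ·(1−i)`. -/
theorem rational_angles_in_gaussian_field
    (v₀ v₁ : ℂ)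
    (hv₀ : ∃ a b : ℚ, v₀ = (a : ℂ) + (b : ℂ) * Complex.I)
    (hv₁ : ∃ a b : ℚ, v₁ = (a : ℂ) + (b : ℂ) * Complex.I)
    (h₀ : v₀ ≠ 0) (h₁ : v₁ ≠ 0)
    (hrat : ∃ q : ℚ, Complex.arg (v₁ / v₀) = (q : ℝ) * Real.pi)
    (hnint : ∀ k : ℤ, Complex.arg (v₁ / v₀) ≠ (k : ℝ) * Real.pi) :
    ∃ r : ℝ, v₁ / v₀ = (r : ℂ) * Complex.I ∨
      v₁ / v₀ = (r : ℂ) * (1 + Complex.I) ∨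
      v₁ / v₀ = (r : ℂ) * (1 - Complex.I) := by
  obtain ⟨a₀, b₀, hv0⟩ := hv₀
  obtain ⟨a₁, b₁, hv1⟩ := hv₁
  set z : ℂ := v₁ / v₀ with hzdef
  have hz0 : z ≠ 0 := div_ne_zero h₁ h₀
  have hs0 : a₀^2 + b₀^2 ≠ 0 := by
    intro h
    apply h₀
    have ha : a₀ = 0 := by nlinarith [sq_nonneg a₀, sq_nonneg b₀]
    have hb : b₀ = 0 := by nlinarith [sq_nonneg a₀, sq_nonneg b₀]
    simp [hv0, ha, hb]
  obtain ⟨a, b, hz⟩ : ∃ a b : ℚ, z = (a:ℂ) + (b:ℂ) * I := by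
    refine ⟨(a₁*a₀ + b₁*b₀)/(a₀^2 + b₀^2), (b₁*a₀ - a₁*b₀)/(a₀^2 + b₀^2), ?_⟩
    have hsC : ((a₀:ℂ)^2 + (b₀:ℂ)^2) ≠ 0 := by
      have : ((a₀^2 + b₀^2 : ℚ) : ℂ) ≠ 0 := by exact_mod_cast hs0
      push_cast at this; convert this using 1
    rw [hv0] at h₀
    rw [hzdef, hv0, hv1, div_eq_iff h₀]
    push_cast
    field_simp
    linear_combination ((((b₁:ℂ)*a₀ - a₁*b₀)*b₀) + 2*(a₁:ℂ)*b₀^2 - 2*(b₁:ℂ)*a₀*b₀) *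
      Complex.I_sq
  -- the conjugate of `z`
  have hconj : (starRingEnd ℂ) z = (a:ℂ) - (b:ℂ) * I := by
    rw [hz]; simp [map_add, map_mul, Complex.conj_I]; ring
  have hconj0 : (starRingEnd ℂ) z ≠ 0 := by
    simpa using hz0
  -- `z / conj z = exp (2 * arg z * I)`
  have hwexp : z / (starRingEnd ℂ) z = Complex.exp (2 * z.arg * I) := by
    have hA : (‖z‖ : ℂ) ≠ 0 := by
      simpa using (norm_ne_zero_iff.mpr hz0)
    have h1 := Complex.norm_mul_exp_arg_mul_I z
    have h2 : (starRingEnd ℂ) z = (‖z‖ : ℂ) * Complex.exp (-(z.arg : ℂ) * I) := by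
      conv_lhs => rw [← h1]
      rw [map_mul, ← Complex.exp_conj]
      simp [Complex.conj_ofReal, Complex.conj_I]
    rw [div_eq_iff hconj0, h2]
    have hE : Complex.exp (2 * (z.arg:ℂ) * I) * Complex.exp (-(z.arg:ℂ) * I)
        = Complex.exp ((z.arg:ℂ) * I) := by
      rw [← Complex.exp_add]; congr 1; ring
    linear_combination (-(‖z‖ : ℂ)) * hE - h1
  -- `z / conj z` is a root of unity
  obtain ⟨q, hq⟩ := hrat
  have hqc : (z.arg : ℂ) = (q:ℂ) * (Real.pi:ℂ) := by
    rw [hq]; push_cast; ring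
  have hden : (0:ℕ) < q.den := q.pos
  have hpow : (z / (starRingEnd ℂ) z) ^ q.den = 1 := by
    rw [hwexp, ← Complex.exp_nat_mul]
    have hnum : ((q:ℂ)) * ((q.den : ℂ)) = (q.num : ℂ) := by
      have := Rat.mul_den_eq_num q
      exact_mod_cast congrArg (Rat.cast : ℚ → ℂ) this
    have harg : (q.den : ℂ) * (2 * (z.arg : ℂ) * I) = (q.num : ℂ) * (2 * (Real.pi:ℂ) * I) := by
      rw [hqc]
      linear_combination (2*(Real.pi:ℂ)*I) * hnum
    rw [harg]
    exact_mod_cast Complex.exp_int_mul_two_pi_mul_I q.num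
  -- the components of `z / conj z`
  have hsz : a^2 + b^2 ≠ 0 := by
    intro h
    apply hz0
    have ha : a = 0 := by nlinarith [sq_nonneg a, sq_nonneg b]
    have hb : b = 0 := by nlinarith [sq_nonneg a, sq_nonneg b]
    simp [hz, ha, hb]
  set c : ℚ := (a^2 - b^2)/(a^2 + b^2) with hcdef
  set d : ℚ := (2*a*b)/(a^2 + b^2) with hddef
  have hwc : z / (starRingEnd ℂ) z = (c:ℂ) + (d:ℂ) * I := by
    rw [div_eq_iff hconj0, hconj, hz, hcdef, hddef]
    have hsC : ((a:ℂ)^2 + (b:ℂ)^2) ≠ 0 := by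
      have : ((a^2 + b^2 : ℚ) : ℂ) ≠ 0 := by exact_mod_cast hsz
      push_cast at this; convert this using 1
    push_cast
    field_simp
    linear_combination (2*(a:ℂ)*(b:ℂ)^2) * Complex.I_sq
  rw [hwc] at hpow
  rcases gauss_root_key c d q.den hden hpow with ⟨hc, hd⟩ | ⟨hc, hd⟩ | ⟨hc, hd⟩ | ⟨hc, hd⟩
  · -- c = 1 : z is real, contradiction
    exfalso
    have hb : b = 0 := by
      rw [hcdef] at hc
      field_simp at hc
      nlinarith
    have hzre : z = ((a:ℝ):ℂ) := by rw [hz, hb]; push_cast; ring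
    have ha0 : (a:ℝ) ≠ 0 := by
      intro h; apply hz0; rw [hzre, h]; simp
    rcases lt_or_gt_of_ne ha0 with h | h
    · exact hnint 1 (by rw [hzre, Complex.arg_ofReal_of_neg h]; simp)
    · exact hnint 0 (by rw [hzre, Complex.arg_ofReal_of_nonneg h.le]; simp)
  · -- c = -1 : z purely imaginary
    have ha : a = 0 := by
      rw [hcdef] at hc
      field_simp at hc
      nlinarith
    exact ⟨(b:ℝ), Or.inl (by rw [hz, ha]; push_cast; ring)⟩
  · -- d = 1 : a = b
    have hab : a = b := by
      rw [hddef] at hd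
      field_simp at hd
      nlinarith
    exact ⟨(a:ℝ), Or.inr (Or.inl (by rw [hz, ← hab]; push_cast; ring))⟩
  · -- d = -1 : a = -b
    have hab : a = -b := by
      rw [hddef] at hd
      field_simp at hd
      nlinarith
    exact ⟨(a:ℝ), Or.inr (Or.inr (by rw [hz, hab]; push_cast; ring))⟩
end

section
/- Let V = Q·1 + Q·τ with τ ∈ C \ R, τ algebraic, and suppose [Q(τ):Q] > 2 (so V is not CM). Then V contains only finitely many rational angles: there are only finitely many pairs of lines through 0, each containing a nonzero point of V, forming an angle that is a rational multiple of π. -/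
open Complex

lemma indep_real (τ : ℂ) (hτim : τ.im ≠ 0) (x y : ℝ) (h : (x:ℂ) + y*τ = 0) :
    x = 0 ∧ y = 0 := by
  have him : ((x:ℂ) + y*τ).im = 0 := by rw [h]; simp
  simp [Complex.add_im, Complex.mul_im] at him
  rcases him with him | him
  · have hre : ((x:ℂ) + y*τ).re = 0 := by rw [h]; simp
    simp [Complex.add_re, Complex.mul_re, him] at hre
    exact ⟨hre, him⟩
  · exact absurd him hτim

lemma indep_rat (τ : ℂ) (hτim : τ.im ≠ 0) (a b : ℚ) (h : (a:ℂ) + b*τ = 0) :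
    a = 0 ∧ b = 0 := by
  have := indep_real τ hτim a b (by push_cast; exact_mod_cast h)
  exact ⟨by exact_mod_cast this.1, by exact_mod_cast this.2⟩

lemma span_eq_iff (τ : ℂ) (hτim : τ.im ≠ 0) (a b c d : ℚ)
    (hab : ¬(a = 0 ∧ b = 0)) (hcd : ¬(c = 0 ∧ d = 0)) :
    Submodule.span ℝ ({(a:ℂ) + b*τ} : Set ℂ) = Submodule.span ℝ ({(c:ℂ) + d*τ} : Set ℂ)
      ↔ a*d = b*c := by
  constructor
  · intro hsp
    have hmem : (c:ℂ) + d*τ ∈ Submodule.span ℝ ({(a:ℂ) + b*τ} : Set ℂ) := by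
      rw [hsp]; exact Submodule.mem_span_singleton_self _
    rw [Submodule.mem_span_singleton] at hmem
    obtain ⟨t, ht⟩ := hmem
    rw [Complex.real_smul] at ht
    have key : ((t*a - c : ℝ):ℂ) + ((t*b - d : ℝ):ℂ)*τ = 0 := by
      push_cast
      linear_combination ht
    obtain ⟨h1, h2⟩ := indep_real τ hτim _ _ key
    have : (a*d : ℝ) = (b*c : ℝ) := by
      push_cast
      linear_combination (b:ℝ)*h1 - (a:ℝ)*h2
    exact_mod_cast this
  · intro hrel
    rcases Classical.em (a = 0) with ha | ha
    · have hb : b ≠ 0 := fun h => hab ⟨ha, h⟩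
      have hc : c = 0 := by
        have : b*c = 0 := by rw [← hrel, ha]; ring
        exact (mul_eq_zero.1 this).resolve_left hb
      have hd : d ≠ 0 := fun h => hcd ⟨hc, h⟩
      have ht : ((d/b : ℚ):ℝ) • ((a:ℂ) + b*τ) = (c:ℂ) + d*τ := by
        rw [Complex.real_smul, ha, hc]; push_cast
        have hbc : (b:ℂ) ≠ 0 := by exact_mod_cast hb
        field_simp
        ring
      rw [← ht]
      have hne : ((d/b : ℚ):ℝ) ≠ 0 := by
        simp [div_eq_zero_iff, hd, hb]
      exact (Submodule.span_singleton_smul_eq (IsUnit.mk0 _ hne) _).symm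
    · have hc : c ≠ 0 := by
        intro hc
        have : a*d = 0 := by rw [hrel, hc]; ring
        exact hcd ⟨hc, (mul_eq_zero.1 this).resolve_left ha⟩
      have ht : ((c/a : ℚ):ℝ) • ((a:ℂ) + b*τ) = (c:ℂ) + d*τ := by
        rw [Complex.real_smul]; push_cast
        have hac : (a:ℂ) ≠ 0 := by exact_mod_cast ha
        field_simp
        have : (a:ℂ)*d = b*c := by exact_mod_cast hrel
        linear_combination -τ*this
      rw [← ht]
      have hne : ((c/a : ℚ):ℝ) ≠ 0 := by
        simp [div_eq_zero_iff, hc, ha]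
      exact (Submodule.span_singleton_smul_eq (IsUnit.mk0 _ hne) _).symm

lemma core_lemma (a₁ a₂ a₃ b₁ b₂ b₃ c₁ c₂ c₃ d₁ d₂ d₃ : ℚ)
    (hab12 : a₁*b₂ - a₂*b₁ ≠ 0) (hab13 : a₁*b₃ - a₃*b₁ ≠ 0) (hab23 : a₂*b₃ - a₃*b₂ ≠ 0)
    (hcd12 : c₁*d₂ - c₂*d₁ ≠ 0) (hcd13 : c₁*d₃ - c₃*d₁ ≠ 0) (hcd23 : c₂*d₃ - c₃*d₂ ≠ 0)
    {α β γ δ : ℂ} (hα : α ≠ 0)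
    (h1 : (a₁:ℂ)*c₁*α + (a₁:ℂ)*d₁*β + (b₁:ℂ)*c₁*γ + (b₁:ℂ)*d₁*δ = 0)
    (h2 : (a₂:ℂ)*c₂*α + (a₂:ℂ)*d₂*β + (b₂:ℂ)*c₂*γ + (b₂:ℂ)*d₂*δ = 0)
    (h3 : (a₃:ℂ)*c₃*α + (a₃:ℂ)*d₃*β + (b₃:ℂ)*c₃*γ + (b₃:ℂ)*d₃*δ = 0) :
    ∃ s t : ℚ, β + γ = (s:ℂ)*α ∧ δ = (t:ℂ)*α := by
  set w1 : ℚ := b₂*d₁*((a₁*b₃-a₃*b₁)*(c₂*d₃-c₃*d₂)) - b₁*d₂*((a₂*b₃-a₃*b₂)*(c₁*d₃-c₃*d₁)) with hw1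
  set w2 : ℚ := -(b₂*c₁*((a₁*b₃-a₃*b₁)*(c₂*d₃-c₃*d₂))) + b₁*c₂*((a₂*b₃-a₃*b₂)*(c₁*d₃-c₃*d₁)) with hw2
  set w3 : ℚ := -(a₂*d₁*((a₁*b₃-a₃*b₁)*(c₂*d₃-c₃*d₂))) + a₁*d₂*((a₂*b₃-a₃*b₂)*(c₁*d₃-c₃*d₁)) with hw3
  set w4 : ℚ := a₂*c₁*((a₁*b₃-a₃*b₁)*(c₂*d₃-c₃*d₂)) - a₁*c₂*((a₂*b₃-a₃*b₂)*(c₁*d₃-c₃*d₁)) with hw4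
  have k2 : α*(w2:ℂ) = β*(w1:ℂ) := by
    rw [hw1, hw2]; push_cast
    linear_combination (-(b₂:ℂ)*b₃*((c₂:ℂ)*d₃-(c₃:ℂ)*d₂))*h1 + ((b₁:ℂ)*b₃*((c₁:ℂ)*d₃-(c₃:ℂ)*d₁))*h2
      + (-(b₁:ℂ)*b₂*((c₁:ℂ)*d₂-(c₂:ℂ)*d₁))*h3
  have k3 : α*(w3:ℂ) = γ*(w1:ℂ) := by
    rw [hw1, hw3]; push_cast
    linear_combination ((d₂:ℂ)*d₃*((a₂:ℂ)*b₃-(a₃:ℂ)*b₂))*h1 + (-(d₁:ℂ)*d₃*((a₁:ℂ)*b₃-(a₃:ℂ)*b₁))*h2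
      + ((d₁:ℂ)*d₂*((a₁:ℂ)*b₂-(a₂:ℂ)*b₁))*h3
  have k4 : α*(w4:ℂ) = δ*(w1:ℂ) := by
    rw [hw1, hw4]; push_cast
    linear_combination (-((a₂:ℂ)*d₂*b₃*c₃ - (b₂:ℂ)*c₂*a₃*d₃))*h1 + ((a₁:ℂ)*d₁*b₃*c₃ - (b₁:ℂ)*c₁*a₃*d₃)*h2
      + (-((a₁:ℂ)*d₁*b₂*c₂ - (b₁:ℂ)*c₁*a₂*d₂))*h3
  have hw1ne : w1 ≠ 0 := by
    intro h0
    have cz : ∀ w : ℚ, α*(w:ℂ) = 0 → w = 0 := by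
      intro w hw
      have := (mul_eq_zero.1 hw).resolve_left hα
      exact_mod_cast this
    have h2z : w2 = 0 := cz w2 (by rw [k2, h0]; push_cast; ring)
    have h3z : w3 = 0 := cz w3 (by rw [k3, h0]; push_cast; ring)
    have h4z : w4 = 0 := cz w4 (by rw [k4, h0]; push_cast; ring)
    have hprod : (a₁*b₂-a₂*b₁)*((a₁*b₃-a₃*b₁)*(c₂*d₃-c₃*d₂)) ≠ 0 :=
      mul_ne_zero hab12 (mul_ne_zero hab13 hcd23)
    have hd1 : d₁ = 0 := by
      have : (a₁*b₂-a₂*b₁)*((a₁*b₃-a₃*b₁)*(c₂*d₃-c₃*d₂))*d₁ = a₁*w1 + b₁*w3 := by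
        rw [hw1, hw3]; ring
      rw [h0, h3z] at this
      simpa [hprod] using mul_eq_zero.1 (by linarith [this] : (a₁*b₂-a₂*b₁)*((a₁*b₃-a₃*b₁)*(c₂*d₃-c₃*d₂))*d₁ = 0)
    have hc1 : c₁ = 0 := by
      have : (a₁*b₂-a₂*b₁)*((a₁*b₃-a₃*b₁)*(c₂*d₃-c₃*d₂))*c₁ = -(a₁*w2 + b₁*w4) := by
        rw [hw2, hw4]; ring
      rw [h2z, h4z] at this
      simpa [hprod] using mul_eq_zero.1 (by linarith [this] : (a₁*b₂-a₂*b₁)*((a₁*b₃-a₃*b₁)*(c₂*d₃-c₃*d₂))*c₁ = 0)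
    apply hcd12; rw [hc1, hd1]; ring
  have hw1c : (w1:ℂ) ≠ 0 := by exact_mod_cast hw1ne
  refine ⟨(w2+w3)/w1, w4/w1, ?_, ?_⟩
  · push_cast
    rw [div_mul_eq_mul_div, eq_div_iff hw1c]
    linear_combination -k2 - k3
  · push_cast
    rw [div_mul_eq_mul_div, eq_div_iff hw1c]
    linear_combination -k4
lemma vdistinct (τ u : ℂ) (hu : u ≠ τ) (ζ : ℂ) (hζ0 : ζ ≠ 0)
    (a₁ b₁ c₁ d₁ a₂ b₂ c₂ d₂ : ℚ)
    (hcd1 : ¬(c₁ = 0 ∧ d₁ = 0)) (hcd2 : ¬(c₂ = 0 ∧ d₂ = 0))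
    (hab : a₁*b₂ - a₂*b₁ ≠ 0)
    (e1 : ζ*(((a₁:ℂ)+b₁*τ)*((c₁:ℂ)+d₁*u)) = ((a₁:ℂ)+b₁*u)*((c₁:ℂ)+d₁*τ))
    (e2 : ζ*(((a₂:ℂ)+b₂*τ)*((c₂:ℂ)+d₂*u)) = ((a₂:ℂ)+b₂*u)*((c₂:ℂ)+d₂*τ)) :
    c₁*d₂ - c₂*d₁ ≠ 0 := by
  intro hF
  have hFc : (c₁:ℂ)*d₂ - (c₂:ℂ)*d₁ = 0 := by exact_mod_cast congrArg (Rat.cast : ℚ → ℂ) hF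
  set α : ℂ := ζ - 1 with hα
  set β : ℂ := ζ*u - τ with hβ
  set γ : ℂ := ζ*τ - u with hγ
  set δ : ℂ := (ζ-1)*(τ*u) with hδ
  have E₁ : (a₁:ℂ)*c₁*α + (a₁:ℂ)*d₁*β + (b₁:ℂ)*c₁*γ + (b₁:ℂ)*d₁*δ = 0 := by
    rw [hα, hβ, hγ, hδ]; linear_combination e1
  have E₂ : (a₂:ℂ)*c₂*α + (a₂:ℂ)*d₂*β + (b₂:ℂ)*c₂*γ + (b₂:ℂ)*d₂*δ = 0 := by
    rw [hα, hβ, hγ, hδ]; linear_combination e2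
  -- H₂ := a₂*(c₁α+d₁β) + b₂*(c₁γ+d₁δ)
  have hH2 : ((a₂:ℂ)*((c₁:ℂ)*α+(d₁:ℂ)*β) + (b₂:ℂ)*((c₁:ℂ)*γ+(d₁:ℂ)*δ)) = 0 := by
    rcases Classical.em (c₂ = 0) with hc2 | hc2
    · have hd2 : d₂ ≠ 0 := fun h => hcd2 ⟨hc2, h⟩
      have hd2c : (d₂:ℂ) ≠ 0 := by exact_mod_cast hd2
      have key : (d₂:ℂ)*((a₂:ℂ)*((c₁:ℂ)*α+(d₁:ℂ)*β) + (b₂:ℂ)*((c₁:ℂ)*γ+(d₁:ℂ)*δ)) = 0 := by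
        linear_combination (d₁:ℂ)*E₂ + ((a₂:ℂ)*α + (b₂:ℂ)*γ)*hFc
      exact (mul_eq_zero.1 key).resolve_left hd2c
    · have hc2c : (c₂:ℂ) ≠ 0 := by exact_mod_cast hc2
      have key : (c₂:ℂ)*((a₂:ℂ)*((c₁:ℂ)*α+(d₁:ℂ)*β) + (b₂:ℂ)*((c₁:ℂ)*γ+(d₁:ℂ)*δ)) = 0 := by
        linear_combination (c₁:ℂ)*E₂ + (-(a₂:ℂ)*β - (b₂:ℂ)*δ)*hFc
      exact (mul_eq_zero.1 key).resolve_left hc2c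
  have habc : (a₁:ℂ)*b₂ - (a₂:ℂ)*b₁ ≠ 0 := by
    intro h; apply hab; exact_mod_cast h
  have hG1 : (c₁:ℂ)*α + (d₁:ℂ)*β = 0 := by
    have key : ((a₁:ℂ)*b₂ - (a₂:ℂ)*b₁)*((c₁:ℂ)*α + (d₁:ℂ)*β) = 0 := by
      linear_combination (b₂:ℂ)*E₁ - (b₁:ℂ)*hH2
    exact (mul_eq_zero.1 key).resolve_left habc
  have hG2 : (c₁:ℂ)*γ + (d₁:ℂ)*δ = 0 := by
    have key : ((a₁:ℂ)*b₂ - (a₂:ℂ)*b₁)*((c₁:ℂ)*γ + (d₁:ℂ)*δ) = 0 := by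
      linear_combination (-(a₂:ℂ))*E₁ + (a₁:ℂ)*hH2
    exact (mul_eq_zero.1 key).resolve_left habc
  have hdet : α*δ - β*γ ≠ 0 := by
    have : α*δ - β*γ = ζ*(τ-u)^2 := by rw [hα, hβ, hγ, hδ]; ring
    rw [this]
    exact mul_ne_zero hζ0 (pow_ne_zero _ (sub_ne_zero.2 (Ne.symm hu)))
  have hc1 : (c₁:ℂ) = 0 := by
    have key : (c₁:ℂ)*(α*δ - β*γ) = 0 := by linear_combination δ*hG1 - β*hG2
    exact (mul_eq_zero.1 key).resolve_right hdet
  have hd1 : (d₁:ℂ) = 0 := by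
    have key : (d₁:ℂ)*(α*δ - β*γ) = 0 := by linear_combination α*hG2 - γ*hG1
    exact (mul_eq_zero.1 key).resolve_right hdet
  exact hcd1 ⟨by exact_mod_cast hc1, by exact_mod_cast hd1⟩
lemma lines_finite (τ u : ℂ) (hτim : τ.im ≠ 0) (hu : u ≠ τ)
    (hdeg : ∀ a b c : ℚ, (a : ℂ) * τ ^ 2 + (b : ℂ) * τ + (c : ℂ) = 0 → a = 0 ∧ b = 0 ∧ c = 0)
    (ζ : ℂ) (hζ0 : ζ ≠ 0) (hζ1 : ζ ≠ 1) :
    {L : Submodule ℝ ℂ | ∃ a b c d : ℚ, ¬(a = 0 ∧ b = 0) ∧ ¬(c = 0 ∧ d = 0) ∧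
      L = Submodule.span ℝ ({(a:ℂ) + b*τ} : Set ℂ) ∧
      ζ*(((a:ℂ)+b*τ)*((c:ℂ)+d*u)) = ((a:ℂ)+b*u)*((c:ℂ)+d*τ)}.Finite := by
  by_contra hinf
  have hinf' : Set.Infinite {L : Submodule ℝ ℂ | ∃ a b c d : ℚ, ¬(a = 0 ∧ b = 0) ∧ ¬(c = 0 ∧ d = 0) ∧
      L = Submodule.span ℝ ({(a:ℂ) + b*τ} : Set ℂ) ∧
      ζ*(((a:ℂ)+b*τ)*((c:ℂ)+d*u)) = ((a:ℂ)+b*u)*((c:ℂ)+d*τ)} := hinf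
  have f := hinf'.natEmbedding
  have hne : ∀ i j : ℕ, i ≠ j → ((f i : Submodule ℝ ℂ)) ≠ ((f j : Submodule ℝ ℂ)) :=
    fun i j hij h => hij (f.injective (Subtype.coe_injective h))
  obtain ⟨a₁,b₁,c₁,d₁,hab1,hcd1,hL1,he1⟩ := (f 0).2
  obtain ⟨a₂,b₂,c₂,d₂,hab2,hcd2,hL2,he2⟩ := (f 1).2
  obtain ⟨a₃,b₃,c₃,d₃,hab3,hcd3,hL3,he3⟩ := (f 2).2
  have hab12 : a₁*b₂ - a₂*b₁ ≠ 0 := by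
    intro h
    apply hne 0 1 (by norm_num)
    rw [hL1, hL2]
    exact (span_eq_iff τ hτim a₁ b₁ a₂ b₂ hab1 hab2).2 (by linear_combination h)
  have hab13 : a₁*b₃ - a₃*b₁ ≠ 0 := by
    intro h
    apply hne 0 2 (by norm_num)
    rw [hL1, hL3]
    exact (span_eq_iff τ hτim a₁ b₁ a₃ b₃ hab1 hab3).2 (by linear_combination h)
  have hab23 : a₂*b₃ - a₃*b₂ ≠ 0 := by
    intro h
    apply hne 1 2 (by norm_num)
    rw [hL2, hL3]
    exact (span_eq_iff τ hτim a₂ b₂ a₃ b₃ hab2 hab3).2 (by linear_combination h)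
  have hcd12 := vdistinct τ u hu ζ hζ0 a₁ b₁ c₁ d₁ a₂ b₂ c₂ d₂ hcd1 hcd2 hab12 he1 he2
  have hcd13 := vdistinct τ u hu ζ hζ0 a₁ b₁ c₁ d₁ a₃ b₃ c₃ d₃ hcd1 hcd3 hab13 he1 he3
  have hcd23 := vdistinct τ u hu ζ hζ0 a₂ b₂ c₂ d₂ a₃ b₃ c₃ d₃ hcd2 hcd3 hab23 he2 he3
  have hα : ζ - 1 ≠ 0 := sub_ne_zero.2 hζ1
  obtain ⟨s, t, hst, hδt⟩ := core_lemma a₁ a₂ a₃ b₁ b₂ b₃ c₁ c₂ c₃ d₁ d₂ d₃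
    hab12 hab13 hab23 hcd12 hcd13 hcd23 (α := ζ-1) (β := ζ*u - τ) (γ := ζ*τ - u) (δ := (ζ-1)*(τ*u)) hα
    (by linear_combination he1) (by linear_combination he2) (by linear_combination he3)
  have hsum : τ + u = (s:ℂ) :=
    mul_left_cancel₀ hα (by linear_combination hst)
  have hprod : τ*u = (t:ℂ) :=
    mul_left_cancel₀ hα (by linear_combination hδt)
  have final : ((1:ℚ):ℂ)*τ^2 + ((-s:ℚ):ℂ)*τ + ((t:ℚ):ℂ) = 0 := by
    push_cast
    linear_combination τ*hsum - hprod
  exact absurd (hdeg 1 (-s) t final).1 one_ne_zero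
lemma roots_finite (τ u : ℂ) (hτ : IsIntegral ℚ τ) (hu : IsIntegral ℚ u) :
    {z : ℂ | z ∈ IntermediateField.adjoin ℚ ({τ, u} : Set ℂ) ∧
      ∃ n : ℕ, 0 < n ∧ z^n = 1}.Finite := by
  set K := IntermediateField.adjoin ℚ ({τ, u} : Set ℂ) with hK
  haveI : Finite ({τ, u} : Set ℂ) := Set.Finite.to_subtype (Set.toFinite _)
  haveI : FiniteDimensional ℚ K := IntermediateField.finiteDimensional_adjoin (by
    rintro x hx
    rcases hx with rfl | hx
    · exact hτ
    · rcases hx with rfl; exact hu)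
  haveI : NumberField K := ⟨⟩
  have hfin := NumberField.Embeddings.finite_of_norm_le K ℂ 1
  apply (hfin.image (fun x : K => (x:ℂ))).subset
  rintro z ⟨hzK, n, hn, hzn⟩
  refine ⟨⟨z, hzK⟩, ⟨?_, ?_⟩, rfl⟩
  · -- IsIntegral ℤ
    have hx : (⟨z, hzK⟩ : K)^n = 1 := by
      apply Subtype.ext
      push_cast
      exact hzn
    exact ⟨Polynomial.X^n - Polynomial.C 1,
      Polynomial.monic_X_pow_sub_C _ hn.ne', by
        simp [Polynomial.eval₂_sub, hx]⟩
  · intro φ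
    have hx : (⟨z, hzK⟩ : K)^n = 1 := by
      apply Subtype.ext
      push_cast
      exact hzn
    have hφ : ‖φ ⟨z, hzK⟩‖^n = 1 := by
      rw [← norm_pow, ← map_pow, hx, map_one, norm_one]
    by_contra hgt
    push_neg at hgt
    have := one_lt_pow₀ hgt hn.ne'
    rw [hφ] at this
    exact lt_irrefl _ this
/-- Let `V = ℚ·1 + ℚ·τ` with `τ ∉ ℝ` algebraic over `ℚ` of degree `> 2` (so `V` is
not CM).  Then `V` contains only finitely many rational angles: the set of pairs of
distinct lines through `0`, each containing a nonzero point of `V`, forming an angle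
that is a rational multiple of `π`, is finite. -/
theorem finitely_many_rational_angles_in_nonCM_space
    (τ : ℂ) (hτ : ∀ r : ℝ, τ ≠ (r : ℂ)) (halg : IsAlgebraic ℚ τ)
    (hdeg : ∀ a b c : ℚ, (a : ℂ) * τ ^ 2 + (b : ℂ) * τ + (c : ℂ) = 0 →
      a = 0 ∧ b = 0 ∧ c = 0) :
    Set.Finite {L : Submodule ℝ ℂ × Submodule ℝ ℂ |
      ∃ v₁ v₂ : ℂ, v₁ ≠ 0 ∧ v₂ ≠ 0 ∧
        v₁ ∈ Submodule.span ℚ ({1, τ} : Set ℂ) ∧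
        v₂ ∈ Submodule.span ℚ ({1, τ} : Set ℂ) ∧
        L.1 = Submodule.span ℝ ({v₁} : Set ℂ) ∧
        L.2 = Submodule.span ℝ ({v₂} : Set ℂ) ∧
        L.1 ≠ L.2 ∧
        ∃ q : ℚ, Complex.arg (v₂ / v₁) = (q : ℝ) * Real.pi} := by
  classical
  have hτim : τ.im ≠ 0 := by
    intro h
    exact hτ τ.re (Complex.ext (by simp) (by simpa using h))
  set u : ℂ := (starRingEnd ℂ) τ with hu_def
  have huτ : u ≠ τ := fun h => hτim (Complex.conj_eq_iff_im.1 h)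
  have huint : IsIntegral ℚ u :=
    IsIntegral.map ((starRingEnd ℂ).toRatAlgHom) halg.isIntegral
  set Z : Set ℂ := {z : ℂ | z ∈ IntermediateField.adjoin ℚ ({τ, u} : Set ℂ) ∧
      ∃ n : ℕ, 0 < n ∧ z ^ n = 1} \ {1} with hZdef
  set T : Set (Submodule ℝ ℂ) := ⋃ ζ ∈ Z,
      {L : Submodule ℝ ℂ | ∃ a b c d : ℚ, ¬(a = 0 ∧ b = 0) ∧ ¬(c = 0 ∧ d = 0) ∧
        L = Submodule.span ℝ ({(a:ℂ) + b*τ} : Set ℂ) ∧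
        ζ*(((a:ℂ)+b*τ)*((c:ℂ)+d*u)) = ((a:ℂ)+b*u)*((c:ℂ)+d*τ)} with hTdef
  have hT : T.Finite := by
    rw [hTdef]
    apply Set.Finite.biUnion ((roots_finite τ u halg.isIntegral huint).diff)
    intro ζ hζ
    have hζ1 : ζ ≠ 1 := by
      intro h; exact hζ.2 (by simp [h])
    have hζ0 : ζ ≠ 0 := by
      rcases hζ.1.2 with ⟨n, hn, hzn⟩
      intro h0
      rw [h0, zero_pow hn.ne'] at hzn
      exact zero_ne_one hzn
    exact lines_finite τ u hτim huτ hdeg ζ hζ0 hζ1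
  have claim : ∀ v₁ v₂ : ℂ, ∀ L₁ L₂ : Submodule ℝ ℂ, v₁ ≠ 0 → v₂ ≠ 0 →
      v₁ ∈ Submodule.span ℚ ({1, τ} : Set ℂ) → v₂ ∈ Submodule.span ℚ ({1, τ} : Set ℂ) →
      L₁ = Submodule.span ℝ ({v₁} : Set ℂ) → L₂ = Submodule.span ℝ ({v₂} : Set ℂ) →
      L₁ ≠ L₂ → ∀ q : ℚ, Complex.arg (v₂ / v₁) = (q : ℝ) * Real.pi → L₁ ∈ T := by
    intro v₁ v₂ L₁ L₂ hv₁ hv₂ hm₁ hm₂ hL₁ hL₂ hLne q harg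
    rw [Submodule.mem_span_pair] at hm₁ hm₂
    obtain ⟨a, b, hab⟩ := hm₁
    obtain ⟨c, d, hcd⟩ := hm₂
    have hv1 : v₁ = (a:ℂ) + b*τ := by rw [← hab, Rat.smul_def, Rat.smul_def]; ring
    have hv2 : v₂ = (c:ℂ) + d*τ := by rw [← hcd, Rat.smul_def, Rat.smul_def]; ring
    have hab0 : ¬(a = 0 ∧ b = 0) := by
      rintro ⟨rfl, rfl⟩; apply hv₁; rw [hv1]; simp
    have hcd0 : ¬(c = 0 ∧ d = 0) := by
      rintro ⟨rfl, rfl⟩; apply hv₂; rw [hv2]; simp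
    have hcv1 : (starRingEnd ℂ) v₁ = (a:ℂ) + b*u := by
      rw [hv1, hu_def]; simp [map_add, map_mul, map_ratCast]
    have hcv2 : (starRingEnd ℂ) v₂ = (c:ℂ) + d*u := by
      rw [hv2, hu_def]; simp [map_add, map_mul, map_ratCast]
    have hcv1ne : (starRingEnd ℂ) v₁ ≠ 0 := by simpa using hv₁
    have hcv2ne : (starRingEnd ℂ) v₂ ≠ 0 := by simpa using hv₂
    set ζ : ℂ := (v₂ * (starRingEnd ℂ) v₁) / ((starRingEnd ℂ) v₂ * v₁) with hζ_def
    set θ : ℝ := Complex.arg (v₂/v₁) with hθ_def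
    have hzne : v₂/v₁ ≠ 0 := div_ne_zero hv₂ hv₁
    have habsne : (‖v₂/v₁‖ : ℂ) ≠ 0 := by simpa using hzne
    have hzabs := Complex.norm_mul_exp_arg_mul_I (v₂/v₁)
    rw [← hθ_def] at hzabs
    have hconjz : (starRingEnd ℂ) (v₂/v₁) =
        (‖v₂/v₁‖ : ℂ) * Complex.exp (-(θ:ℂ) * Complex.I) := by
      have hconjarg : (starRingEnd ℂ) ((θ:ℂ) * Complex.I) = -(θ:ℂ) * Complex.I := by
        rw [map_mul, Complex.conj_ofReal, Complex.conj_I]; ring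
      have h0 := congrArg (starRingEnd ℂ) hzabs
      rw [map_mul, Complex.conj_ofReal, ← Complex.exp_conj, hconjarg] at h0
      exact h0.symm
    have hζexp : ζ = Complex.exp (2*(θ:ℂ) * Complex.I) := by
      have h1 : ζ = (v₂/v₁) / ((starRingEnd ℂ) (v₂/v₁)) := by
        rw [hζ_def, map_div₀]
        field_simp
      rw [h1, hconjz]
      nth_rewrite 1 [← hzabs]
      rw [mul_div_mul_left _ _ habsne, ← Complex.exp_sub]
      congr 1
      ring
    have hζn : ζ ^ (q.den) = 1 := by
      rw [hζexp, ← Complex.exp_nat_mul]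
      have hq : (q:ℂ)*(q.den:ℂ) = (q.num:ℂ) := by exact_mod_cast Rat.mul_den_eq_num q
      have harg2 : (θ:ℂ) = (q:ℂ) * (Real.pi:ℂ) := by
        rw [hθ_def]; exact_mod_cast congrArg (fun x : ℝ => (x:ℂ)) harg
      have : ((q.den:ℕ):ℂ) * (2*(θ:ℂ) * Complex.I) = ((q.num:ℤ):ℂ) * (2*(Real.pi:ℂ)*Complex.I) := by
        rw [harg2]
        push_cast
        push_cast at hq
        linear_combination (2*(Real.pi:ℂ)*Complex.I)*hq
      rw [this, Complex.exp_int_mul_two_pi_mul_I]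
    have hτK : τ ∈ IntermediateField.adjoin ℚ ({τ, u} : Set ℂ) :=
      IntermediateField.subset_adjoin ℚ _ (by simp)
    have huK : u ∈ IntermediateField.adjoin ℚ ({τ, u} : Set ℂ) :=
      IntermediateField.subset_adjoin ℚ _ (by simp)
    have hqK : ∀ r : ℚ, ((r:ℂ)) ∈ IntermediateField.adjoin ℚ ({τ, u} : Set ℂ) := by
      intro r
      have := (IntermediateField.adjoin ℚ ({τ, u} : Set ℂ)).algebraMap_mem r
      rwa [eq_ratCast (algebraMap ℚ ℂ) r] at this
    have hζK : ζ ∈ IntermediateField.adjoin ℚ ({τ, u} : Set ℂ) := by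
      rw [hζ_def, hcv1, hcv2, hv1, hv2]
      exact div_mem (mul_mem (add_mem (hqK c) (mul_mem (hqK d) hτK))
          (add_mem (hqK a) (mul_mem (hqK b) huK)))
        (mul_mem (add_mem (hqK c) (mul_mem (hqK d) huK))
          (add_mem (hqK a) (mul_mem (hqK b) hτK)))
    have heq : ζ*(((a:ℂ)+b*τ)*((c:ℂ)+d*u)) = ((a:ℂ)+b*u)*((c:ℂ)+d*τ) := by
      rw [hζ_def, hcv1, hcv2, hv1, hv2]
      have h1 : (c:ℂ) + d*u ≠ 0 := hcv2 ▸ hcv2ne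
      have h2 : (a:ℂ) + b*τ ≠ 0 := hv1 ▸ hv₁
      rw [div_mul_eq_mul_div, div_eq_iff (mul_ne_zero h1 h2)]
      ring
    have hζ1 : ζ ≠ 1 := by
      intro h1
      rw [h1, one_mul] at heq
      have hkey : ((a*d - b*c : ℚ):ℂ)*(u - τ) = 0 := by
        push_cast
        linear_combination heq
      have : a*d = b*c := by
        rcases mul_eq_zero.1 hkey with h | h
        · have : (a*d - b*c : ℚ) = 0 := by exact_mod_cast h
          linarith
        · exact absurd (sub_eq_zero.1 h) huτ
      apply hLne
      rw [hL₁, hL₂, hv1, hv2]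
      exact (span_eq_iff τ hτim a b c d hab0 hcd0).2 this
    have hζZ : ζ ∈ Z := by
      rw [hZdef]
      exact ⟨⟨hζK, q.den, q.den_pos, hζn⟩, by simpa using hζ1⟩
    rw [hTdef]
    apply Set.mem_biUnion hζZ
    exact ⟨a, b, c, d, hab0, hcd0, by rw [hL₁, hv1], heq⟩
  apply Set.Finite.subset (hT.prod hT)
  rintro ⟨L₁, L₂⟩ ⟨v₁, v₂, hv₁, hv₂, hm₁, hm₂, hL₁, hL₂, hLne, q, harg⟩
  refine ⟨claim v₁ v₂ L₁ L₂ hv₁ hv₂ hm₁ hm₂ hL₁ hL₂ hLne q harg, ?_⟩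
  have harg' : ∃ q' : ℚ, Complex.arg (v₁ / v₂) = (q' : ℝ) * Real.pi := by
    rw [show v₁/v₂ = (v₂/v₁)⁻¹ from (inv_div v₂ v₁).symm, Complex.arg_inv]
    split_ifs with hpi
    · exact ⟨1, by norm_num⟩
    · exact ⟨-q, by rw [harg]; push_cast; ring⟩
  obtain ⟨q', harg'⟩ := harg'
  exact claim v₂ v₁ L₂ L₁ hv₂ hv₁ hm₂ hm₁ hL₂ hL₁ (Ne.symm hLne) q' harg'
end

section
/- Let V = Q·1 + Q·τ with τ ∈ C \ R transcendental over Q. Then, up to equivalence, V contains at most one rational angle; more precisely, if v₁, v₂, w₁, w₂ ∈ V \ {0} determine two rational angles (arg(v₂/v₁), arg(w₂/w₁) ∈ πQ, neither in πZ), then the unordered pairs of lines {Rv₁, Rv₂} and {Rw₁, Rw₂} coincide. -/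
set_option synthInstance.maxHeartbeats 1000000
set_option maxHeartbeats 1600000
open Complex in
lemma angle_data (z : ℂ) (hz0 : z ≠ 0) (q : ℚ) (harg : Complex.arg z = (q:ℝ) * Real.pi)
    (hnt : ∀ k : ℤ, Complex.arg z ≠ (k:ℝ) * Real.pi) :
    ∃ ζ : ℂ, ζ ≠ 0 ∧ ζ ≠ 1 ∧ (∃ n : ℕ, 0 < n ∧ ζ ^ n = 1) ∧
      z = ζ * (starRingEnd ℂ) z := by
  have habs : (‖z‖ : ℂ) * Complex.exp ((Complex.arg z : ℝ) * I) = z :=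
    Complex.norm_mul_exp_arg_mul_I z
  generalize hθg : Complex.arg z = θ at harg hnt habs
  subst harg
  set θ : ℝ := (q:ℝ) * Real.pi with hθ
  refine ⟨Complex.exp (2 * θ * I), Complex.exp_ne_zero _, ?_, ⟨q.den, q.pos, ?_⟩, ?_⟩
  · intro h1
    obtain ⟨n, hn⟩ := Complex.exp_eq_one_iff.mp h1
    have h2 : (2*(θ:ℂ)) * I = ((n:ℂ) * (2*(Real.pi:ℂ))) * I := by linear_combination hn
    have h3 : (2*(θ:ℂ)) = (n:ℂ) * (2*(Real.pi:ℂ)) := mul_right_cancel₀ Complex.I_ne_zero h2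
    have h4 : (2*θ) = (n:ℝ) * (2*Real.pi) := by exact_mod_cast h3
    exact hnt n (by linarith)
  · rw [← Complex.exp_nat_mul]
    have hq : ((q.den:ℝ)) * (q:ℝ) = (q.num:ℝ) := by
      exact_mod_cast congrArg (Rat.cast : ℚ → ℝ) (by rw [mul_comm]; exact_mod_cast Rat.mul_den_eq_num q)
    have hq' : ((q.den:ℂ)) * (q:ℂ) = (q.num:ℂ) := by exact_mod_cast hq
    have hθc : (θ:ℂ) = (q:ℂ) * (Real.pi:ℂ) := by rw [hθ]; push_cast; ring
    have heq : (q.den:ℂ) * (2 * (θ:ℂ) * I) = (q.num:ℂ) * (2 * (Real.pi:ℂ) * I) := by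
      rw [hθc]; linear_combination (2 * (Real.pi:ℂ) * I) * hq'
    rw [heq, Complex.exp_int_mul_two_pi_mul_I]
  · have hconj : (starRingEnd ℂ) z = (‖z‖ : ℂ) * Complex.exp (-θ * I) := by
      conv_lhs => rw [← habs]
      rw [map_mul, Complex.conj_ofReal, ← Complex.exp_conj, map_mul, Complex.conj_ofReal,
        Complex.conj_I]
      congr 2
      ring
    have hexp : Complex.exp (2*θ*I) * Complex.exp (-θ*I) = Complex.exp ((θ:ℝ) * I) := by
      rw [← Complex.exp_add]; congr 1; push_cast; ring
    rw [hconj]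
    conv_lhs => rw [← habs]
    rw [← hexp]; ring

lemma line_eq (τ : ℂ) (a b a' b' : ℚ)
    (hv : (a:ℂ) + (b:ℂ)*τ ≠ 0) (hw : (a':ℂ) + (b':ℂ)*τ ≠ 0) (h : a*b' = a'*b) :
    Submodule.span ℝ ({(a:ℂ) + (b:ℂ)*τ} : Set ℂ) =
      Submodule.span ℝ ({(a':ℂ) + (b':ℂ)*τ} : Set ℂ) := by
  obtain ⟨r, hr0, hr⟩ : ∃ r : ℚ, r ≠ 0 ∧ (a:ℂ) + (b:ℂ)*τ = (r:ℝ) • ((a':ℂ) + (b':ℂ)*τ) := by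
    by_cases ha' : a' = 0
    · have hb' : b' ≠ 0 := by rintro rfl; simp [ha'] at hw
      have ha : a = 0 := by
        have := h; rw [ha'] at this; simpa [hb'] using this
      have hb : b ≠ 0 := by rintro rfl; simp [ha] at hv
      refine ⟨b / b', div_ne_zero hb hb', ?_⟩
      have hb'c : (b':ℂ) ≠ 0 := by exact_mod_cast hb'
      rw [Complex.real_smul]
      push_cast [ha, ha']
      rw [div_mul_eq_mul_div, eq_div_iff hb'c]; ring
    · have ha : a ≠ 0 := by
        rintro rfl
        have hb : b = 0 := by
          have := h.symm; rw [zero_mul] at this; exact (mul_eq_zero.mp this).resolve_left ha'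
        simp [hb] at hv
      refine ⟨a / a', div_ne_zero ha ha', ?_⟩
      have ha'c : (a':ℂ) ≠ 0 := by exact_mod_cast ha'
      have hbb : (a:ℂ) * (b':ℂ) = (a':ℂ) * (b:ℂ) := by exact_mod_cast h
      rw [Complex.real_smul]
      push_cast
      rw [div_mul_eq_mul_div, eq_div_iff ha'c]
      linear_combination (-τ) * hbb
  rw [hr]
  exact Submodule.span_singleton_smul_eq (IsUnit.mk0 ((r:ℝ)) (by exact_mod_cast hr0)) _

lemma factor_case (a₁ b₁ a₂ b₂ a₁' b₁' a₂' b₂' u s : ℂ) (hu : u ≠ 0) (hs : s ≠ 0)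
    (hA : u*(a₁'*a₂') = s*(a₁*a₂)) (hB : u*(b₁'*b₂') = s*(b₁*b₂))
    (hD : u*(a₁'*b₂' + a₂'*b₁') = s*(a₁*b₂ + a₂*b₁)) :
    (a₁*b₁' = a₁'*b₁ ∧ a₂*b₂' = a₂'*b₂) ∨ (a₁*b₂' = a₂'*b₁ ∧ a₂*b₁' = a₁'*b₂) := by
  have hI : (a₁*b₁' - a₁'*b₁) * (a₂*b₁' - a₁'*b₂) = 0 := by
    have h : s * ((a₁*b₁' - a₁'*b₁) * (a₂*b₁' - a₁'*b₂)) = 0 := by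
      linear_combination (-(b₁'^2)) * hA - a₁'^2 * hB + (a₁'*b₁') * hD
    exact (mul_eq_zero.mp h).resolve_left hs
  have hII : (a₁*b₂' - a₂'*b₁) * (a₂*b₂' - a₂'*b₂) = 0 := by
    have h : s * ((a₁*b₂' - a₂'*b₁) * (a₂*b₂' - a₂'*b₂)) = 0 := by
      linear_combination (-(b₂'^2)) * hA - a₂'^2 * hB + (a₂'*b₂') * hD
    exact (mul_eq_zero.mp h).resolve_left hs
  have hIII : (a₁*b₁' - a₁'*b₁) * (a₁*b₂' - a₂'*b₁) = 0 := by
    have h : u * ((a₁*b₁' - a₁'*b₁) * (a₁*b₂' - a₂'*b₁)) = 0 := by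
      linear_combination b₁^2 * hA + a₁^2 * hB - (a₁*b₁) * hD
    exact (mul_eq_zero.mp h).resolve_left hu
  have hIV : (a₂*b₁' - a₁'*b₂) * (a₂*b₂' - a₂'*b₂) = 0 := by
    have h : u * ((a₂*b₁' - a₁'*b₂) * (a₂*b₂' - a₂'*b₂)) = 0 := by
      linear_combination b₂^2 * hA + a₂^2 * hB - (a₂*b₂) * hD
    exact (mul_eq_zero.mp h).resolve_left hu
  by_cases h11 : a₁*b₁' - a₁'*b₁ = 0
  · by_cases h22 : a₂*b₂' - a₂'*b₂ = 0
    · exact Or.inl ⟨sub_eq_zero.mp h11, sub_eq_zero.mp h22⟩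
    · refine Or.inr ⟨sub_eq_zero.mp ((mul_eq_zero.mp hII).resolve_right h22), 
        sub_eq_zero.mp ((mul_eq_zero.mp hIV).resolve_right h22)⟩
  · exact Or.inr ⟨sub_eq_zero.mp ((mul_eq_zero.mp hIII).resolve_left h11),
      sub_eq_zero.mp ((mul_eq_zero.mp hI).resolve_left h11)⟩

lemma prop_case {F : Type*} [Field F] (q₀ q₁ p₀ p₁ q₀' q₁' p₀' p₁' : F)
    (h0 : q₀*p₀' = q₀'*p₀) (h1 : q₀*p₁' + q₁*p₀' = q₀'*p₁ + q₁'*p₀) (h2 : q₁*p₁' = q₁'*p₁)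
    (hd : q₀*p₁ - q₁*p₀ ≠ 0) (hd' : q₀'*p₁' - q₁'*p₀' ≠ 0) :
    ∃ α : F, α ≠ 0 ∧ q₀' = α*q₀ ∧ p₁' = α*p₁ ∧ q₁' + p₀' = α*(q₁ + p₀) := by
  -- scaled Cramer coefficients
  -- α̂ = q₀'*p₁ - q₁'*p₀, β̂ = q₀*q₁' - q₁*q₀', γ̂ = p₀'*p₁ - p₁'*p₀, δ̂ = q₀*p₁' - q₁*p₀'
  have G0 : (p₀'*p₁ - p₁'*p₀)*q₀^2 + ((q₀*p₁' - q₁*p₀') - (q₀'*p₁ - q₁'*p₀))*(q₀*p₀)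
      - (q₀*q₁' - q₁*q₀')*p₀^2 = 0 := by
    linear_combination (q₀*p₁ - q₁*p₀) * h0
  have G1 : 2*(p₀'*p₁ - p₁'*p₀)*(q₀*q₁) + ((q₀*p₁' - q₁*p₀') - (q₀'*p₁ - q₁'*p₀))*(q₀*p₁ + q₁*p₀)
      - 2*(q₀*q₁' - q₁*q₀')*(p₀*p₁) = 0 := by
    linear_combination (q₀*p₁ - q₁*p₀) * h1
  have G2 : (p₀'*p₁ - p₁'*p₀)*q₁^2 + ((q₀*p₁' - q₁*p₀') - (q₀'*p₁ - q₁'*p₀))*(q₁*p₁)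
      - (q₀*q₁' - q₁*q₀')*p₁^2 = 0 := by
    linear_combination (q₀*p₁ - q₁*p₀) * h2
  have hd2 : (q₀*p₁ - q₁*p₀)^2 ≠ 0 := pow_ne_zero 2 hd
  have hγ : p₀'*p₁ - p₁'*p₀ = 0 := by
    have h : (p₀'*p₁ - p₁'*p₀) * (q₀*p₁ - q₁*p₀)^2 = 0 := by
      linear_combination p₁^2 * G0 - (p₀*p₁) * G1 + p₀^2 * G2
    exact (mul_eq_zero.mp h).resolve_right hd2
  have hβ : q₀*q₁' - q₁*q₀' = 0 := by
    have h : (q₀*q₁' - q₁*q₀') * (q₀*p₁ - q₁*p₀)^2 = 0 := by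
      linear_combination (-(q₁^2)) * G0 + (q₀*q₁) * G1 - q₀^2 * G2
    exact (mul_eq_zero.mp h).resolve_right hd2
  have hδα : (q₀*p₁' - q₁*p₀') - (q₀'*p₁ - q₁'*p₀) = 0 := by
    by_contra he
    have E0 : q₀*p₀ = 0 := by
      have : ((q₀*p₁' - q₁*p₀') - (q₀'*p₁ - q₁'*p₀)) * (q₀*p₀) = 0 := by
        linear_combination G0 - q₀^2 * hγ + p₀^2 * hβ
      exact (mul_eq_zero.mp this).resolve_left he
    have E2 : q₁*p₁ = 0 := by
      have : ((q₀*p₁' - q₁*p₀') - (q₀'*p₁ - q₁'*p₀)) * (q₁*p₁) = 0 := by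
        linear_combination G2 - q₁^2 * hγ + p₁^2 * hβ
      exact (mul_eq_zero.mp this).resolve_left he
    have E1 : q₀*p₁ + q₁*p₀ = 0 := by
      have : ((q₀*p₁' - q₁*p₀') - (q₀'*p₁ - q₁'*p₀)) * (q₀*p₁ + q₁*p₀) = 0 := by
        linear_combination G1 - 2*(q₀*q₁) * hγ + 2*(p₀*p₁) * hβ
      exact (mul_eq_zero.mp this).resolve_left he
    exact hd2 (by linear_combination (q₀*p₁ + q₁*p₀) * E1 - 4*(q₁*p₁)*E0)
  -- now α̂ ≠ 0
  have hR0 : q₀' * (q₀*p₁ - q₁*p₀) = (q₀'*p₁ - q₁'*p₀) * q₀ := by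
    linear_combination p₀ * hβ
  have hR1 : q₁' * (q₀*p₁ - q₁*p₀) = (q₀'*p₁ - q₁'*p₀) * q₁ := by
    linear_combination p₁ * hβ
  have hR2 : p₀' * (q₀*p₁ - q₁*p₀) = (q₀'*p₁ - q₁'*p₀) * p₀ := by
    linear_combination q₀ * hγ + p₀ * hδα
  have hR3 : p₁' * (q₀*p₁ - q₁*p₀) = (q₀'*p₁ - q₁'*p₀) * p₁ := by
    linear_combination q₁ * hγ + p₁ * hδα
  have hα : (q₀'*p₁ - q₁'*p₀) ≠ 0 := by
    intro h
    apply hd'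
    have h0' : q₀' * (q₀*p₁ - q₁*p₀) = 0 := by rw [hR0, h, zero_mul]
    have h1' : q₁' * (q₀*p₁ - q₁*p₀) = 0 := by rw [hR1, h, zero_mul]
    have h2' : p₀' * (q₀*p₁ - q₁*p₀) = 0 := by rw [hR2, h, zero_mul]
    have h3' : p₁' * (q₀*p₁ - q₁*p₀) = 0 := by rw [hR3, h, zero_mul]
    have hq0' : q₀' = 0 := (mul_eq_zero.mp h0').resolve_right hd
    have hq1' : q₁' = 0 := (mul_eq_zero.mp h1').resolve_right hd
    have hp0' : p₀' = 0 := (mul_eq_zero.mp h2').resolve_right hd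
    have hp1' : p₁' = 0 := (mul_eq_zero.mp h3').resolve_right hd
    rw [hq0', hq1', hp0', hp1']; ring
  refine ⟨(q₀'*p₁ - q₁'*p₀) / (q₀*p₁ - q₁*p₀), div_ne_zero hα hd, ?_, ?_, ?_⟩
  · rw [div_mul_eq_mul_div, eq_div_iff hd]; linear_combination hR0
  · rw [div_mul_eq_mul_div, eq_div_iff hd]; linear_combination hR3
  · rw [div_mul_eq_mul_div, eq_div_iff hd]; linear_combination hR1 + hR2

lemma transcendental_quad (τ : ℂ) (htr : Transcendental ℚ τ) (ζ ξ : ℂ)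
    (hζ : IsIntegral ℚ ζ) (hξ : IsIntegral ℚ ξ) (c₂ c₁ c₀ : ℂ)
    (h₂ : c₂ ∈ Algebra.adjoin ℚ ({ζ, ξ} : Set ℂ))
    (h₁ : c₁ ∈ Algebra.adjoin ℚ ({ζ, ξ} : Set ℂ))
    (h₀ : c₀ ∈ Algebra.adjoin ℚ ({ζ, ξ} : Set ℂ))
    (heq : c₂*τ^2 + c₁*τ + c₀ = 0) : c₂ = 0 ∧ c₁ = 0 ∧ c₀ = 0 := by
  by_contra hne
  set K : IntermediateField ℚ ℂ := IntermediateField.adjoin ℚ ({ζ, ξ} : Set ℂ) with hK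
  haveI : FiniteDimensional ℚ K := by
    apply IntermediateField.finiteDimensional_adjoin
    rintro x hx
    rcases hx with rfl | hx
    · exact hζ
    · rw [Set.mem_singleton_iff] at hx; subst hx; exact hξ
  have hle : Algebra.adjoin ℚ ({ζ, ξ} : Set ℂ) ≤ K.toSubalgebra :=
    IntermediateField.algebra_adjoin_le_adjoin ℚ _
  set k₂ : K := ⟨c₂, hle h₂⟩
  set k₁ : K := ⟨c₁, hle h₁⟩
  set k₀ : K := ⟨c₀, hle h₀⟩
  set P : Polynomial K := Polynomial.C k₂ * Polynomial.X^2 + Polynomial.C k₁ * Polynomial.X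
    + Polynomial.C k₀ with hP
  have hc2 : P.coeff 2 = k₂ := by simp [hP, Polynomial.coeff_add, Polynomial.coeff_C]
  have hc1 : P.coeff 1 = k₁ := by simp [hP, Polynomial.coeff_add, Polynomial.coeff_C]
  have hc0 : P.coeff 0 = k₀ := by simp [hP, Polynomial.coeff_add, Polynomial.coeff_C]
  have hP0 : P ≠ 0 := by
    intro h
    apply hne
    rw [h] at hc2 hc1 hc0
    simp only [Polynomial.coeff_zero] at hc2 hc1 hc0
    refine ⟨?_, ?_, ?_⟩
    · simpa [k₂] using congrArg Subtype.val hc2.symm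
    · simpa [k₁] using congrArg Subtype.val hc1.symm
    · simpa [k₀] using congrArg Subtype.val hc0.symm
  have halg : IsAlgebraic K τ := by
    refine ⟨P, hP0, ?_⟩
    rw [hP]
    simp only [map_add, map_mul, Polynomial.aeval_C, Polynomial.aeval_X_pow, Polynomial.aeval_X]
    have e2 : algebraMap K ℂ k₂ = c₂ := rfl
    have e1 : algebraMap K ℂ k₁ = c₁ := rfl
    have e0 : algebraMap K ℂ k₀ = c₀ := rfl
    rw [e2, e1, e0]
    linear_combination heq
  haveI : Algebra.IsIntegral ℚ K := Algebra.IsIntegral.of_finite ℚ K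
  have : IsIntegral ℚ τ := isIntegral_trans τ halg.isIntegral
  exact htr this.isAlgebraic

set_option maxHeartbeats 1600000 in
theorem main_core
    (τ : ℂ) (htr : Transcendental ℚ τ)
    (v₁ v₂ w₁ w₂ : ℂ)
    (hv₁ : v₁ ∈ Submodule.span ℚ ({1, τ} : Set ℂ)) (hv₁0 : v₁ ≠ 0)
    (hv₂ : v₂ ∈ Submodule.span ℚ ({1, τ} : Set ℂ)) (hv₂0 : v₂ ≠ 0)
    (hw₁ : w₁ ∈ Submodule.span ℚ ({1, τ} : Set ℂ)) (hw₁0 : w₁ ≠ 0)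
    (hw₂ : w₂ ∈ Submodule.span ℚ ({1, τ} : Set ℂ)) (hw₂0 : w₂ ≠ 0)
    (hv : ∃ q : ℚ, Complex.arg (v₂ / v₁) = (q : ℝ) * Real.pi)
    (hvnt : ∀ k : ℤ, Complex.arg (v₂ / v₁) ≠ (k : ℝ) * Real.pi)
    (hw : ∃ q : ℚ, Complex.arg (w₂ / w₁) = (q : ℝ) * Real.pi)
    (hwnt : ∀ k : ℤ, Complex.arg (w₂ / w₁) ≠ (k : ℝ) * Real.pi) :
    (Submodule.span ℝ ({v₁} : Set ℂ) = Submodule.span ℝ ({w₁} : Set ℂ) ∧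
      Submodule.span ℝ ({v₂} : Set ℂ) = Submodule.span ℝ ({w₂} : Set ℂ)) ∨
    (Submodule.span ℝ ({v₁} : Set ℂ) = Submodule.span ℝ ({w₂} : Set ℂ) ∧
      Submodule.span ℝ ({v₂} : Set ℂ) = Submodule.span ℝ ({w₁} : Set ℂ)) := by
  rw [Submodule.mem_span_pair] at hv₁ hv₂ hw₁ hw₂
  obtain ⟨a₁, b₁, hva⟩ := hv₁
  obtain ⟨a₂, b₂, hvb⟩ := hv₂
  obtain ⟨a₁', b₁', hwa⟩ := hw₁
  obtain ⟨a₂', b₂', hwb⟩ := hw₂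
  have hva' : (a₁:ℂ) + (b₁:ℂ)*τ = v₁ := by rw [← hva, Rat.smul_def, Rat.smul_def, mul_one]
  have hvb' : (a₂:ℂ) + (b₂:ℂ)*τ = v₂ := by rw [← hvb, Rat.smul_def, Rat.smul_def, mul_one]
  have hwa' : (a₁':ℂ) + (b₁':ℂ)*τ = w₁ := by rw [← hwa, Rat.smul_def, Rat.smul_def, mul_one]
  have hwb' : (a₂':ℂ) + (b₂':ℂ)*τ = w₂ := by rw [← hwb, Rat.smul_def, Rat.smul_def, mul_one]
  obtain ⟨qv, hqv⟩ := hv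
  obtain ⟨qw, hqw⟩ := hw
  obtain ⟨ζ, hζ0, hζ1, ⟨n, hn0, hζn⟩, hzzv⟩ :=
    angle_data (v₂/v₁) (div_ne_zero hv₂0 hv₁0) qv hqv hvnt
  obtain ⟨ξ, hξ0, hξ1, ⟨m, hm0, hξm⟩, hzzw⟩ :=
    angle_data (w₂/w₁) (div_ne_zero hw₂0 hw₁0) qw hqw hwnt
  have hcv₁ : (starRingEnd ℂ) v₁ ≠ 0 := fun h => hv₁0 (by simpa using congrArg (starRingEnd ℂ) h)
  have hcv₂ : (starRingEnd ℂ) v₂ ≠ 0 := fun h => hv₂0 (by simpa using congrArg (starRingEnd ℂ) h)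
  have hcw₁ : (starRingEnd ℂ) w₁ ≠ 0 := fun h => hw₁0 (by simpa using congrArg (starRingEnd ℂ) h)
  have hcw₂ : (starRingEnd ℂ) w₂ ≠ 0 := fun h => hw₂0 (by simpa using congrArg (starRingEnd ℂ) h)
  have hEv0 : v₂ * (starRingEnd ℂ) v₁ = ζ * (v₁ * (starRingEnd ℂ) v₂) := by
    rw [map_div₀] at hzzv
    field_simp at hzzv
    linear_combination hzzv
  have hEw0 : w₂ * (starRingEnd ℂ) w₁ = ξ * (w₁ * (starRingEnd ℂ) w₂) := by
    rw [map_div₀] at hzzw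
    field_simp at hzzw
    linear_combination hzzw
  have hcconj : ∀ (a b : ℚ), (starRingEnd ℂ) ((a:ℂ) + (b:ℂ)*τ)
      = (a:ℂ) + (b:ℂ) * (starRingEnd ℂ) τ := by
    intro a b
    simp [map_add, map_mul]
  rw [← hva', ← hvb', hcconj, hcconj] at hEv0
  rw [← hwa', ← hwb', hcconj, hcconj] at hEw0
  have hEv : (starRingEnd ℂ) τ * (((a₂:ℂ)*(b₁:ℂ) - ζ*((a₁:ℂ)*(b₂:ℂ))) + ((1-ζ)*((b₁:ℂ)*(b₂:ℂ)))*τ) = -(((1-ζ)*((a₁:ℂ)*(a₂:ℂ))) + ((a₁:ℂ)*(b₂:ℂ) - ζ*((a₂:ℂ)*(b₁:ℂ)))*τ) := by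
    linear_combination hEv0
  have hEw : (starRingEnd ℂ) τ * (((a₂':ℂ)*(b₁':ℂ) - ξ*((a₁':ℂ)*(b₂':ℂ))) + ((1-ξ)*((b₁':ℂ)*(b₂':ℂ)))*τ) = -(((1-ξ)*((a₁':ℂ)*(a₂':ℂ))) + ((a₁':ℂ)*(b₂':ℂ) - ξ*((a₂':ℂ)*(b₁':ℂ)))*τ) := by
    linear_combination hEw0
  have hdetv : ((a₁:ℂ)*(b₂:ℂ) - (a₂:ℂ)*(b₁:ℂ)) ≠ 0 := by
    intro h
    have h3 : (ζ - 1) * (((a₁:ℂ) + (b₁:ℂ)*τ) * ((a₂:ℂ) + (b₂:ℂ)*(starRingEnd ℂ) τ)) = 0 := by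
      linear_combination (-1 : ℂ) * hEv0 + (τ - (starRingEnd ℂ) τ) * h
    rcases mul_eq_zero.mp h3 with h4 | h4
    · exact hζ1 (sub_eq_zero.mp h4)
    · rcases mul_eq_zero.mp h4 with h5 | h5
      · exact hv₁0 (by rw [← hva']; exact h5)
      · exact hcv₂ (by rw [← hvb', hcconj]; exact h5)
  have hdetw : ((a₁':ℂ)*(b₂':ℂ) - (a₂':ℂ)*(b₁':ℂ)) ≠ 0 := by
    intro h
    have h3 : (ξ - 1) * (((a₁':ℂ) + (b₁':ℂ)*τ) * ((a₂':ℂ) + (b₂':ℂ)*(starRingEnd ℂ) τ)) = 0 := by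
      linear_combination (-1 : ℂ) * hEw0 + (τ - (starRingEnd ℂ) τ) * h
    rcases mul_eq_zero.mp h3 with h4 | h4
    · exact hξ1 (sub_eq_zero.mp h4)
    · rcases mul_eq_zero.mp h4 with h5 | h5
      · exact hw₁0 (by rw [← hwa']; exact h5)
      · exact hcw₂ (by rw [← hwb', hcconj]; exact h5)
  -- the quadratic relation
  have heq : (((a₁:ℂ)*(b₂:ℂ) - ζ*((a₂:ℂ)*(b₁:ℂ)))*((1-ξ)*((b₁':ℂ)*(b₂':ℂ))) - ((a₁':ℂ)*(b₂':ℂ) - ξ*((a₂':ℂ)*(b₁':ℂ)))*((1-ζ)*((b₁:ℂ)*(b₂:ℂ))))*τ^2 + (((1-ζ)*((a₁:ℂ)*(a₂:ℂ)))*((1-ξ)*((b₁':ℂ)*(b₂':ℂ))) + ((a₁:ℂ)*(b₂:ℂ) - ζ*((a₂:ℂ)*(b₁:ℂ)))*((a₂':ℂ)*(b₁':ℂ) - ξ*((a₁':ℂ)*(b₂':ℂ))) - (((1-ξ)*((a₁':ℂ)*(a₂':ℂ)))*((1-ζ)*((b₁:ℂ)*(b₂:ℂ))) + ((a₁':ℂ)*(b₂':ℂ)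 - ξ*((a₂':ℂ)*(b₁':ℂ)))*((a₂:ℂ)*(b₁:ℂ) - ζ*((a₁:ℂ)*(b₂:ℂ)))))*τ + (((1-ζ)*((a₁:ℂ)*(a₂:ℂ)))*((a₂':ℂ)*(b₁':ℂ) - ξ*((a₁':ℂ)*(b₂':ℂ))) - ((1-ξ)*((a₁':ℂ)*(a₂':ℂ)))*((a₂:ℂ)*(b₁:ℂ) - ζ*((a₁:ℂ)*(b₂:ℂ)))) = 0 := by
    linear_combination (((a₂':ℂ)*(b₁':ℂ) - ξ*((a₁':ℂ)*(b₂':ℂ))) + ((1-ξ)*((b₁':ℂ)*(b₂':ℂ)))*τ) * hEv - (((a₂:ℂ)*(b₁:ℂ) - ζ*((a₁:ℂ)*(b₂:ℂ))) + ((1-ζ)*((b₁:ℂ)*(b₂:ℂ)))*τ) * hEw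
  -- algebraicity data
  have hζint : IsIntegral ℚ ζ := by
    refine ⟨Polynomial.X^n - Polynomial.C 1, Polynomial.monic_X_pow_sub_C 1 hn0.ne', ?_⟩
    simp [hζn]
  have hξint : IsIntegral ℚ ξ := by
    refine ⟨Polynomial.X^m - Polynomial.C 1, Polynomial.monic_X_pow_sub_C 1 hm0.ne', ?_⟩
    simp [hξm]
  have hζR : ζ ∈ Algebra.adjoin ℚ ({ζ, ξ} : Set ℂ) := Algebra.subset_adjoin (by simp)
  have hξR : ξ ∈ Algebra.adjoin ℚ ({ζ, ξ} : Set ℂ) := Algebra.subset_adjoin (by simp)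
  have hrR : ∀ r : ℚ, (r:ℂ) ∈ Algebra.adjoin ℚ ({ζ, ξ} : Set ℂ) := by
    intro r
    have := Subalgebra.algebraMap_mem (Algebra.adjoin ℚ ({ζ, ξ} : Set ℂ)) r
    rwa [eq_ratCast (algebraMap ℚ ℂ) r] at this
  have m1ζ : ((1:ℂ)-ζ) ∈ Algebra.adjoin ℚ ({ζ, ξ} : Set ℂ) :=
    sub_mem (one_mem _) hζR
  have m1ξ : ((1:ℂ)-ξ) ∈ Algebra.adjoin ℚ ({ζ, ξ} : Set ℂ) :=
    sub_mem (one_mem _) hξR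
  have mq0 : ((1-ζ)*((a₁:ℂ)*(a₂:ℂ))) ∈ Algebra.adjoin ℚ ({ζ, ξ} : Set ℂ) :=
    mul_mem m1ζ (mul_mem (hrR a₁) (hrR a₂))
  have mq1 : (((a₁:ℂ)*(b₂:ℂ) - ζ*((a₂:ℂ)*(b₁:ℂ)))) ∈ Algebra.adjoin ℚ ({ζ, ξ} : Set ℂ) :=
    sub_mem (mul_mem (hrR a₁) (hrR b₂)) (mul_mem hζR (mul_mem (hrR a₂) (hrR b₁)))
  have mp0 : (((a₂:ℂ)*(b₁:ℂ) - ζ*((a₁:ℂ)*(b₂:ℂ)))) ∈ Algebra.adjoin ℚ ({ζ, ξ} : Set ℂ) :=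
    sub_mem (mul_mem (hrR a₂) (hrR b₁)) (mul_mem hζR (mul_mem (hrR a₁) (hrR b₂)))
  have mp1 : ((1-ζ)*((b₁:ℂ)*(b₂:ℂ))) ∈ Algebra.adjoin ℚ ({ζ, ξ} : Set ℂ) :=
    mul_mem m1ζ (mul_mem (hrR b₁) (hrR b₂))
  have mQ0 : ((1-ξ)*((a₁':ℂ)*(a₂':ℂ))) ∈ Algebra.adjoin ℚ ({ζ, ξ} : Set ℂ) :=
    mul_mem m1ξ (mul_mem (hrR a₁') (hrR a₂'))
  have mQ1 : (((a₁':ℂ)*(b₂':ℂ) - ξ*((a₂':ℂ)*(b₁':ℂ)))) ∈ Algebra.adjoin ℚ ({ζ, ξ} : Set ℂ) :=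
    sub_mem (mul_mem (hrR a₁') (hrR b₂')) (mul_mem hξR (mul_mem (hrR a₂') (hrR b₁')))
  have mP0 : (((a₂':ℂ)*(b₁':ℂ) - ξ*((a₁':ℂ)*(b₂':ℂ)))) ∈ Algebra.adjoin ℚ ({ζ, ξ} : Set ℂ) :=
    sub_mem (mul_mem (hrR a₂') (hrR b₁')) (mul_mem hξR (mul_mem (hrR a₁') (hrR b₂')))
  have mP1 : ((1-ξ)*((b₁':ℂ)*(b₂':ℂ))) ∈ Algebra.adjoin ℚ ({ζ, ξ} : Set ℂ) :=
    mul_mem m1ξ (mul_mem (hrR b₁') (hrR b₂'))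
  obtain ⟨hz2, hz1, hz0⟩ := transcendental_quad τ htr ζ ξ hζint hξint _ _ _
    (sub_mem (mul_mem mq1 mP1) (mul_mem mQ1 mp1))
    (sub_mem (add_mem (mul_mem mq0 mP1) (mul_mem mq1 mP0))
      (add_mem (mul_mem mQ0 mp1) (mul_mem mQ1 mp0)))
    (sub_mem (mul_mem mq0 mP0) (mul_mem mQ0 mp0)) heq
  -- proportionality
  have h0 : ((1-ζ)*((a₁:ℂ)*(a₂:ℂ)))*(((a₂':ℂ)*(b₁':ℂ) - ξ*((a₁':ℂ)*(b₂':ℂ)))) = ((1-ξ)*((a₁':ℂ)*(a₂':ℂ)))*(((a₂:ℂ)*(b₁:ℂ) - ζ*((a₁:ℂ)*(b₂:ℂ)))) := by linear_combination hz0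
  have h1 : ((1-ζ)*((a₁:ℂ)*(a₂:ℂ)))*((1-ξ)*((b₁':ℂ)*(b₂':ℂ))) + (((a₁:ℂ)*(b₂:ℂ) - ζ*((a₂:ℂ)*(b₁:ℂ))))*(((a₂':ℂ)*(b₁':ℂ) - ξ*((a₁':ℂ)*(b₂':ℂ)))) = ((1-ξ)*((a₁':ℂ)*(a₂':ℂ)))*((1-ζ)*((b₁:ℂ)*(b₂:ℂ))) + (((a₁':ℂ)*(b₂':ℂ) - ξ*((a₂':ℂ)*(b₁':ℂ))))*(((a₂:ℂ)*(b₁:ℂ) - ζ*((a₁:ℂ)*(b₂:ℂ)))) := by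
    linear_combination hz1
  have h2 : (((a₁:ℂ)*(b₂:ℂ) - ζ*((a₂:ℂ)*(b₁:ℂ))))*((1-ξ)*((b₁':ℂ)*(b₂':ℂ))) = (((a₁':ℂ)*(b₂':ℂ) - ξ*((a₂':ℂ)*(b₁':ℂ))))*((1-ζ)*((b₁:ℂ)*(b₂:ℂ))) := by linear_combination hz2
  have hd : ((1-ζ)*((a₁:ℂ)*(a₂:ℂ)))*((1-ζ)*((b₁:ℂ)*(b₂:ℂ))) - (((a₁:ℂ)*(b₂:ℂ) - ζ*((a₂:ℂ)*(b₁:ℂ))))*(((a₂:ℂ)*(b₁:ℂ) - ζ*((a₁:ℂ)*(b₂:ℂ)))) ≠ 0 := by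
    have : ((1-ζ)*((a₁:ℂ)*(a₂:ℂ)))*((1-ζ)*((b₁:ℂ)*(b₂:ℂ))) - (((a₁:ℂ)*(b₂:ℂ) - ζ*((a₂:ℂ)*(b₁:ℂ))))*(((a₂:ℂ)*(b₁:ℂ) - ζ*((a₁:ℂ)*(b₂:ℂ)))) = ζ * ((a₁:ℂ)*(b₂:ℂ) - (a₂:ℂ)*(b₁:ℂ))^2 := by ring
    rw [this]
    exact mul_ne_zero hζ0 (pow_ne_zero 2 hdetv)
  have hd' : ((1-ξ)*((a₁':ℂ)*(a₂':ℂ)))*((1-ξ)*((b₁':ℂ)*(b₂':ℂ))) - (((a₁':ℂ)*(b₂':ℂ) - ξ*((a₂':ℂ)*(b₁':ℂ))))*(((a₂':ℂ)*(b₁':ℂ) - ξ*((a₁':ℂ)*(b₂':ℂ)))) ≠ 0 := by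
    have : ((1-ξ)*((a₁':ℂ)*(a₂':ℂ)))*((1-ξ)*((b₁':ℂ)*(b₂':ℂ))) - (((a₁':ℂ)*(b₂':ℂ) - ξ*((a₂':ℂ)*(b₁':ℂ))))*(((a₂':ℂ)*(b₁':ℂ) - ξ*((a₁':ℂ)*(b₂':ℂ)))) = ξ * ((a₁':ℂ)*(b₂':ℂ) - (a₂':ℂ)*(b₁':ℂ))^2 := by ring
    rw [this]
    exact mul_ne_zero hξ0 (pow_ne_zero 2 hdetw)
  obtain ⟨α, hα0, hαA, hαB, hαD⟩ := prop_case _ _ _ _ _ _ _ _ h0 h1 h2 hd hd'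
  have hA : ((1:ℂ)-ξ)*((a₁':ℂ)*(a₂':ℂ)) = (α*((1:ℂ)-ζ))*((a₁:ℂ)*(a₂:ℂ)) := by
    linear_combination hαA
  have hB : ((1:ℂ)-ξ)*((b₁':ℂ)*(b₂':ℂ)) = (α*((1:ℂ)-ζ))*((b₁:ℂ)*(b₂:ℂ)) := by
    linear_combination hαB
  have hD : ((1:ℂ)-ξ)*((a₁':ℂ)*(b₂':ℂ) + (a₂':ℂ)*(b₁':ℂ))
      = (α*((1:ℂ)-ζ))*((a₁:ℂ)*(b₂:ℂ) + (a₂:ℂ)*(b₁:ℂ)) := by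
    linear_combination hαD
  have hu : ((1:ℂ)-ξ) ≠ 0 := sub_ne_zero.mpr (Ne.symm hξ1)
  have hs : (α*((1:ℂ)-ζ)) ≠ 0 := mul_ne_zero hα0 (sub_ne_zero.mpr (Ne.symm hζ1))
  rcases factor_case (a₁:ℂ) (b₁:ℂ) (a₂:ℂ) (b₂:ℂ) (a₁':ℂ) (b₁':ℂ) (a₂':ℂ) (b₂':ℂ)
      _ _ hu hs hA hB hD with ⟨e1, e2⟩ | ⟨e1, e2⟩
  · left
    constructor
    · rw [← hva', ← hwa']
      exact line_eq τ a₁ b₁ a₁' b₁' (by rw [hva']; exact hv₁0) (by rw [hwa']; exact hw₁0)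
        (by exact_mod_cast e1)
    · rw [← hvb', ← hwb']
      exact line_eq τ a₂ b₂ a₂' b₂' (by rw [hvb']; exact hv₂0) (by rw [hwb']; exact hw₂0)
        (by exact_mod_cast e2)
  · right
    constructor
    · rw [← hva', ← hwb']
      exact line_eq τ a₁ b₁ a₂' b₂' (by rw [hva']; exact hv₁0) (by rw [hwb']; exact hw₂0)
        (by exact_mod_cast e1)
    · rw [← hvb', ← hwa']
      exact line_eq τ a₂ b₂ a₁' b₁' (by rw [hvb']; exact hv₂0) (by rw [hwa']; exact hw₁0)
        (by exact_mod_cast e2)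

/-- Let `V = ℚ·1 + ℚ·τ` with `τ ∉ ℝ` transcendental over `ℚ`.  Then, up to
equivalence, `V` contains at most one rational angle: if `v₁, v₂, w₁, w₂ ∈ V \ {0}`
determine two rational angles (arguments of `v₂/v₁` and `w₂/w₁` rational multiples
of `π` but not integer multiples of `π`), then the unordered pairs of lines
`{ℝv₁, ℝv₂}` and `{ℝw₁, ℝw₂}` coincide. -/
theorem at_most_one_rational_angle_in_transcendental_space
    (τ : ℂ) (hτ : ∀ r : ℝ, τ ≠ (r : ℂ)) (htr : Transcendental ℚ τ)
    (v₁ v₂ w₁ w₂ : ℂ)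
    (hv₁ : v₁ ∈ Submodule.span ℚ ({1, τ} : Set ℂ)) (hv₁0 : v₁ ≠ 0)
    (hv₂ : v₂ ∈ Submodule.span ℚ ({1, τ} : Set ℂ)) (hv₂0 : v₂ ≠ 0)
    (hw₁ : w₁ ∈ Submodule.span ℚ ({1, τ} : Set ℂ)) (hw₁0 : w₁ ≠ 0)
    (hw₂ : w₂ ∈ Submodule.span ℚ ({1, τ} : Set ℂ)) (hw₂0 : w₂ ≠ 0)
    (hv : ∃ q : ℚ, Complex.arg (v₂ / v₁) = (q : ℝ) * Real.pi)
    (hvnt : ∀ k : ℤ, Complex.arg (v₂ / v₁) ≠ (k : ℝ) * Real.pi)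
    (hw : ∃ q : ℚ, Complex.arg (w₂ / w₁) = (q : ℝ) * Real.pi)
    (hwnt : ∀ k : ℤ, Complex.arg (w₂ / w₁) ≠ (k : ℝ) * Real.pi) :
    (Submodule.span ℝ ({v₁} : Set ℂ) = Submodule.span ℝ ({w₁} : Set ℂ) ∧
      Submodule.span ℝ ({v₂} : Set ℂ) = Submodule.span ℝ ({w₂} : Set ℂ)) ∨
    (Submodule.span ℝ ({v₁} : Set ℂ) = Submodule.span ℝ ({w₂} : Set ℂ) ∧
      Submodule.span ℝ ({v₂} : Set ℂ) = Submodule.span ℝ ({w₁} : Set ℂ)) := by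
  exact main_core τ htr v₁ v₂ w₁ w₂ hv₁ hv₁0 hv₂ hv₂0 hw₁ hw₁0 hw₂ hw₂0 hv hvnt hw hwnt
end

section
/- Let τ ∈ C \ R with |τ| = 1 and suppose τ is not a root of unity. Then in the space V = Q·1 + Q·τ there is no rational triple containing 1 and a vector perpendicular to 1; equivalently, if a purely imaginary nonzero w ∈ V and some v ∈ V \ (R ∪ Rw) satisfy that both arg(v) and arg(v/w) are rational multiples of π, then V is homothetic to Q + Qζ for some root of unity ζ. -/
open Complex in
/-- Niven-type lemma: if `cos (q*π)` is rational, then twice it is an integer. -/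
lemma aux_two_cos_rat_pi_int (q r : ℚ) (h : Real.cos ((q:ℝ) * Real.pi) = (r:ℝ)) :
    ∃ n : ℤ, (n : ℚ) = 2 * r := by
  set θ : ℝ := (q:ℝ) * Real.pi with hθ
  set ζ : ℂ := Complex.exp (θ * Complex.I) with hζdef
  have hd : (q.den : ℚ) ≠ 0 := by exact_mod_cast q.den_ne_zero
  have hqd : ((q * q.den : ℚ) : ℝ) = ((q.num : ℤ) : ℝ) := by
    rw [Rat.mul_den_eq_num]; norm_num
  have hζ : ζ ^ (2 * q.den) = 1 := by
    rw [hζdef, ← Complex.exp_nat_mul]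
    rw [show ((2 * q.den : ℕ) : ℂ) * (θ * Complex.I) = (q.num : ℂ) * (2 * Real.pi * Complex.I) by
      push_cast [hθ]
      have : ((q:ℝ) * q.den : ℝ) = (q.num : ℝ) := by exact_mod_cast hqd
      have : ((q:ℂ) * q.den : ℂ) = (q.num : ℂ) := by exact_mod_cast this
      linear_combination 2 * Complex.I * Real.pi * this]
    exact Complex.exp_int_mul_two_pi_mul_I q.num
  have hne : 2 * q.den ≠ 0 := by positivity
  have hζint : IsIntegral ℤ ζ := by
    refine ⟨Polynomial.X ^ (2 * q.den) - 1, Polynomial.monic_X_pow_sub_C 1 hne, ?_⟩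
    simp [Polynomial.eval₂_sub, hζ]
  have hinv : Complex.exp (-(θ * Complex.I)) = ζ ^ (2 * q.den - 1) := by
    have h1 : ζ * ζ ^ (2 * q.den - 1) = 1 := by
      rw [← pow_succ']
      rw [show 2 * q.den - 1 + 1 = 2 * q.den from Nat.succ_pred_eq_of_pos (by positivity)]
      exact hζ
    rw [Complex.exp_neg, ← hζdef]
    exact inv_eq_of_mul_eq_one_right h1
  have hsum : ((2 * r : ℚ) : ℂ) = ζ + ζ ^ (2 * q.den - 1) := by
    rw [← hinv]
    have : ((2 * r : ℚ) : ℂ) = 2 * Complex.cos θ := by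
      rw [← Complex.ofReal_cos, h]
      push_cast; ring
    rw [this, Complex.cos]
    rw [hζdef]; ring
  have hint : IsIntegral ℤ ((2 * r : ℚ) : ℂ) := by
    rw [hsum]; exact hζint.add (hζint.pow _)
  have hint2 : IsIntegral ℤ (2 * r : ℚ) := by
    apply IsIntegral.tower_bot (B := ℂ) (algebraMap ℚ ℂ).injective
    rwa [show algebraMap ℚ ℂ (2 * r) = ((2*r : ℚ) : ℂ) from by norm_num]
  obtain ⟨n, hn⟩ := IsIntegrallyClosed.isIntegral_iff.mp hint2
  exact ⟨n, by simpa using hn⟩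

lemma aux_sqrt (x : ℝ) (u : ℚ) (m : ℕ) (hu : u ≠ 0)
    (hx : x ^ 2 = (((m : ℚ) * u ^ 2 : ℚ) : ℝ)) :
    ∃ s : ℚ, s ≠ 0 ∧ x = (s : ℝ) * Real.sqrt m := by
  have hm : Real.sqrt m ^ 2 = (m : ℝ) := Real.sq_sqrt (Nat.cast_nonneg m)
  have h0 : (x - (u:ℝ) * Real.sqrt m) * (x + (u:ℝ) * Real.sqrt m) = 0 := by
    push_cast at hx
    linear_combination hx - (u:ℝ)^2 * hm
  rcases mul_eq_zero.mp h0 with h | h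
  · exact ⟨u, hu, by linarith⟩
  · exact ⟨-u, neg_ne_zero.mpr hu, by push_cast; linarith⟩


lemma aux_endgame (τ : ℂ) (p : ℚ) (hp : τ.re = (p : ℝ)) (m : ℕ) (s : ℚ)
    (hm : m = 1 ∨ m = 3) (hs : s ≠ 0) (him : τ.im = (s : ℝ) * Real.sqrt m) :
    ∃ (ζ l : ℂ), (∃ n : ℕ, 0 < n ∧ ζ ^ n = 1) ∧ l ≠ 0 ∧
      (fun z : ℂ => l * z) '' (Submodule.span ℚ ({1, τ} : Set ℂ) : Set ℂ) =
        (Submodule.span ℚ ({1, ζ} : Set ℂ) : Set ℂ) := by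
  have hid : (fun z : ℂ => (1:ℂ) * z) = id := funext fun z => one_mul z
  rcases hm with rfl | rfl
  · -- m = 1, ζ = I
    have hτeq : τ = (p : ℂ) + (s : ℂ) * Complex.I := by
      apply Complex.ext <;> simp [hp, him]
    refine ⟨Complex.I, 1, ⟨4, by norm_num, Complex.I_pow_four⟩, one_ne_zero, ?_⟩
    have hsp : Submodule.span ℚ ({1, τ} : Set ℂ) =
        Submodule.span ℚ ({1, Complex.I} : Set ℂ) := by
      apply Submodule.span_eq_span
      · rw [Set.insert_subset_iff, Set.singleton_subset_iff]
        refine ⟨Submodule.subset_span (Set.mem_insert _ _), ?_⟩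
        rw [SetLike.mem_coe, Submodule.mem_span_pair]
        refine ⟨p, s, ?_⟩
        rw [Rat.smul_def, Rat.smul_def, mul_one, hτeq]
      · rw [Set.insert_subset_iff, Set.singleton_subset_iff]
        refine ⟨Submodule.subset_span (Set.mem_insert _ _), ?_⟩
        rw [SetLike.mem_coe, Submodule.mem_span_pair]
        refine ⟨-p / s, 1 / s, ?_⟩
        rw [Rat.smul_def, Rat.smul_def, mul_one, hτeq]
        have hs' : (s : ℂ) ≠ 0 := by exact_mod_cast hs
        push_cast
        field_simp
        ring
    rw [hid, Set.image_id, hsp]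
  · -- m = 3, ζ = (1 + √3 i)/2
    set s3 : ℝ := Real.sqrt 3 with hs3def
    have hs3 : ((s3 : ℝ) : ℂ) ^ 2 = 3 := by
      have : s3 ^ 2 = 3 := Real.sq_sqrt (by norm_num)
      calc ((s3:ℝ):ℂ)^2 = ((s3^2 : ℝ) : ℂ) := by push_cast; ring
      _ = 3 := by rw [this]; norm_num
    set ζ : ℂ := (1 + (s3 : ℂ) * Complex.I) / 2 with hζdef
    have hx : ((s3 : ℂ) * Complex.I) ^ 2 = -3 := by
      rw [mul_pow, hs3, Complex.I_sq]; ring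
    have hζ3 : ζ ^ 3 = -1 := by
      rw [hζdef]
      linear_combination ((s3:ℂ) * Complex.I + 3) / 8 * hx
    have hζ6 : ζ ^ 6 = 1 := by
      rw [show (6:ℕ) = 3 * 2 from rfl, pow_mul, hζ3]
      ring
    have hτeq : τ = (p : ℂ) + (s : ℂ) * ((s3 : ℂ) * Complex.I) := by
      apply Complex.ext <;> simp [hp, him, hs3def]
    refine ⟨ζ, 1, ⟨6, by norm_num, hζ6⟩, one_ne_zero, ?_⟩
    have hsp : Submodule.span ℚ ({1, τ} : Set ℂ) =
        Submodule.span ℚ ({1, ζ} : Set ℂ) := by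
      apply Submodule.span_eq_span
      · rw [Set.insert_subset_iff, Set.singleton_subset_iff]
        refine ⟨Submodule.subset_span (Set.mem_insert _ _), ?_⟩
        rw [SetLike.mem_coe, Submodule.mem_span_pair]
        refine ⟨p - s, 2 * s, ?_⟩
        rw [Rat.smul_def, Rat.smul_def, mul_one, hτeq, hζdef]
        push_cast
        ring
      · rw [Set.insert_subset_iff, Set.singleton_subset_iff]
        refine ⟨Submodule.subset_span (Set.mem_insert _ _), ?_⟩
        rw [SetLike.mem_coe, Submodule.mem_span_pair]
        refine ⟨1/2 - p / (2 * s), 1 / (2 * s), ?_⟩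
        rw [Rat.smul_def, Rat.smul_def, mul_one, hτeq, hζdef]
        have hs' : (s : ℂ) ≠ 0 := by exact_mod_cast hs
        push_cast
        field_simp
        ring
    rw [hid, Set.image_id, hsp]

/-- Let `τ ∈ ℂ \ ℝ` with `|τ| = 1` and `τ` not a root of unity, and let
`V = ℚ·1 + ℚ·τ`.  If a purely imaginary nonzero `w ∈ V` and some
`v ∈ V \ (ℝ ∪ ℝw)` satisfy that both `arg v` and `arg (v/w)` are rational
multiples of `π`, then `V` is homothetic to `ℚ·1 + ℚ·ζ` for some root of
unity `ζ`. -/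
theorem rational_triple_with_perpendicular_implies_superrectangular
    (τ : ℂ) (hτ : ∀ r : ℝ, τ ≠ (r : ℂ)) (habs : ‖τ‖ = 1)
    (hnru : ∀ n : ℕ, 0 < n → τ ^ n ≠ 1)
    (w v : ℂ)
    (hw : w ∈ Submodule.span ℚ ({1, τ} : Set ℂ)) (hw0 : w ≠ 0) (hwim : w.re = 0)
    (hv : v ∈ Submodule.span ℚ ({1, τ} : Set ℂ))
    (hvR : ∀ r : ℝ, v ≠ (r : ℂ)) (hvw : ∀ r : ℝ, v ≠ (r : ℂ) * w)
    (harg1 : ∃ q : ℚ, Complex.arg v = (q : ℝ) * Real.pi)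
    (harg2 : ∃ q : ℚ, Complex.arg (v / w) = (q : ℝ) * Real.pi) :
    ∃ (ζ l : ℂ), (∃ n : ℕ, 0 < n ∧ ζ ^ n = 1) ∧ l ≠ 0 ∧
      (fun z : ℂ => l * z) '' (Submodule.span ℚ ({1, τ} : Set ℂ) : Set ℂ) =
        (Submodule.span ℚ ({1, ζ} : Set ℂ) : Set ℂ) := by
  have hτim : τ.im ≠ 0 := by
    intro h
    exact hτ τ.re (by apply Complex.ext <;> simp [h])
  rw [Submodule.mem_span_pair] at hw hv
  obtain ⟨a, b, hab⟩ := hw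
  obtain ⟨c, d, hcd⟩ := hv
  rw [Rat.smul_def, Rat.smul_def, mul_one] at hab hcd
  have hb : b ≠ 0 := by
    rintro rfl
    rw [show ((0:ℚ):ℂ) * τ = 0 from by push_cast; ring, add_zero] at hab
    apply hw0
    rw [← hab]
    have h0 : ((a:ℚ):ℂ).re = 0 := by rw [hab]; exact hwim
    simp at h0
    simp [h0]
  have hwre := congrArg Complex.re hab
  simp [Complex.add_re, Complex.mul_re] at hwre
  rw [hwim] at hwre
  obtain ⟨p, hp⟩ : ∃ p : ℚ, τ.re = ((p : ℚ) : ℝ) := by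
    refine ⟨-a / b, ?_⟩
    have hb' : (b:ℝ) ≠ 0 := by exact_mod_cast hb
    push_cast
    field_simp
    linarith
  have hd : d ≠ 0 := by
    rintro rfl
    rw [show ((0:ℚ):ℂ) * τ = 0 from by push_cast; ring, add_zero] at hcd
    exact hvR ((c:ℚ):ℝ) (by rw [← hcd]; push_cast; ring)
  obtain ⟨c', hvre⟩ : ∃ c' : ℚ, v.re = ((c' : ℚ) : ℝ) := by
    refine ⟨c + d * p, ?_⟩
    have h1 := congrArg Complex.re hcd
    simp [Complex.add_re, Complex.mul_re] at h1
    rw [← h1, hp]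
    push_cast
    ring
  have hvim : v.im = (d : ℝ) * τ.im := by
    have h1 := congrArg Complex.im hcd
    simp [Complex.add_im, Complex.mul_im] at h1
    rw [← h1]
  have hvim0 : v.im ≠ 0 := by
    rw [hvim]
    exact mul_ne_zero (by exact_mod_cast hd) hτim
  have hv0 : v ≠ 0 := fun h => hvim0 (by rw [h]; simp)
  have hwim0 : w.im ≠ 0 := by
    intro h
    exact hw0 (by apply Complex.ext <;> simp [hwim, h])
  have hvre0 : v.re ≠ 0 := by
    intro h
    apply hvw (v.im / w.im)
    apply Complex.ext
    · simp [Complex.mul_re, hwim, h]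
    · simp [Complex.mul_im, hwim]
      field_simp
  have hc' : c' ≠ 0 := by
    rw [hvre] at hvre0
    exact_mod_cast hvre0
  have hsq : τ.re ^ 2 + τ.im ^ 2 = 1 := by
    have h1 := Complex.sq_norm τ
    rw [habs, Complex.normSq_apply] at h1
    nlinarith
  have him2 : τ.im ^ 2 = 1 - ((p:ℚ) : ℝ) ^ 2 := by rw [← hp]; linarith
  obtain ⟨q, hq⟩ := harg1
  obtain ⟨T, hTdef⟩ : ∃ T : ℚ, T = d ^ 2 * (1 - p ^ 2) / c' ^ 2 := ⟨_, rfl⟩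
  have hT : Real.tan (Complex.arg v) ^ 2 = (T : ℝ) := by
    rw [Complex.tan_arg, hvim, hvre, div_pow, mul_pow, him2, hTdef]
    push_cast
    ring
  have hTnn : 0 ≤ T := by
    have h1 : (0:ℝ) ≤ (T:ℝ) := hT ▸ sq_nonneg _
    exact_mod_cast h1
  have h1T : (0:ℚ) < 1 + T := by linarith
  have h1T' : ((1 + T : ℚ):ℝ) ≠ 0 := by positivity
  have hcosθ : Real.cos (Complex.arg v) ≠ 0 := by
    rw [Complex.cos_arg hv0, hvre]
    have habs0 : ‖v‖ ≠ 0 := by simpa using hv0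
    exact div_ne_zero (by exact_mod_cast hc') habs0
  have hcos2 : Real.cos (2 * Complex.arg v) = (((1 - T) / (1 + T) : ℚ) : ℝ) := by
    have hid := Real.sin_sq_add_cos_sq (Complex.arg v)
    have step : Real.cos (2 * Complex.arg v)
        = (1 - Real.tan (Complex.arg v) ^ 2) / (1 + Real.tan (Complex.arg v) ^ 2) := by
      rw [Real.cos_two_mul, Real.tan_eq_sin_div_cos]
      have h2 : 1 + (Real.sin (Complex.arg v) / Real.cos (Complex.arg v)) ^ 2 ≠ 0 := by
        positivity
      field_simp
      nlinarith [hid]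
    rw [step, hT]
    push_cast
    ring
  obtain ⟨n, hn⟩ := aux_two_cos_rat_pi_int (2 * q) ((1 - T) / (1 + T))
    (by rw [← hcos2, hq]; push_cast; ring_nf)
  have h2r : ((n:ℤ):ℝ) = 2 * Real.cos (2 * Complex.arg v) := by
    rw [hcos2]
    exact_mod_cast hn
  have hcb := Real.abs_cos_le_one (2 * Complex.arg v)
  rw [abs_le] at hcb
  have hn2 : n ≤ 2 := by
    have : ((n:ℤ):ℝ) ≤ 2 := by linarith
    exact_mod_cast this
  have hn1 : -2 ≤ n := by
    have : (-2:ℝ) ≤ ((n:ℤ):ℝ) := by linarith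
    exact_mod_cast this
  have hTc : d ^ 2 * (1 - p ^ 2) = T * c' ^ 2 := by
    rw [hTdef]
    field_simp
  have h1T0 : (1 + T : ℚ) ≠ 0 := ne_of_gt h1T
  -- helper to finish given the value of m and u
  have finish : ∀ (m : ℕ) (u : ℚ), u ≠ 0 → (m = 1 ∨ m = 3) → (1 - p^2 : ℚ) = m * u ^ 2 →
      ∃ (ζ l : ℂ), (∃ n : ℕ, 0 < n ∧ ζ ^ n = 1) ∧ l ≠ 0 ∧
      (fun z : ℂ => l * z) '' (Submodule.span ℚ ({1, τ} : Set ℂ) : Set ℂ) =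
        (Submodule.span ℚ ({1, ζ} : Set ℂ) : Set ℂ) := by
    intro m u hu hm hval
    obtain ⟨s, hs, him⟩ := aux_sqrt τ.im u m hu (by
      rw [him2]
      have : ((1 - p^2 : ℚ) : ℝ) = (((m:ℚ) * u^2 : ℚ) : ℝ) := by exact_mod_cast hval
      push_cast at this ⊢
      linarith)
    exact aux_endgame τ p hp m s hm hs him
  interval_cases n
  · -- n = -2 : impossible
    exfalso
    field_simp [h1T0] at hn
    push_cast at hn
    linarith
  · -- n = -1 : T = 3
    have hTval : T = 3 := by field_simp [h1T0] at hn; push_cast at hn; linarith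
    rw [hTval] at hTc
    refine finish 3 (c' / d) (div_ne_zero hc' hd) (Or.inr rfl) ?_
    field_simp
    linear_combination hTc
  · -- n = 0 : T = 1
    have hTval : T = 1 := by field_simp [h1T0] at hn; push_cast at hn; linarith
    rw [hTval] at hTc
    refine finish 1 (c' / d) (div_ne_zero hc' hd) (Or.inl rfl) ?_
    field_simp
    linear_combination hTc
  · -- n = 1 : T = 1/3
    have hTval : T = 1/3 := by field_simp [h1T0] at hn; push_cast at hn; linarith
    rw [hTval] at hTc
    refine finish 3 (c' / (3 * d)) (div_ne_zero hc' (by simpa using hd)) (Or.inr rfl) ?_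
    field_simp
    linear_combination 9 * hTc
  · -- n = 2 : T = 0, contradiction
    exfalso
    have hTval : T = 0 := by field_simp [h1T0] at hn; push_cast at hn; linarith
    rw [hTval, zero_mul] at hTc
    have hz : (1 - p^2 : ℚ) = 0 := by
      have hd2 : (d:ℚ)^2 ≠ 0 := pow_ne_zero _ hd
      exact (mul_eq_zero.mp hTc).resolve_left hd2
    apply hτim
    have hz2 : τ.im ^ 2 = 0 := by
      rw [him2]
      exact_mod_cast congrArg (fun x : ℚ => (x:ℝ)) hz
    exact pow_eq_zero_iff (by norm_num) |>.mp hz2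
end
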